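/- arXiv:1702.05303 — 13 statements merged into one kernel-verified Lean document; each statement's English description precedes it below -/
import Mathlib

section
/- For any three vertices x, y, z in a tree T such that xz and yz are edges of T, we have 2·ww_T(z) < ww_T(x) + ww_T(y), where ww_T(v) = Σ_{u∈V(T)} (d(u,v)² + d(u,v)). -/
open Finset
open scoped Classical

/-- Local hyper-Wiener function: `ww G v = Σ_u (d(u,v)² + d(u,v))`. -/
noncomputable def ww {V : Type*} [Fintype V] (G : SimpleGraph V) (v : V) : ℕ :=
  ∑ u : V, ((G.dist u v) ^ 2 + G.dist u v)

namespace TreeAux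

open SimpleGraph

variable {V : Type*} {T : SimpleGraph V}

/-- In a tree, a vertex adjacent to `b` has distance to `u` different from that of `b`. -/
lemma dist_ne (hT : T.IsTree) {a b : V} (hab : T.Adj a b) (u : V) :
    T.dist u a ≠ T.dist u b := by
  intro h
  obtain ⟨p, hp, hpl⟩ := (hT.isConnected u a).exists_path_of_dist
  obtain ⟨q, hq, hql⟩ := (hT.isConnected u b).exists_path_of_dist
  have hba : T.dist b a = 1 := dist_eq_one_iff_adj.mpr hab.symm
  -- b is not on p
  have hbp : b ∉ p.support := by
    intro hb
    have hsplit := congrArg Walk.length (p.take_spec hb)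
    rw [Walk.length_append] at hsplit
    have h1 : T.dist u b ≤ (p.takeUntil b hb).length := dist_le _
    have h2 : T.dist b a ≤ (p.dropUntil b hb).length := dist_le _
    omega
  -- p.concat is a path from u to b of length dist u a + 1
  have hpath : (p.concat hab).IsPath := by
    rw [← Walk.isPath_reverse_iff, Walk.reverse_concat]
    rw [Walk.cons_isPath_iff]
    refine ⟨hp.reverse, ?_⟩
    rwa [Walk.support_reverse, List.mem_reverse]
  have huniq := hT.IsAcyclic.path_unique ⟨p.concat hab, hpath⟩ ⟨q, hq⟩
  have : (p.concat hab).length = q.length := by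
    rw [Subtype.ext_iff] at huniq
    simp only at huniq
    rw [huniq]
  rw [Walk.length_concat] at this
  omega

/-- In a tree, two neighbors of `z` that are both strictly closer to `u` coincide. -/
lemma down_unique (hT : T.IsTree) {x y z u : V} (hxz : T.Adj x z) (hyz : T.Adj y z)
    (hx : T.dist u x + 1 = T.dist u z) (hy : T.dist u y + 1 = T.dist u z) : x = y := by
  obtain ⟨p, hp, hpl⟩ := (hT.isConnected u x).exists_path_of_dist
  obtain ⟨q, hq, hql⟩ := (hT.isConnected u y).exists_path_of_dist
  have hpz : (p.concat hxz).length = T.dist u z := by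
    rw [Walk.length_concat]; omega
  have hqz : (q.concat hyz).length = T.dist u z := by
    rw [Walk.length_concat]; omega
  have hppath := (p.concat hxz).isPath_of_length_eq_dist hpz
  have hqpath := (q.concat hyz).isPath_of_length_eq_dist hqz
  have huniq := hT.IsAcyclic.path_unique ⟨p.concat hxz, hppath⟩ ⟨q.concat hyz, hqpath⟩
  rw [Subtype.ext_iff] at huniq
  simp only at huniq
  obtain ⟨hv, -⟩ := Walk.concat_inj huniq
  exact hv

/-- In a tree, distances to adjacent vertices differ by exactly one. -/
lemma dist_step (hT : T.IsTree) {a b : V} (hab : T.Adj a b) (u : V) :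
    T.dist u a = T.dist u b + 1 ∨ T.dist u a + 1 = T.dist u b := by
  have h1 : T.dist u a ≤ T.dist u b + T.dist b a := hT.isConnected.dist_triangle
  have h2 : T.dist u b ≤ T.dist u a + T.dist a b := hT.isConnected.dist_triangle
  have hba : T.dist b a = 1 := dist_eq_one_iff_adj.mpr hab.symm
  have hab' : T.dist a b = 1 := dist_eq_one_iff_adj.mpr hab
  have hne := dist_ne hT hab u
  omega

end TreeAux

theorem stmt0 {V : Type*} [Fintype V] (T : SimpleGraph V) (hT : T.IsTree)
    (x y z : V) (hxy : x ≠ y) (hxz : T.Adj x z) (hyz : T.Adj y z) :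
    2 * ww T z < ww T x + ww T y := by
  classical
  have key : ∀ u : V,
      2 * ((T.dist u z) ^ 2 + T.dist u z)
        < ((T.dist u x) ^ 2 + T.dist u x) + ((T.dist u y) ^ 2 + T.dist u y) := by
    intro u
    rcases TreeAux.dist_step hT hxz u with hx | hx
    · rcases TreeAux.dist_step hT hyz u with hy | hy
      · -- both up
        rw [hx, hy]; nlinarith [sq_nonneg (T.dist u z)]
      · -- x up, y down
        rw [hx]
        have hy' : T.dist u z = T.dist u y + 1 := hy.symm
        rw [hy']
        nlinarith [sq_nonneg (T.dist u y)]
    · rcases TreeAux.dist_step hT hyz u with hy | hy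
      · -- x down, y up
        rw [hy]
        have hx' : T.dist u z = T.dist u x + 1 := hx.symm
        rw [hx']
        nlinarith [sq_nonneg (T.dist u x)]
      · -- both down: impossible
        exact absurd (TreeAux.down_unique hT hxz hyz hx hy) hxy
  have hne : (Finset.univ : Finset V).Nonempty := ⟨z, Finset.mem_univ z⟩
  calc 2 * ww T z = ∑ u : V, 2 * ((T.dist u z) ^ 2 + T.dist u z) := by
        rw [ww, Finset.mul_sum]
    _ < ∑ u : V, (((T.dist u x) ^ 2 + T.dist u x) + ((T.dist u y) ^ 2 + T.dist u y)) :=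
        Finset.sum_lt_sum_of_nonempty hne fun u _ => key u
    _ = ww T x + ww T y := by rw [ww, ww, Finset.sum_add_distrib]
end

section
/- On any path in a tree T, the set of vertices of the path attaining the minimum value of ww_T among vertices of that path consists of at most two vertices, and if there are two, they are adjacent. -/
open Finset
open scoped Classical

namespace WWAux

open SimpleGraph SimpleGraph.Walk

variable {V : Type*} {T : SimpleGraph V}

/-- If `x` lies on a shortest walk from `u` to `v`, distances add up. -/
lemma dist_add_of_mem_support (hc : T.Connected) {u v x : V} (w : T.Walk u v)
    (hw : w.length = T.dist u v) (hx : x ∈ w.support) :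
    T.dist u x + T.dist x v = T.dist u v := by
  have h1 := T.dist_le (w.takeUntil x hx)
  have h2 := T.dist_le (w.dropUntil x hx)
  have h3 : (w.takeUntil x hx).length + (w.dropUntil x hx).length = w.length := by
    rw [← Walk.length_append, Walk.take_spec]
  have h4 := hc.dist_triangle (u := u) (v := x) (w := v)
  omega

/-- In a tree, distances to adjacent vertices differ by exactly one. -/
lemma step (hT : T.IsTree) (u x y : V) (hxy : T.Adj x y) :
    T.dist u y = T.dist u x + 1 ∨ T.dist u x = T.dist u y + 1 := by
  have hc := hT.isConnected
  obtain ⟨P, hP⟩ := (hc.preconnected u x).exists_walk_length_eq_dist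
  obtain ⟨Q, hQ⟩ := (hc.preconnected u y).exists_walk_length_eq_dist
  have hbr := (SimpleGraph.isAcyclic_iff_forall_adj_isBridge.mp hT.IsAcyclic) hxy
  rw [SimpleGraph.isBridge_iff_adj_and_forall_walk_mem_edges] at hbr
  have hmem := hbr (P.reverse.append Q)
  rw [Walk.edges_append, List.mem_append] at hmem
  rcases hmem with hmem | hmem
  · rw [Walk.edges_reverse, List.mem_reverse] at hmem
    have hy : y ∈ P.support := P.snd_mem_support_of_mem_edges hmem
    have := dist_add_of_mem_support hc P hP hy
    have hxy1 : T.dist y x = 1 := SimpleGraph.dist_eq_one_iff_adj.mpr hxy.symm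
    omega
  · have hx : x ∈ Q.support := Q.fst_mem_support_of_mem_edges hmem
    have := dist_add_of_mem_support hc Q hQ hx
    have hxy1 : T.dist x y = 1 := SimpleGraph.dist_eq_one_iff_adj.mpr hxy
    omega

lemma exists_shortest_path (hc : T.Connected) (u v : V) :
    ∃ P : T.Walk u v, P.IsPath ∧ P.length = T.dist u v := by
  obtain ⟨W, hW⟩ := (hc.preconnected u v).exists_walk_length_eq_dist
  refine ⟨W.bypass, W.bypass_isPath, le_antisymm ?_ (T.dist_le _)⟩
  calc W.bypass.length ≤ W.length := W.length_bypass_le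
    _ = T.dist u v := hW

/-- Two distinct neighbors of `y` cannot both be strictly closer to `u` in a tree. -/
lemma not_both_closer (hT : T.IsTree) (u x y z : V) (hxy : T.Adj x y) (hzy : T.Adj z y)
    (hxz : x ≠ z) (h1 : T.dist u y = T.dist u x + 1) (h2 : T.dist u y = T.dist u z + 1) :
    False := by
  have hc := hT.isConnected
  obtain ⟨P, hPp, hPl⟩ := exists_shortest_path hc u x
  obtain ⟨Q, hQp, hQl⟩ := exists_shortest_path hc u z
  have hyP : y ∉ P.support := by
    intro hy
    have := dist_add_of_mem_support hc P hPl hy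
    have hyx : T.dist y x = 1 := SimpleGraph.dist_eq_one_iff_adj.mpr hxy.symm
    omega
  have hyQ : y ∉ Q.support := by
    intro hy
    have := dist_add_of_mem_support hc Q hQl hy
    have hyz : T.dist y z = 1 := SimpleGraph.dist_eq_one_iff_adj.mpr hzy.symm
    omega
  have hP' : (P.concat hxy).IsPath := by
    rw [← Walk.isPath_reverse_iff, Walk.reverse_concat]
    exact (hPp.reverse).cons (by
      rw [Walk.support_reverse, List.mem_reverse]; exact hyP)
  have hQ' : (Q.concat hzy).IsPath := by
    rw [← Walk.isPath_reverse_iff, Walk.reverse_concat]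
    exact (hQp.reverse).cons (by
      rw [Walk.support_reverse, List.mem_reverse]; exact hyQ)
  have huniq := hT.existsUnique_path u y
  obtain ⟨R, -, hR⟩ := huniq
  have hPQ : P.concat hxy = Q.concat hzy := by
    rw [hR _ hP', hR _ hQ']
  have := congrArg (fun w : T.Walk u y => w.reverse.getVert 1) hPQ
  simp only [Walk.reverse_concat] at this
  rw [Walk.getVert_cons_succ, Walk.getVert_cons_succ, Walk.getVert_zero,
    Walk.getVert_zero] at this
  exact hxz this

/-- Strict convexity of `ww` at a middle vertex. -/
lemma ww_convex {V : Type*} [Fintype V] {T : SimpleGraph V} (hT : T.IsTree)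
    (x y z : V) (hxy : T.Adj x y) (hyz : T.Adj y z) (hxz : x ≠ z) :
    2 * ww T y < ww T x + ww T z := by
  have key : ∀ u : V,
      2 * ((T.dist u y) ^ 2 + T.dist u y) + 2 ≤
        ((T.dist u x) ^ 2 + T.dist u x) + ((T.dist u z) ^ 2 + T.dist u z) := by
    intro u
    rcases step hT u x y hxy with h1 | h1 <;>
      rcases step hT u z y hyz.symm with h2 | h2
    · exact (not_both_closer hT u x y z hxy hyz.symm hxz h1 h2).elim
    · rw [h1, h2]; nlinarith [T.dist u x, T.dist u y]
    · rw [h1, h2]; nlinarith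
    · rw [h1, h2]; nlinarith
  have hsum : ∑ u : V, (2 * ((T.dist u y) ^ 2 + T.dist u y) + 2) ≤
      ∑ u : V, (((T.dist u x) ^ 2 + T.dist u x) + ((T.dist u z) ^ 2 + T.dist u z)) :=
    Finset.sum_le_sum fun u _ => key u
  have hL : ∑ u : V, (2 * ((T.dist u y) ^ 2 + T.dist u y) + 2) =
      2 * ww T y + 2 * Fintype.card V := by
    unfold ww
    rw [Finset.sum_add_distrib, ← Finset.mul_sum, Finset.sum_const, Finset.card_univ,
      smul_eq_mul, mul_comm (Fintype.card V) 2]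
  have hR : ∑ u : V, (((T.dist u x) ^ 2 + T.dist u x) + ((T.dist u z) ^ 2 + T.dist u z)) =
      ww T x + ww T z := by
    unfold ww
    rw [Finset.sum_add_distrib]
  rw [hL, hR] at hsum
  have hpos : 0 < Fintype.card V := Fintype.card_pos_iff.mpr ⟨y⟩
  omega

/-- `getVert` is injective on indices up to the length for a path. -/
lemma getVert_inj {u v : V} {p : T.Walk u v} (hp : p.IsPath) :
    ∀ i ≤ p.length, ∀ j ≤ p.length, p.getVert i = p.getVert j → i = j := by
  induction p with
  | nil => intro i hi j hj _; simp only [Walk.length_nil, Nat.le_zero] at hi hj; omega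
  | @cons a b c h q ih =>
    rw [Walk.cons_isPath_iff] at hp
    intro i hi j hj hij
    rw [Walk.length_cons] at hi hj
    match i, j with
    | 0, 0 => rfl
    | 0, j + 1 =>
      rw [Walk.getVert_zero, Walk.getVert_cons_succ] at hij
      exact absurd (Walk.mem_support_iff_exists_getVert.mpr ⟨j, hij.symm, by omega⟩) hp.2
    | i + 1, 0 =>
      rw [Walk.getVert_zero, Walk.getVert_cons_succ] at hij
      exact absurd (Walk.mem_support_iff_exists_getVert.mpr ⟨i, hij, by omega⟩) hp.2
    | i + 1, j + 1 =>
      rw [Walk.getVert_cons_succ, Walk.getVert_cons_succ] at hij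
      have := ih hp.1 i (by omega) j (by omega) hij
      omega

end WWAux

theorem stmt1 {V : Type*} [Fintype V] (T : SimpleGraph V) (hT : T.IsTree)
    (a b : V) (p : T.Walk a b) (hp : p.IsPath) :
    (p.support.toFinset.filter (fun m => ∀ q ∈ p.support, ww T m ≤ ww T q)).card ≤ 2 ∧
    ∀ m₁ ∈ p.support, ∀ m₂ ∈ p.support,
      (∀ q ∈ p.support, ww T m₁ ≤ ww T q) → (∀ q ∈ p.support, ww T m₂ ≤ ww T q) →
      m₁ ≠ m₂ → T.Adj m₁ m₂ := by
  classical
  set n := p.length with hn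
  set g : ℕ → ℕ := fun i => ww T (p.getVert i) with hg
  have hmem : ∀ k, k ≤ n → p.getVert k ∈ p.support := fun k hk =>
    SimpleGraph.Walk.mem_support_iff_exists_getVert.mpr ⟨k, rfl, hk⟩
  have hinj := WWAux.getVert_inj hp
  -- strict convexity along the path
  have conv3 : ∀ i, i + 2 ≤ n → 2 * g (i + 1) < g i + g (i + 2) := by
    intro i hi
    have h1 : T.Adj (p.getVert i) (p.getVert (i + 1)) := p.adj_getVert_succ (by omega)
    have h2 : T.Adj (p.getVert (i + 1)) (p.getVert (i + 2)) := by
      have := p.adj_getVert_succ (i := i + 1) (by omega)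
      convert this using 2
    have hne : p.getVert i ≠ p.getVert (i + 2) := fun h => by
      have := hinj i (by omega) (i + 2) (by omega) h; omega
    exact WWAux.ww_convex hT _ _ _ h1 h2 hne
  set D : ℕ → ℤ := fun i => (g (i + 1) : ℤ) - g i with hD
  have hDlt : ∀ i, i + 2 ≤ n → D i < D (i + 1) := by
    intro i hi
    have := conv3 i hi
    simp only [hD]
    rw [show i + 1 + 1 = i + 2 from rfl]
    omega
  have hmono : ∀ j i, i < j → j + 1 ≤ n → D i < D j := by
    intro j
    induction j with
    | zero => omega
    | succ k ih =>
      intro i hi hj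
      rcases Nat.lt_succ_iff_lt_or_eq.mp hi with h | rfl
      · exact (ih i h (by omega)).trans (hDlt k (by omega))
      · exact hDlt i (by omega)
  -- two minimizers must be consecutive
  have hpair : ∀ i j, i ≤ n → j ≤ n → i < j →
      (∀ q ∈ p.support, ww T (p.getVert i) ≤ ww T q) →
      (∀ q ∈ p.support, ww T (p.getVert j) ≤ ww T q) → j = i + 1 := by
    intro i j hi hj hij hmi hmj
    by_contra hne
    obtain ⟨j', rfl⟩ : ∃ j', j = j' + 1 := ⟨j - 1, by omega⟩
    have h1 : g i ≤ g (i + 1) := hmi _ (hmem (i + 1) (by omega))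
    have h2 : g (j' + 1) ≤ g j' := hmj _ (hmem j' (by omega))
    have h3 : (0 : ℤ) ≤ D i := by simp only [hD]; omega
    have h4 : D j' ≤ 0 := by simp only [hD]; omega
    have h5 : D i < D j' := hmono j' i (by omega) (by omega)
    omega
  -- index extraction for minimizers
  have hidx : ∀ m ∈ p.support, ∃ i, i ≤ n ∧ p.getVert i = m := by
    intro m hm
    obtain ⟨i, h1, h2⟩ := SimpleGraph.Walk.mem_support_iff_exists_getVert.mp hm
    exact ⟨i, h2, h1⟩
  have hsucc : ∀ i j, i ≤ n → j ≤ n → i ≠ j →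
      (∀ q ∈ p.support, ww T (p.getVert i) ≤ ww T q) →
      (∀ q ∈ p.support, ww T (p.getVert j) ≤ ww T q) → j = i + 1 ∨ i = j + 1 := by
    intro i j hi hj hne hmi hmj
    rcases Nat.lt_or_ge i j with h | h
    · exact Or.inl (hpair i j hi hj h hmi hmj)
    · exact Or.inr (hpair j i hj hi (by omega) hmj hmi)
  constructor
  · by_contra hcard
    push_neg at hcard
    obtain ⟨x, hx, y, hy, z, hz, hxy, hxz, hyz⟩ := Finset.two_lt_card.mp hcard
    rw [Finset.mem_filter, List.mem_toFinset] at hx hy hz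
    obtain ⟨ix, hixn, hix⟩ := hidx x hx.1
    obtain ⟨iy, hiyn, hiy⟩ := hidx y hy.1
    obtain ⟨iz, hizn, hiz⟩ := hidx z hz.1
    have hxmin := hx.2; have hymin := hy.2; have hzmin := hz.2
    rw [← hix] at hxmin; rw [← hiy] at hymin; rw [← hiz] at hzmin
    have hxy' : ix ≠ iy := fun h => hxy (by rw [← hix, ← hiy, h])
    have hxz' : ix ≠ iz := fun h => hxz (by rw [← hix, ← hiz, h])
    have hyz' : iy ≠ iz := fun h => hyz (by rw [← hiy, ← hiz, h])
    have h1 := hsucc ix iy hixn hiyn hxy' hxmin hymin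
    have h2 := hsucc ix iz hixn hizn hxz' hxmin hzmin
    have h3 := hsucc iy iz hiyn hizn hyz' hymin hzmin
    omega
  · intro m₁ hm₁ m₂ hm₂ hmin₁ hmin₂ hne
    obtain ⟨i, hin, hi⟩ := hidx m₁ hm₁
    obtain ⟨j, hjn, hj⟩ := hidx m₂ hm₂
    rw [← hi] at hmin₁ ⊢; rw [← hj] at hmin₂ ⊢
    have hij : i ≠ j := fun h => hne (by rw [← hi, ← hj, h])
    rcases Nat.lt_or_ge i j with h | h
    · have := hpair i j hin hjn h hmin₁ hmin₂
      subst this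
      exact p.adj_getVert_succ (by omega)
    · have := hpair j i hjn hin (by omega) hmin₂ hmin₁
      subst this
      exact (p.adj_getVert_succ (by omega)).symm
end

section
/- In a finite tree T, the set C_w(T) of vertices minimizing ww_T has cardinality at most 2, and if it contains two vertices then they are adjacent. Equivalently, the subgraph induced by C_w(T) is either a single vertex or a single edge. -/
open Finset
open scoped Classical

namespace HyperCentroidAux

open SimpleGraph

variable {V : Type*} [Fintype V] {T : SimpleGraph V}

/-- If `x` is a neighbor of `m` which is at least as close to `u` as `m` is, then a shortest
path from `u` to `x` extends by the edge `x-m` to a path from `u` to `m`. -/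
lemma exists_concat_path (hT : T.IsTree) {u x m : V} (hadj : T.Adj x m)
    (hle : T.dist u x ≤ T.dist u m) : ∃ q : T.Walk u x, (q.concat hadj).IsPath := by
  obtain ⟨q, hq, hlen⟩ := hT.isConnected.exists_path_of_dist u x
  have hm : m ∉ q.support := by
    intro hm
    have h1 : T.dist u m ≤ (q.takeUntil m hm).length := SimpleGraph.dist_le _
    have h2 : T.dist m x ≤ (q.dropUntil m hm).length := SimpleGraph.dist_le _
    have h3 : (q.takeUntil m hm).length + (q.dropUntil m hm).length = q.length := by
      rw [← SimpleGraph.Walk.length_append, SimpleGraph.Walk.take_spec]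
    have h4 : T.dist m x = 0 := by omega
    have h5 : m = x := (hT.isConnected.dist_eq_zero_iff).mp h4
    exact hadj.ne h5.symm
  refine ⟨q, ?_⟩
  rw [← SimpleGraph.Walk.isPath_reverse_iff, SimpleGraph.Walk.reverse_concat]
  rw [SimpleGraph.Walk.cons_isPath_iff]
  refine ⟨(SimpleGraph.Walk.isPath_reverse_iff q).mpr hq, ?_⟩
  rw [SimpleGraph.Walk.support_reverse, List.mem_reverse]
  exact hm

/-- In a tree, of two distinct neighbors of `m`, at least one is strictly farther from `u`
than `m` is. -/
lemma dichotomy (hT : T.IsTree) {x y m : V} (hxm : T.Adj x m) (hym : T.Adj y m)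
    (hxy : x ≠ y) (u : V) :
    T.dist u x = T.dist u m + 1 ∨ T.dist u y = T.dist u m + 1 := by
  by_contra hcon
  push_neg at hcon
  obtain ⟨hx, hy⟩ := hcon
  have hc := hT.isConnected
  have hdx : T.dist m x = 1 := SimpleGraph.dist_eq_one_iff_adj.mpr hxm.symm
  have hdy : T.dist m y = 1 := SimpleGraph.dist_eq_one_iff_adj.mpr hym.symm
  have htx : T.dist u x ≤ T.dist u m + 1 := by
    have := hc.dist_triangle (u := u) (v := m) (w := x)
    omega
  have hty : T.dist u y ≤ T.dist u m + 1 := by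
    have := hc.dist_triangle (u := u) (v := m) (w := y)
    omega
  have hlex : T.dist u x ≤ T.dist u m := by omega
  have hley : T.dist u y ≤ T.dist u m := by omega
  obtain ⟨q, hq⟩ := exists_concat_path hT hxm hlex
  obtain ⟨q', hq'⟩ := exists_concat_path hT hym hley
  have heq : q.concat hxm = q'.concat hym :=
    (hT.existsUnique_path u m).unique hq hq'
  have hsup : (q.concat hxm).support = (q'.concat hym).support := by rw [heq]
  rw [SimpleGraph.Walk.support_concat, SimpleGraph.Walk.support_concat] at hsup
  have hsup' : q.support = q'.support := by
    have := congrArg List.reverse hsup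
    simp only [List.concat_eq_append, List.reverse_append, List.reverse_cons,
      List.reverse_nil, List.nil_append, List.cons_append] at this
    have := List.tail_eq_of_cons_eq this
    have := congrArg List.reverse this
    simpa using this
  -- the last vertex of both supports is the endpoint, so x = y
  have hx' : q.support.reverse = x :: q.reverse.support.tail := by
    rw [← SimpleGraph.Walk.support_reverse]
    exact SimpleGraph.Walk.support_eq_cons _
  have hy' : q'.support.reverse = y :: q'.reverse.support.tail := by
    rw [← SimpleGraph.Walk.support_reverse]
    exact SimpleGraph.Walk.support_eq_cons _
  rw [hsup'] at hx'
  rw [hx'] at hy'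
  exact hxy (List.head_eq_of_cons_eq hy')

/-- Strict discrete convexity of `ww` along 2-step paths in a tree. -/
lemma convex (hT : T.IsTree) {a b c : V} (hab : T.Adj a b) (hbc : T.Adj b c)
    (hac : a ≠ c) : 2 * ww T b + 2 ≤ ww T a + ww T c := by
  have hc := hT.isConnected
  have : Nonempty V := hc.nonempty
  have hcard : 1 ≤ Fintype.card V := Fintype.card_pos
  have hpt : ∀ u : V, 2 * ((T.dist u b) ^ 2 + T.dist u b) + 2 ≤
      ((T.dist u a) ^ 2 + T.dist u a) + ((T.dist u c) ^ 2 + T.dist u c) := by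
    intro u
    have hda : T.dist a b = 1 := SimpleGraph.dist_eq_one_iff_adj.mpr hab
    have hdc : T.dist c b = 1 := SimpleGraph.dist_eq_one_iff_adj.mpr hbc.symm
    have tria : T.dist u b ≤ T.dist u a + 1 := by
      have := hc.dist_triangle (u := u) (v := a) (w := b); omega
    have tric : T.dist u b ≤ T.dist u c + 1 := by
      have := hc.dist_triangle (u := u) (v := c) (w := b); omega
    rcases dichotomy hT hab hbc.symm hac u with h | h
    · set d := T.dist u b with hd
      set t := T.dist u c with ht
      rw [h]
      rcases le_or_gt d t with h2 | h2
      · have : d ^ 2 ≤ t ^ 2 := Nat.pow_le_pow_left h2 2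
        ring_nf
        nlinarith
      · have h3 : d = t + 1 := by omega
        rw [h3]; ring_nf; omega
    · set d := T.dist u b with hd
      set t := T.dist u a with ht
      rw [h]
      rcases le_or_gt d t with h2 | h2
      · have : d ^ 2 ≤ t ^ 2 := Nat.pow_le_pow_left h2 2
        ring_nf
        nlinarith
      · have h3 : d = t + 1 := by omega
        rw [h3]; ring_nf; omega
  have hsum : ∑ u : V, (2 * ((T.dist u b) ^ 2 + T.dist u b) + 2) ≤
      ∑ u : V, (((T.dist u a) ^ 2 + T.dist u a) + ((T.dist u c) ^ 2 + T.dist u c)) :=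
    Finset.sum_le_sum fun u _ => hpt u
  rw [Finset.sum_add_distrib, Finset.sum_add_distrib, ← Finset.mul_sum,
    Finset.sum_const, smul_eq_mul, Finset.card_univ] at hsum
  simp only [ww]
  omega

/-- Climbing lemma: along a path, once `ww` does not decrease over the first step,
it keeps strictly increasing. -/
lemma climb (hT : T.IsTree) : ∀ {x y : V} (Q : T.Walk x y), Q.IsPath →
    ∀ prev, T.Adj prev x → prev ∉ Q.support → ww T prev ≤ ww T x →
    ww T x + 2 * Q.length ≤ ww T y := by
  intro x y Q
  induction Q with
  | nil => simp
  | @cons x x₂ y h q ih =>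
    intro hQ prev hadj hns hle
    have hx2 : x₂ ∈ (SimpleGraph.Walk.cons h q).support := by
      simp [SimpleGraph.Walk.support_cons]
    have h1 : prev ≠ x₂ := by
      intro e; subst e; exact hns hx2
    have hconv := convex hT hadj h h1
    have hQ' : q.IsPath := hQ.of_cons
    have hxs : x ∉ q.support := ((SimpleGraph.Walk.cons_isPath_iff _ _).mp hQ).2
    have hih := ih hQ' x h hxs (by omega)
    simp only [SimpleGraph.Walk.length_cons]
    omega

end HyperCentroidAux

theorem stmt2 {V : Type*} [Fintype V] (T : SimpleGraph V) (hT : T.IsTree) :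
    (Finset.univ.filter (fun v => ∀ u, ww T v ≤ ww T u)).Nonempty ∧
    (Finset.univ.filter (fun v => ∀ u, ww T v ≤ ww T u)).card ≤ 2 ∧
    ∀ a ∈ Finset.univ.filter (fun v => ∀ u, ww T v ≤ ww T u),
      ∀ b ∈ Finset.univ.filter (fun v => ∀ u, ww T v ≤ ww T u),
        a ≠ b → T.Adj a b := by
  classical
  have hc := hT.isConnected
  have hne : Nonempty V := hc.nonempty
  -- nonemptiness of the minimizer set
  obtain ⟨v0, -, hv0⟩ := Finset.exists_min_image Finset.univ (ww T)
    ⟨Classical.arbitrary V, Finset.mem_univ _⟩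
  have hNE : (Finset.univ.filter (fun v => ∀ u, ww T v ≤ ww T u)).Nonempty :=
    ⟨v0, Finset.mem_filter.mpr ⟨Finset.mem_univ _, fun u => hv0 u (Finset.mem_univ u)⟩⟩
  -- adjacency of distinct minimizers
  have hadj : ∀ a ∈ Finset.univ.filter (fun v => ∀ u, ww T v ≤ ww T u),
      ∀ b ∈ Finset.univ.filter (fun v => ∀ u, ww T v ≤ ww T u), a ≠ b → T.Adj a b := by
    intro a ha b hb hab
    have ha' : ∀ u, ww T a ≤ ww T u := (Finset.mem_filter.mp ha).2
    have hb' : ∀ u, ww T b ≤ ww T u := (Finset.mem_filter.mp hb).2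
    by_contra hnadj
    obtain ⟨W⟩ := hc.preconnected a b
    obtain ⟨p, hp⟩ := W.toPath
    cases p with
    | nil => exact hab rfl
    | @cons _ x₂ _ h q =>
      have hq : q.IsPath := hp.of_cons
      have hns : a ∉ q.support := ((SimpleGraph.Walk.cons_isPath_iff _ _).mp hp).2
      have hclimb := HyperCentroidAux.climb hT q hq a h hns (ha' _)
      have hb2 : ww T b ≤ ww T x₂ := hb' _
      have hlen : q.length = 0 := by omega
      have hxb : x₂ = b := SimpleGraph.Walk.eq_of_length_eq_zero hlen
      subst hxb
      exact hnadj h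
  refine ⟨hNE, ?_, hadj⟩
  -- cardinality bound
  by_contra hcard
  push_neg at hcard
  obtain ⟨a, b, c, ha, hb, hcm, h1, h2, h3⟩ := Finset.two_lt_card_iff.mp hcard
  have hA : T.Adj a b := hadj a ha b hb h1
  have hB : T.Adj b c := hadj b hb c hcm h3
  have hconv := HyperCentroidAux.convex hT hA hB h2
  have p1 : ww T a ≤ ww T b := (Finset.mem_filter.mp ha).2 b
  have p2 : ww T c ≤ ww T b := (Finset.mem_filter.mp hcm).2 b
  have p3 : ww T b ≤ ww T a := (Finset.mem_filter.mp hb).2 a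
  have p4 : ww T b ≤ ww T c := (Finset.mem_filter.mp hb).2 c
  omega
end

section
/- Let T be a tree of order n and let u, v be adjacent vertices of T. Let T_v and T_u be the connected components of T − uv containing v and u respectively. Then ww_T(v) − ww_T(u) = 2(w_{T_u}(u) − w_{T_v}(v) + |V(T_u)| − |V(T_v)|), where w_S(x) = Σ_{p∈V(S)} d_S(x,p). -/
open Finset
open scoped Classical

namespace MyAux

variable {V : Type*}

/-- Key walk induction: costs of walks relative to the two components. -/
lemma key {T G' : SimpleGraph V} (hle : G' ≤ T) {u v : V}
    (hadj : ∀ a b, T.Adj a b → s(a,b) ≠ s(u,v) → G'.Adj a b)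
    (hnr : ¬ G'.Reachable u v) :
    ∀ {a b : V} (w : T.Walk a b),
      (G'.Reachable u a → G'.Reachable u b → G'.dist a b ≤ w.length) ∧
      (G'.Reachable u a → G'.Reachable v b → G'.dist a u + 1 + G'.dist v b ≤ w.length) ∧
      (G'.Reachable v a → G'.Reachable u b → G'.dist a v + 1 + G'.dist u b ≤ w.length) ∧
      (G'.Reachable v a → G'.Reachable v b → G'.dist a b ≤ w.length) := by
  intro a b w
  induction w with
  | nil =>
    refine ⟨fun _ _ => by simp, fun h1 h2 => absurd (h1.trans h2.symm) hnr,
      fun h1 h2 => absurd (h2.trans h1.symm) hnr, fun _ _ => by simp⟩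
  | @cons a c b h w' ih =>
    by_cases hac : s(a,c) = s(u,v)
    · rw [Sym2.eq_iff] at hac
      rcases hac with ⟨rfl, rfl⟩ | ⟨rfl, rfl⟩
      · -- a = u, c = v
        refine ⟨fun _ hb => ?_, fun _ hb => ?_,
          fun h1 _ => absurd h1.symm hnr, fun h1 _ => absurd h1.symm hnr⟩
        · have h0 := ih.2.2.1 (SimpleGraph.Reachable.refl c) hb
          have hvv : G'.dist c c = 0 := SimpleGraph.dist_self
          simp only [SimpleGraph.Walk.length_cons]
          omega
        · have h0 := ih.2.2.2 (SimpleGraph.Reachable.refl c) hb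
          have huu : G'.dist a a = 0 := SimpleGraph.dist_self
          simp only [SimpleGraph.Walk.length_cons]
          omega
      · -- a = v, c = u
        refine ⟨fun h1 _ => absurd h1 hnr, fun h1 _ => absurd h1 hnr,
          fun _ hb => ?_, fun _ hb => ?_⟩
        · have h0 := ih.1 (SimpleGraph.Reachable.refl c) hb
          have hvv : G'.dist a a = 0 := SimpleGraph.dist_self
          simp only [SimpleGraph.Walk.length_cons]
          omega
        · have h0 := ih.2.1 (SimpleGraph.Reachable.refl c) hb
          have huu : G'.dist c c = 0 := SimpleGraph.dist_self
          simp only [SimpleGraph.Walk.length_cons]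
          omega
    · have hG : G'.Adj a c := hadj a c h hac
      have step : ∀ x : V, G'.Reachable c x → G'.dist a x ≤ G'.dist c x + 1 := by
        intro x hx
        obtain ⟨p, hp⟩ := hx.exists_walk_length_eq_dist
        have := G'.dist_le (SimpleGraph.Walk.cons hG p)
        simpa [hp, Nat.add_comm] using this
      refine ⟨fun h1 h2 => ?_, fun h1 h2 => ?_, fun h1 h2 => ?_, fun h1 h2 => ?_⟩
      · have hc : G'.Reachable u c := h1.trans hG.reachable
        have := ih.1 hc h2
        have h3 := step b (hc.symm.trans h2)
        simp only [SimpleGraph.Walk.length_cons]; omega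
      · have hc : G'.Reachable u c := h1.trans hG.reachable
        have := ih.2.1 hc h2
        have h3' : G'.dist a u ≤ G'.dist c u + 1 := step u hc.symm
        simp only [SimpleGraph.Walk.length_cons]; omega
      · have hc : G'.Reachable v c := h1.trans hG.reachable
        have := ih.2.2.1 hc h2
        have h3' : G'.dist a v ≤ G'.dist c v + 1 := step v hc.symm
        simp only [SimpleGraph.Walk.length_cons]; omega
      · have hc : G'.Reachable v c := h1.trans hG.reachable
        have := ih.2.2.2 hc h2
        have h3 := step b (hc.symm.trans h2)
        simp only [SimpleGraph.Walk.length_cons]; omega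

lemma partition {T G' : SimpleGraph V} {u v : V}
    (hadj : ∀ a b, T.Adj a b → s(a,b) ≠ s(u,v) → G'.Adj a b) :
    ∀ {a b : V} (w : T.Walk a b),
      (G'.Reachable u a ∨ G'.Reachable v a) → (G'.Reachable u b ∨ G'.Reachable v b) := by
  intro a b w
  induction w with
  | nil => exact id
  | @cons a c b h w' ih =>
    intro ha
    by_cases hac : s(a,c) = s(u,v)
    · rw [Sym2.eq_iff] at hac
      rcases hac with ⟨rfl, rfl⟩ | ⟨rfl, rfl⟩
      · exact ih (Or.inr (SimpleGraph.Reachable.refl c))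
      · exact ih (Or.inl (SimpleGraph.Reachable.refl c))
    · have hG : G'.Adj a c := hadj a c h hac
      rcases ha with ha | ha
      · exact ih (Or.inl (ha.trans hG.reachable))
      · exact ih (Or.inr (ha.trans hG.reachable))

end MyAux

theorem stmt3 {V : Type*} [Fintype V] (T : SimpleGraph V) (hT : T.IsTree)
    (u v : V) (huv : T.Adj u v) :
    (ww T v : ℤ) - ww T u =
      2 * (((∑ p ∈ Finset.univ.filter
              (fun p => (T.deleteEdges {s(u,v)}).Reachable u p),
              (T.deleteEdges {s(u,v)}).dist u p : ℕ) : ℤ)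
         - ((∑ p ∈ Finset.univ.filter
              (fun p => (T.deleteEdges {s(u,v)}).Reachable v p),
              (T.deleteEdges {s(u,v)}).dist v p : ℕ) : ℤ)
         + ((Finset.univ.filter
              (fun p => (T.deleteEdges {s(u,v)}).Reachable u p)).card : ℤ)
         - ((Finset.univ.filter
              (fun p => (T.deleteEdges {s(u,v)}).Reachable v p)).card : ℤ)) := by
  classical
  set G' : SimpleGraph V := T.deleteEdges {s(u,v)} with hG'def
  have hle : G' ≤ T := SimpleGraph.deleteEdges_le _
  have hadj : ∀ a b, T.Adj a b → s(a,b) ≠ s(u,v) → G'.Adj a b := by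
    intro a b h hne
    rw [hG'def, SimpleGraph.deleteEdges_adj]
    exact ⟨h, by simpa using hne⟩
  have hnr : ¬ G'.Reachable u v := by
    have hb : T.IsBridge s(u,v) :=
      SimpleGraph.isAcyclic_iff_forall_adj_isBridge.mp hT.2 huv
    exact SimpleGraph.isBridge_iff.mp hb
  have hpart : ∀ p, G'.Reachable u p ∨ G'.Reachable v p := by
    intro p
    obtain ⟨w⟩ := hT.1.preconnected u p
    exact MyAux.partition hadj w (Or.inl (SimpleGraph.Reachable.refl u))
  have hdisj : ∀ p, G'.Reachable u p → G'.Reachable v p → False :=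
    fun p h1 h2 => hnr (h1.trans h2.symm)
  have dA1 : ∀ p, G'.Reachable u p → T.dist p u = G'.dist u p := by
    intro p hA
    rw [SimpleGraph.dist_comm]
    refine le_antisymm (SimpleGraph.Reachable.dist_anti hle hA) ?_
    obtain ⟨w, hw⟩ := (hT.1.preconnected u p).exists_walk_length_eq_dist
    have := (MyAux.key hle hadj hnr w).1 (SimpleGraph.Reachable.refl u) hA
    omega
  have dA2 : ∀ p, G'.Reachable u p → T.dist p v = G'.dist u p + 1 := by
    intro p hA
    rw [SimpleGraph.dist_comm]
    refine le_antisymm ?_ ?_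
    · obtain ⟨q, hq⟩ := hA.exists_walk_length_eq_dist
      have := T.dist_le (SimpleGraph.Walk.cons huv.symm (q.mapLe hle))
      simpa [hq] using this
    · obtain ⟨w, hw⟩ := (hT.1.preconnected v p).exists_walk_length_eq_dist
      have h0 := (MyAux.key hle hadj hnr w).2.2.1 (SimpleGraph.Reachable.refl v) hA
      have hvv : G'.dist v v = 0 := SimpleGraph.dist_self
      omega
  have dB1 : ∀ p, G'.Reachable v p → T.dist p v = G'.dist v p := by
    intro p hB
    rw [SimpleGraph.dist_comm]
    refine le_antisymm (SimpleGraph.Reachable.dist_anti hle hB) ?_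
    obtain ⟨w, hw⟩ := (hT.1.preconnected v p).exists_walk_length_eq_dist
    have := (MyAux.key hle hadj hnr w).2.2.2 (SimpleGraph.Reachable.refl v) hB
    omega
  have dB2 : ∀ p, G'.Reachable v p → T.dist p u = G'.dist v p + 1 := by
    intro p hB
    rw [SimpleGraph.dist_comm]
    refine le_antisymm ?_ ?_
    · obtain ⟨q, hq⟩ := hB.exists_walk_length_eq_dist
      have := T.dist_le (SimpleGraph.Walk.cons huv (q.mapLe hle))
      simpa [hq] using this
    · obtain ⟨w, hw⟩ := (hT.1.preconnected u p).exists_walk_length_eq_dist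
      have h0 := (MyAux.key hle hadj hnr w).2.1 (SimpleGraph.Reachable.refl u) hB
      have huu : G'.dist u u = 0 := SimpleGraph.dist_self
      omega
  have hABset : Finset.univ.filter (fun p => ¬ G'.Reachable u p)
      = Finset.univ.filter (fun p => G'.Reachable v p) := by
    ext p
    simp only [Finset.mem_filter, Finset.mem_univ, true_and]
    constructor
    · intro h
      rcases hpart p with h' | h'
      · exact absurd h' h
      · exact h'
    · intro h h'
      exact hdisj p h' h
  have hL : (ww T v : ℤ) - ww T u
      = ∑ p : V, ((((T.dist p v : ℤ))^2 + T.dist p v)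
          - (((T.dist p u : ℤ))^2 + T.dist p u)) := by
    simp only [ww]
    push_cast
    rw [← Finset.sum_sub_distrib]
  have key1 : ∀ p ∈ Finset.univ.filter (fun p => G'.Reachable u p),
      ((((T.dist p v : ℤ))^2 + T.dist p v) - (((T.dist p u : ℤ))^2 + T.dist p u))
        = 2 * (G'.dist u p : ℤ) + 2 := by
    intro p hp
    rw [Finset.mem_filter] at hp
    rw [dA1 p hp.2, dA2 p hp.2]
    push_cast
    ring
  have key2 : ∀ p ∈ Finset.univ.filter (fun p => G'.Reachable v p),
      ((((T.dist p v : ℤ))^2 + T.dist p v) - (((T.dist p u : ℤ))^2 + T.dist p u))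
        = -(2 * (G'.dist v p : ℤ) + 2) := by
    intro p hp
    rw [Finset.mem_filter] at hp
    rw [dB1 p hp.2, dB2 p hp.2]
    push_cast
    ring
  rw [hL, ← Finset.sum_filter_add_sum_filter_not Finset.univ (fun p => G'.Reachable u p),
    hABset, Finset.sum_congr rfl key1, Finset.sum_congr rfl key2]
  simp only [Finset.sum_add_distrib, Finset.sum_neg_distrib, ← Finset.mul_sum,
    Finset.sum_const, nsmul_eq_mul, mul_one]
  push_cast
  ring
end

section
/- Let T be a tree, u and v adjacent vertices, and suppose v minimizes ww_T over V(T). Let T_v and T_u be the components of T − uv containing v and u respectively, and let n_{vu}(v) = |V(T_v)|, n_{vu}(u) = |V(T_u)|. Then n_{vu}(v) + w_{T_v}(v) ≥ n_{vu}(u) + w_{T_u}(u), with equality if and only if u also minimizes ww_T over V(T). -/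
open Finset
open scoped Classical

section Aux

variable {V : Type*} [Fintype V] {T : SimpleGraph V}

/-- Deleting an edge of a tree disconnects its endpoints. -/
lemma aux_not_reach (hT : T.IsTree) {u v : V} (huv : T.Adj u v) :
    ¬ (T.deleteEdges {s(u,v)}).Reachable u v := by
  intro h
  obtain ⟨W⟩ := h
  -- replace with a path
  set P := W.bypass with hP
  have hPpath : P.IsPath := W.bypass_isPath
  have hPedges : s(u,v) ∉ P.edges := by
    intro he
    have := P.edges_subset_edgeSet he
    rw [SimpleGraph.edgeSet_deleteEdges] at this
    exact this.2 rfl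
  have hsub : ∀ e ∈ P.edges, e ∈ T.edgeSet := by
    intro e he
    have := P.edges_subset_edgeSet he
    rw [SimpleGraph.edgeSet_deleteEdges] at this
    exact this.1
  set Q : T.Walk u v := P.transfer T hsub with hQ
  have hQpath : Q.IsPath := hPpath.transfer hsub
  have hQedges : s(u,v) ∉ Q.edges := by
    rw [hQ, SimpleGraph.Walk.edges_transfer]
    exact hPedges
  -- the one-edge path
  set R : T.Walk u v := SimpleGraph.Walk.cons huv SimpleGraph.Walk.nil with hR
  have hRpath : R.IsPath := by
    rw [hR]
    simp [SimpleGraph.Walk.cons_isPath_iff, huv.ne]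
  have hRedges : s(u,v) ∈ R.edges := by
    rw [hR]; simp
  have := hT.IsAcyclic.path_unique ⟨Q, hQpath⟩ ⟨R, hRpath⟩
  rw [Subtype.mk.injEq] at this
  rw [this] at hQedges
  exact hQedges hRedges

/-- Every vertex is in one of the two components. -/
lemma aux_cover (hT : T.IsTree) {u v : V} (huv : T.Adj u v) (p : V) :
    (T.deleteEdges {s(u,v)}).Reachable v p ∨ (T.deleteEdges {s(u,v)}).Reachable u p := by
  obtain ⟨W⟩ := hT.isConnected.preconnected v p
  have key : ∀ (a b : V) (W : T.Walk a b),
      ((T.deleteEdges {s(u,v)}).Reachable v a ∨ (T.deleteEdges {s(u,v)}).Reachable u a) →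
      ((T.deleteEdges {s(u,v)}).Reachable v b ∨ (T.deleteEdges {s(u,v)}).Reachable u b) := by
    intro a b W
    induction W with
    | nil => exact id
    | @cons a c b hac q ih =>
      intro ha
      apply ih
      by_cases hedge : s(a,c) = s(u,v)
      · rw [Sym2.eq_iff] at hedge
        rcases hedge with ⟨rfl, rfl⟩ | ⟨rfl, rfl⟩
        · exact Or.inl (.refl _)
        · exact Or.inr (.refl _)
      · have hac' : (T.deleteEdges {s(u,v)}).Adj a c := by
          rw [SimpleGraph.deleteEdges_adj]
          exact ⟨hac, by simpa using hedge⟩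
        rcases ha with h | h
        · exact Or.inl (h.trans hac'.reachable)
        · exact Or.inr (h.trans hac'.reachable)
  exact key v p W (Or.inl (.refl _))

/-- Distance relations for a vertex in the component of `v`. -/
lemma aux_dist (hT : T.IsTree) {u v : V} (huv : T.Adj u v) {p : V}
    (hp : (T.deleteEdges {s(u,v)}).Reachable v p) :
    T.dist u p = (T.deleteEdges {s(u,v)}).dist v p + 1 ∧
    T.dist v p = (T.deleteEdges {s(u,v)}).dist v p := by
  have hconn := hT.isConnected
  have hnr : ¬ (T.deleteEdges {s(u,v)}).Reachable u p :=
    fun h => aux_not_reach hT huv (h.trans hp.symm)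
  have hduv : T.dist u v = 1 := SimpleGraph.dist_eq_one_iff_adj.mpr huv
  -- Step 1: T.dist u p = T.dist v p + 1
  have h1 : T.dist u p = T.dist v p + 1 := by
    have hle : T.dist u p ≤ T.dist v p + 1 := by
      have := hconn.dist_triangle (u := u) (v := v) (w := p)
      omega
    have hge : T.dist v p + 1 ≤ T.dist u p := by
      obtain ⟨W, hW⟩ := hconn.exists_walk_length_eq_dist u p
      -- W must use the edge s(u,v)
      have hedge : s(u,v) ∈ W.edges := by
        by_contra he
        exact hnr ⟨W.toDeleteEdges {s(u,v)} (by
          intro e heW hmem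
          rw [Set.mem_singleton_iff] at hmem
          exact he (hmem ▸ heW))⟩
      have hvmem : v ∈ W.support := SimpleGraph.Walk.snd_mem_support_of_mem_edges W hedge
      have hspec := W.take_spec hvmem
      have hlen : W.length = (W.takeUntil v hvmem).length + (W.dropUntil v hvmem).length := by
        conv_lhs => rw [← hspec]
        exact SimpleGraph.Walk.length_append _ _
      have h2 : T.dist u v ≤ (W.takeUntil v hvmem).length := SimpleGraph.dist_le _
      have h3 : T.dist v p ≤ (W.dropUntil v hvmem).length := SimpleGraph.dist_le _
      omega
    omega
  -- Step 2: (T.deleteEdges {s(u,v)}).dist v p = T.dist v p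
  have h2 : (T.deleteEdges {s(u,v)}).dist v p = T.dist v p := by
    apply le_antisymm
    · obtain ⟨W, hW⟩ := hconn.exists_walk_length_eq_dist v p
      have hedge : s(u,v) ∉ W.edges := by
        intro he
        have humem : u ∈ W.support := SimpleGraph.Walk.fst_mem_support_of_mem_edges W he
        have hspec := W.take_spec humem
        have hlen : W.length = (W.takeUntil u humem).length + (W.dropUntil u humem).length := by
          conv_lhs => rw [← hspec]
          exact SimpleGraph.Walk.length_append _ _
        have h3 : T.dist v u ≤ (W.takeUntil u humem).length := SimpleGraph.dist_le _
        have h4 : T.dist u p ≤ (W.dropUntil u humem).length := SimpleGraph.dist_le _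
        have h5 : T.dist v u = 1 := by rw [SimpleGraph.dist_comm]; exact hduv
        omega
      have := SimpleGraph.dist_le (W.toDeleteEdges {s(u,v)} (by
        intro e heW hmem
        rw [Set.mem_singleton_iff] at hmem
        exact hedge (hmem ▸ heW)))
      rw [SimpleGraph.Walk.length_transfer] at this
      omega
    · obtain ⟨W', hW'⟩ := hp.exists_walk_length_eq_dist
      have hsub : ∀ e ∈ W'.edges, e ∈ T.edgeSet := by
        intro e he
        have := W'.edges_subset_edgeSet he
        rw [SimpleGraph.edgeSet_deleteEdges] at this
        exact this.1
      have := SimpleGraph.dist_le (W'.transfer T hsub)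
      rw [SimpleGraph.Walk.length_transfer] at this
      omega
  exact ⟨by omega, by omega⟩

end Aux

theorem stmt4 {V : Type*} [Fintype V] (T : SimpleGraph V) (hT : T.IsTree)
    (u v : V) (huv : T.Adj u v) (hv : ∀ x, ww T v ≤ ww T x) :
    ((Finset.univ.filter (fun p => (T.deleteEdges {s(u,v)}).Reachable v p)).card
        + ∑ p ∈ Finset.univ.filter (fun p => (T.deleteEdges {s(u,v)}).Reachable v p),
            (T.deleteEdges {s(u,v)}).dist v p
      ≥ (Finset.univ.filter (fun p => (T.deleteEdges {s(u,v)}).Reachable u p)).card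
        + ∑ p ∈ Finset.univ.filter (fun p => (T.deleteEdges {s(u,v)}).Reachable u p),
            (T.deleteEdges {s(u,v)}).dist u p) ∧
    (((Finset.univ.filter (fun p => (T.deleteEdges {s(u,v)}).Reachable v p)).card
        + ∑ p ∈ Finset.univ.filter (fun p => (T.deleteEdges {s(u,v)}).Reachable v p),
            (T.deleteEdges {s(u,v)}).dist v p
      = (Finset.univ.filter (fun p => (T.deleteEdges {s(u,v)}).Reachable u p)).card
        + ∑ p ∈ Finset.univ.filter (fun p => (T.deleteEdges {s(u,v)}).Reachable u p),
            (T.deleteEdges {s(u,v)}).dist u p)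
      ↔ (∀ x, ww T u ≤ ww T x)) := by
  classical
  set G' := T.deleteEdges {s(u,v)} with hG'
  have hswap : (T.deleteEdges {s(v,u)}) = G' := by rw [Sym2.eq_swap]
  set Sv := Finset.univ.filter (fun p => G'.Reachable v p) with hSv
  set Su := Finset.univ.filter (fun p => G'.Reachable u p) with hSu
  have hnr : ¬ G'.Reachable u v := aux_not_reach hT huv
  -- the swapped distance lemma
  have aux_dist' : ∀ {p : V}, G'.Reachable u p →
      T.dist v p = G'.dist u p + 1 ∧ T.dist u p = G'.dist u p := by
    intro p hpp
    have := aux_dist hT huv.symm (p := p) (by rwa [hswap])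
    rwa [hswap] at this
  -- Su is the complement of Sv
  have hSu' : Su = Finset.univ.filter (fun p => ¬ G'.Reachable v p) := by
    apply Finset.filter_congr
    intro p _
    constructor
    · intro h1 h2
      exact hnr (h1.trans h2.symm)
    · intro h
      rcases aux_cover hT huv p with h' | h'
      · exact absurd h' h
      · exact h'
  -- splitting any ww sum
  have hsplit : ∀ x : V, ww T x
      = ∑ p ∈ Sv, ((T.dist p x) ^ 2 + T.dist p x)
      + ∑ p ∈ Su, ((T.dist p x) ^ 2 + T.dist p x) := by
    intro x
    rw [ww, hSv, hSu']
    exact (Finset.sum_filter_add_sum_filter_not Finset.univ _ _).symm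
  -- distances on each side
  have hdv : ∀ p ∈ Sv, T.dist p v = G'.dist v p ∧ T.dist p u = G'.dist v p + 1 := by
    intro p hp
    rw [hSv, Finset.mem_filter] at hp
    have h := aux_dist hT huv hp.2
    rw [SimpleGraph.dist_comm (u := p) (v := v), SimpleGraph.dist_comm (u := p) (v := u)]
    exact ⟨h.2, h.1⟩
  have hdu : ∀ p ∈ Su, T.dist p u = G'.dist u p ∧ T.dist p v = G'.dist u p + 1 := by
    intro p hp
    rw [hSu, Finset.mem_filter] at hp
    have h := aux_dist' hp.2
    rw [SimpleGraph.dist_comm (u := p) (v := v), SimpleGraph.dist_comm (u := p) (v := u)]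
    exact ⟨h.2, h.1⟩
  -- rewrite the four sums
  have hwwu : ww T u
      = ∑ p ∈ Sv, ((G'.dist v p + 1) ^ 2 + (G'.dist v p + 1))
      + ∑ p ∈ Su, ((G'.dist u p) ^ 2 + G'.dist u p) := by
    rw [hsplit u]
    congr 1
    · exact Finset.sum_congr rfl (fun p hp => by rw [(hdv p hp).2])
    · exact Finset.sum_congr rfl (fun p hp => by rw [(hdu p hp).1])
  have hwwv : ww T v
      = ∑ p ∈ Sv, ((G'.dist v p) ^ 2 + G'.dist v p)
      + ∑ p ∈ Su, ((G'.dist u p + 1) ^ 2 + (G'.dist u p + 1)) := by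
    rw [hsplit v]
    congr 1
    · exact Finset.sum_congr rfl (fun p hp => by rw [(hdv p hp).1])
    · exact Finset.sum_congr rfl (fun p hp => by rw [(hdu p hp).2])
  -- expanding the shifted sums
  have expand : ∀ (s : Finset V) (g : V → ℕ),
      ∑ p ∈ s, ((g p + 1) ^ 2 + (g p + 1))
      = ∑ p ∈ s, ((g p) ^ 2 + g p) + 2 * (∑ p ∈ s, g p) + 2 * s.card := by
    intro s g
    have : ∀ p ∈ s, (g p + 1) ^ 2 + (g p + 1) = ((g p) ^ 2 + g p) + (2 * g p + 2) :=
      fun p _ => by ring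
    rw [Finset.sum_congr rfl this, Finset.sum_add_distrib, Finset.sum_add_distrib,
      Finset.sum_add_distrib, ← Finset.mul_sum, Finset.sum_const, smul_eq_mul]
    ring
  -- the key identity
  have hKEY : ww T u + 2 * (Su.card + ∑ p ∈ Su, G'.dist u p)
      = ww T v + 2 * (Sv.card + ∑ p ∈ Sv, G'.dist v p) := by
    rw [hwwu, hwwv, expand Sv (fun p => G'.dist v p), expand Su (fun p => G'.dist u p)]
    ring
  have hBA : ww T v ≤ ww T u := hv u
  have hSuEq : ∑ p ∈ Su, (T.deleteEdges {s(u,v)}).dist u p = ∑ p ∈ Su, G'.dist u p := rfl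
  have hSvEq : ∑ p ∈ Sv, (T.deleteEdges {s(u,v)}).dist v p = ∑ p ∈ Sv, G'.dist v p := rfl
  constructor
  · omega
  · constructor
    · intro heq x
      have : ww T u = ww T v := by omega
      rw [this]; exact hv x
    · intro h
      have h1 : ww T u ≤ ww T v := h v
      omega
end

section
/- On any path of maximum length in a tree T, the maximum of ww_T over the vertices of the path is attained at one of the two endpoints of the path (which are leaves of T). -/
open Finset
open scoped Classical

section Aux
open SimpleGraph Walk


variable {V : Type*} {T : SimpleGraph V}

lemma path_len (hT : T.IsTree) {u v : V} (q : T.Walk u v) (hq : q.IsPath) :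
    q.length = T.dist u v := by
  obtain ⟨r, hr, hrlen⟩ := hT.isConnected.exists_path_of_dist u v
  have := hT.IsAcyclic.path_unique ⟨q, hq⟩ ⟨r, hr⟩
  rw [← hrlen]
  exact congrArg _ (congrArg Subtype.val this)

lemma takeUntil_antisymm [DecidableEq V] {u v w w' : V} (q : T.Walk u v)
    (hw : w ∈ q.support) (hw' : w' ∈ q.support)
    (h1 : w' ∈ (q.takeUntil w hw).support) (h2 : w ∈ (q.takeUntil w' hw').support) :
    w = w' := by
  induction q with
  | nil => rw [mem_support_nil_iff] at hw hw'; rw [hw, hw']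
  | @cons a b c adj r ih =>
    by_cases hwa : a = w
    · subst hwa
      simp only [takeUntil] at h1
      rw [dif_pos trivial] at h1
      have h : w' = a := by simpa using h1
      exact h.symm
    · by_cases hwa' : a = w'
      · subst hwa'
        simp only [takeUntil] at h2
        rw [dif_pos trivial] at h2
        simpa using h2
      · have hwr : w ∈ r.support := by
          cases hw with
          | head => exact absurd rfl hwa
          | tail _ h => exact h
        have hwr' : w' ∈ r.support := by
          cases hw' with
          | head => exact absurd rfl hwa'
          | tail _ h => exact h
        apply ih hwr hwr'
        · simp only [takeUntil, dif_neg hwa] at h1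
          cases h1 with
          | head => exact absurd rfl hwa'
          | tail _ h => exact h
        · simp only [takeUntil, dif_neg hwa'] at h2
          cases h2 with
          | head => exact absurd rfl hwa
          | tail _ h => exact h

lemma key_or (hT : T.IsTree) {a b : V} (p : T.Walk a b) (hp : p.IsPath)
    (u : V) {v : V} (hv : v ∈ p.support) :
    T.dist u a = T.dist u v + T.dist v a ∨ T.dist u b = T.dist u v + T.dist v b := by
  classical
  obtain ⟨q, hq, hqlen⟩ := hT.isConnected.exists_path_of_dist u v
  set p1 := p.takeUntil v hv with hp1def
  set p2 := p.dropUntil v hv with hp2def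
  have hp1 : p1.IsPath := hp.takeUntil hv
  have hp2 : p2.IsPath := hp.dropUntil hv
  have hd1 : p1.length = T.dist a v := path_len hT p1 hp1
  have hd2 : p2.length = T.dist v b := path_len hT p2 hp2
  have hca : T.dist v a = T.dist a v := SimpleGraph.dist_comm
  by_cases hr1 : (q.append p1.reverse).IsPath
  · left
    have hl := path_len hT _ hr1
    rw [Walk.length_append, Walk.length_reverse] at hl
    omega
  · by_cases hr2 : (q.append p2).IsPath
    · right
      have hl := path_len hT _ hr2
      rw [Walk.length_append] at hl
      omega
    · exfalso
      have huniq : ∀ {x y : V} (r1 r2 : T.Walk x y), r1.IsPath → r2.IsPath → r1 = r2 :=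
        fun r1 r2 h1 h2 => (hT.existsUnique_path _ _).unique h1 h2
      -- disjointness of p1.support and p2.support.tail
      have hdisj : p1.support.Disjoint p2.support.tail := by
        have hnp : p.support.Nodup := hp.support_nodup
        rw [← p.take_spec hv, Walk.support_append] at hnp
        exact (List.nodup_append'.mp hnp).2.2
      -- extract w from hr1
      have hns1 : ¬ (q.support ++ p1.reverse.support.tail).Nodup := by
        rw [← Walk.support_append]
        exact fun h => hr1 (Walk.isPath_def _ |>.mpr h)
      obtain ⟨w, hwq, hwt⟩ : ∃ w ∈ q.support, w ∈ p1.reverse.support.tail := by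
        by_contra hcon
        push_neg at hcon
        exact hns1 (List.nodup_append'.mpr ⟨hq.support_nodup,
          (hp1.reverse.support_nodup).tail, fun x hx hx2 => hcon x hx hx2⟩)
      have hwv : w ≠ v := by
        intro h
        subst h
        have := hp1.reverse.support_nodup
        rw [p1.reverse.support_eq_cons] at this
        exact (List.nodup_cons.mp this).1 hwt
      have hw1 : w ∈ p1.support := by
        have : w ∈ p1.reverse.support := List.mem_of_mem_tail hwt
        rwa [Walk.support_reverse, List.mem_reverse] at this
      -- extract w' from hr2
      have hns2 : ¬ (q.support ++ p2.support.tail).Nodup := by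
        rw [← Walk.support_append]
        exact fun h => hr2 (Walk.isPath_def _ |>.mpr h)
      obtain ⟨w', hw'q, hw't⟩ : ∃ w' ∈ q.support, w' ∈ p2.support.tail := by
        by_contra hcon
        push_neg at hcon
        exact hns2 (List.nodup_append'.mpr ⟨hq.support_nodup,
          (hp2.support_nodup).tail, fun x hx hx2 => hcon x hx hx2⟩)
      have hw'v : w' ≠ v := by
        intro h
        subst h
        have := hp2.support_nodup
        rw [p2.support_eq_cons] at this
        exact (List.nodup_cons.mp this).1 hw't
      have hw2 : w' ∈ p2.support := List.mem_of_mem_tail hw't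
      -- q.dropUntil w = p1.dropUntil w
      have he1 : q.dropUntil w hwq = p1.dropUntil w hw1 :=
        huniq _ _ (hq.dropUntil hwq) (hp1.dropUntil hw1)
      have hA : w' ∈ (q.takeUntil w hwq).support := by
        have : w' ∈ q.support := hw'q
        rw [← q.take_spec hwq, Walk.mem_support_append_iff] at this
        rcases this with h | h
        · exact h
        · exfalso
          rw [he1] at h
          exact hdisj (p1.support_dropUntil_subset hw1 h) hw't
      -- q.dropUntil w' = (p2.takeUntil w').reverse
      have he2 : q.dropUntil w' hw'q = (p2.takeUntil w' hw2).reverse :=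
        huniq _ _ (hq.dropUntil hw'q) (hp2.takeUntil hw2).reverse
      have hB : w ∈ (q.takeUntil w' hw'q).support := by
        have : w ∈ q.support := hwq
        rw [← q.take_spec hw'q, Walk.mem_support_append_iff] at this
        rcases this with h | h
        · exact h
        · exfalso
          rw [he2, Walk.support_reverse, List.mem_reverse] at h
          have hwp2 : w ∈ p2.support := p2.support_takeUntil_subset hw2 h
          have : w ∈ p2.support.tail := by
            rw [p2.support_eq_cons] at hwp2
            cases hwp2 with
            | head => exact absurd rfl hwv
            | tail _ h2 => exact h2
          exact hdisj hw1 this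
      have : w = w' := takeUntil_antisymm q hwq hw'q hA hB
      subst this
      have : w ∈ p2.support.tail := hw't
      exact hdisj hw1 this
lemma arithZ (x B i s : ℤ) (hx : 0 ≤ x) (hB : 0 ≤ B) (hi : 0 ≤ i) (hs : 0 ≤ s)
    (h2 : x ≤ B + s) :
    (i + s) * (x ^ 2 + x) ≤ s * ((x + i) ^ 2 + (x + i)) + i * (B ^ 2 + B) := by
  rcases le_or_gt x s with h | h
  · nlinarith [mul_nonneg hi (sq_nonneg x), mul_nonneg hi hx, mul_nonneg hi hs,
      mul_nonneg hi (mul_nonneg hs hx), mul_nonneg hi (mul_nonneg hs hi),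
      mul_nonneg hi (mul_nonneg hs hs), mul_nonneg hi (mul_nonneg (sub_nonneg.2 h) hx),
      mul_nonneg hi (mul_nonneg (sub_nonneg.2 h) (sub_nonneg.2 h))]
  · have hBx : x - s ≤ B := by linarith
    nlinarith [mul_nonneg hi (mul_nonneg hs hi), mul_nonneg hi (mul_nonneg hs hs),
      mul_nonneg hi (sub_nonneg.2 hBx), mul_nonneg hi (mul_nonneg (sub_nonneg.2 hBx) hB),
      mul_nonneg hi (mul_nonneg (sub_nonneg.2 hBx) (le_of_lt (lt_of_le_of_lt hs h))),
      mul_nonneg hi (mul_nonneg (sub_nonneg.2 hBx) (sub_nonneg.2 hBx))]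

lemma arithN (x A B i s : ℕ) (h1 : x ≤ A + i) (h2 : x ≤ B + s)
    (hor : A = x + i ∨ B = x + s) :
    (i + s) * (x ^ 2 + x) ≤ s * (A ^ 2 + A) + i * (B ^ 2 + B) := by
  rcases hor with h | h
  · subst h
    zify
    exact arithZ x B i s (by positivity) (by positivity) (by positivity) (by positivity)
      (by exact_mod_cast h2)
  · subst h
    rw [add_comm i s, add_comm (s * _)]
    zify
    exact arithZ x A s i (by positivity) (by positivity) (by positivity) (by positivity)
      (by exact_mod_cast h1)

end Aux

theorem stmt5 {V : Type*} [Fintype V] (T : SimpleGraph V) (hT : T.IsTree)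
    (a b : V) (p : T.Walk a b) (hp : p.IsPath)
    (hmax : ∀ (c d : V) (q : T.Walk c d), q.IsPath → q.length ≤ p.length) :
    ∀ v ∈ p.support, ww T v ≤ max (ww T a) (ww T b) := by
  classical
  intro v hv
  rcases eq_or_ne v a with rfl | hva
  · exact le_max_left _ _
  set i := (p.takeUntil v hv).length with hidef
  set s := (p.dropUntil v hv).length with hsdef
  have hp1 : (p.takeUntil v hv).IsPath := hp.takeUntil hv
  have hp2 : (p.dropUntil v hv).IsPath := hp.dropUntil hv
  have hdav : T.dist a v = i := (path_len hT _ hp1).symm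
  have hdvb : T.dist v b = s := (path_len hT _ hp2).symm
  have hipos : 0 < i := by
    rcases Nat.eq_zero_or_pos i with h | h
    · exact absurd (SimpleGraph.Walk.eq_of_length_eq_zero h).symm hva
    · exact h
  have key : (i + s) * ww T v ≤ s * ww T a + i * ww T b := by
    unfold ww
    rw [Finset.mul_sum, Finset.mul_sum, Finset.mul_sum, ← Finset.sum_add_distrib]
    apply Finset.sum_le_sum
    intro u _
    apply arithN
    · have ht := hT.isConnected.dist_triangle (u := u) (v := a) (w := v)
      omega
    · have ht := hT.isConnected.dist_triangle (u := u) (v := b) (w := v)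
      have hcb : T.dist b v = T.dist v b := SimpleGraph.dist_comm
      omega
    · have hor := key_or hT p hp u hv
      have hca : T.dist v a = T.dist a v := SimpleGraph.dist_comm
      omega
  have hM : s * ww T a + i * ww T b ≤ (i + s) * max (ww T a) (ww T b) := by
    have h1 : ww T a ≤ max (ww T a) (ww T b) := le_max_left _ _
    have h2 : ww T b ≤ max (ww T a) (ww T b) := le_max_right _ _
    calc s * ww T a + i * ww T b ≤ s * max (ww T a) (ww T b) + i * max (ww T a) (ww T b) :=
          Nat.add_le_add (Nat.mul_le_mul_left s h1) (Nat.mul_le_mul_left i h2)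
      _ = (i + s) * max (ww T a) (ww T b) := by ring
  exact Nat.le_of_mul_le_mul_left (le_trans key hM) (by omega)
end

section
/- For any tree T of odd order n with v ∈ C_w(T) (hyper-centroid) and u ∈ C(T) (centroid), the minimum distance between a vertex of C_w(T) and a vertex of C(T) is at most ⌊(n−1)/8⌋. -/
open Finset
open scoped Classical

/-- Local Wiener (distance) function: `w G v = Σ_u d(u,v)`. -/
noncomputable def wW {V : Type*} [Fintype V] (G : SimpleGraph V) (v : V) : ℕ :=
  ∑ u : V, G.dist u v

namespace TreeAux

variable {V : Type*} {T : SimpleGraph V}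

lemma path_length_eq (hT : T.IsTree) {a b : V} {p : T.Walk a b} (hp : p.IsPath) :
    p.length = T.dist a b := by
  obtain ⟨q, hq, hql⟩ := hT.isConnected.exists_path_of_dist a b
  have : (⟨p, hp⟩ : T.Path a b) = ⟨q, hq⟩ := hT.IsAcyclic.path_unique _ _
  rw [← hql]
  exact congrArg SimpleGraph.Walk.length (congrArg Subtype.val this)

lemma dist_add_of_support (hc : T.Connected) {a b y : V} {p : T.Walk a b}
    (hp : p.length = T.dist a b) (hy : y ∈ p.support) :
    T.dist a y + T.dist y b = T.dist a b := by
  have h1 : T.dist a y ≤ (p.takeUntil y hy).length := SimpleGraph.dist_le _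
  have h2 : T.dist y b ≤ (p.dropUntil y hy).length := SimpleGraph.dist_le _
  have h3 : (p.takeUntil y hy).length + (p.dropUntil y hy).length = p.length := by
    rw [← SimpleGraph.Walk.length_append, SimpleGraph.Walk.take_spec]
  have h4 : T.dist a b ≤ T.dist a y + T.dist y b := hc.dist_triangle
  omega

lemma append_isPath {a b c : V} {p : T.Walk a b} {q : T.Walk b c}
    (hp : p.IsPath) (hq : q.IsPath) (h : ∀ y ∈ p.support, y ∈ q.support → y = b) :
    (p.append q).IsPath := by
  rw [SimpleGraph.Walk.isPath_def, SimpleGraph.Walk.support_append]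
  refine List.Nodup.append hp.support_nodup (hq.support_nodup.tail) ?_
  intro y hyp hyq
  have hyq' : y ∈ q.support := List.mem_of_mem_tail hyq
  have hyb : y = b := h y hyp hyq'
  subst hyb
  have hnd := hq.support_nodup
  rw [SimpleGraph.Walk.support_eq_cons q] at hnd
  exact (List.nodup_cons.mp hnd).1 hyq

lemma adj_cases (hT : T.IsTree) {x y : V} (h : T.Adj x y) (z : V) :
    T.dist z x + 1 = T.dist z y ∨ T.dist z y + 1 = T.dist z x := by
  obtain ⟨p, hp, hpl⟩ := hT.isConnected.exists_path_of_dist z x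
  by_cases hy : y ∈ p.support
  · right
    have := dist_add_of_support hT.isConnected hpl hy
    have hyx : T.dist y x = 1 := SimpleGraph.dist_eq_one_iff_adj.mpr h.symm
    omega
  · left
    have hyr : y ∉ p.reverse.support := by
      rwa [SimpleGraph.Walk.support_reverse, List.mem_reverse]
    have hR : (SimpleGraph.Walk.cons h.symm p.reverse).IsPath :=
      SimpleGraph.Walk.IsPath.cons hp.reverse hyr
    have hlen := path_length_eq hT hR
    rw [SimpleGraph.Walk.length_cons, SimpleGraph.Walk.length_reverse] at hlen
    rw [SimpleGraph.dist_comm (u := y)] at hlen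
    omega

lemma exists_mid (hc : T.Connected) :
    ∀ (i : ℕ) (a b : V), i ≤ T.dist a b →
      ∃ y, T.dist a y = i ∧ T.dist y b + i = T.dist a b := by
  intro i
  induction i with
  | zero => intro a b _; exact ⟨a, by simp [SimpleGraph.dist_self]⟩
  | succ i ih =>
    intro a b hi
    obtain ⟨y, hy1, hy2⟩ := ih a b (Nat.le_of_succ_le hi)
    have hyb : 1 ≤ T.dist y b := by omega
    obtain ⟨p, hp, hpl⟩ := hc.exists_path_of_dist y b
    have hnn : ¬ p.Nil := by
      rw [SimpleGraph.Walk.nil_iff_length_eq]; omega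
    set y' := p.getVert 1 with hy'
    have hadj : T.Adj y y' := p.adj_snd hnn
    have htl : p.tail.length + 1 = p.length := SimpleGraph.Walk.length_tail_add_one hnn
    have hd1 : T.dist y' b ≤ p.tail.length := SimpleGraph.dist_le _
    have hd2 : T.dist a y' ≤ T.dist a y + 1 := by
      have := hc.dist_triangle (u := a) (v := y) (w := y')
      have := SimpleGraph.dist_eq_one_iff_adj.mpr hadj
      omega
    have hd3 : T.dist a b ≤ T.dist a y' + T.dist y' b := hc.dist_triangle
    exact ⟨y', by omega, by omega⟩

lemma far_side (hT : T.IsTree) {a a' b z : V} (h1 : T.Adj a a')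
    (h2 : T.dist a' b + 1 = T.dist a b)
    (hz : T.dist z a' = T.dist z a + 1) :
    T.dist z b = T.dist z a + T.dist a b := by
  have hc := hT.isConnected
  obtain ⟨P, hP, hPl⟩ := hc.exists_path_of_dist z a
  obtain ⟨Q₁, hQ₁, hQ₁l⟩ := hc.exists_path_of_dist a' b
  have haQ₁ : a ∉ Q₁.support := by
    intro hmem
    have := dist_add_of_support hc hQ₁l hmem
    have haa' : T.dist a' a = 1 := SimpleGraph.dist_eq_one_iff_adj.mpr h1.symm
    omega
  have hQ : (SimpleGraph.Walk.cons h1 Q₁).IsPath := SimpleGraph.Walk.IsPath.cons hQ₁ haQ₁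
  have hQl : (SimpleGraph.Walk.cons h1 Q₁).length = T.dist a b := by
    rw [SimpleGraph.Walk.length_cons]; omega
  by_cases hcase : ∀ y ∈ P.support, y ∈ (SimpleGraph.Walk.cons h1 Q₁).support → y = a
  · have hap := append_isPath hP hQ hcase
    have := path_length_eq hT hap
    rw [SimpleGraph.Walk.length_append, hPl, hQl] at this
    omega
  · exfalso
    push_neg at hcase
    obtain ⟨y, hyP, hyQ, hya⟩ := hcase
    have hyQ₁ : y ∈ Q₁.support := by
      rw [SimpleGraph.Walk.support_cons] at hyQ
      rcases List.mem_cons.mp hyQ with h | h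
      · exact absurd h hya
      · exact h
    have e1 : T.dist z y + T.dist y a = T.dist z a := dist_add_of_support hc hPl hyP
    have e2 : T.dist a' y + T.dist y b = T.dist a' b := dist_add_of_support hc hQ₁l hyQ₁
    have e3 : T.dist a b ≤ T.dist a y + T.dist y b := hc.dist_triangle
    have e4 : T.dist z a' ≤ T.dist z y + T.dist y a' := hc.dist_triangle
    have e5 : T.dist a y = T.dist y a := SimpleGraph.dist_comm
    have e6 : T.dist y a' = T.dist a' y := SimpleGraph.dist_comm
    omega

end TreeAux

lemma final_arith {b c k : ℤ} (h1 : 2*b + 2*(b*k) + k*k ≤ c*c + c + k + 2)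
    (h2 : k + c ≤ b) (h3 : b + c ≤ 7*k) (h4 : 1 ≤ c) (h5 : 1 ≤ k) : False := by
  nlinarith [mul_nonneg (by linarith : (0:ℤ) ≤ b - k - c) (by linarith : (0:ℤ) ≤ c + b - k + 1),
    mul_nonneg (by linarith : (0:ℤ) ≤ 7*k - b - c) (by linarith : (0:ℤ) ≤ 7*k - b + c + 1),
    sq_nonneg (b - 4*k), mul_pos (by linarith : (0:ℤ) < k) (by linarith : (0:ℤ) < b)]

set_option maxHeartbeats 2000000 in
theorem stmt6 {V : Type*} [Fintype V] (T : SimpleGraph V) (hT : T.IsTree)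
    (hodd : Odd (Fintype.card V)) :
    ∃ v u : V, (∀ x, ww T v ≤ ww T x) ∧ (∀ x, wW T u ≤ wW T x) ∧
      T.dist v u ≤ (Fintype.card V - 1) / 8 := by
  classical
  have hc := hT.isConnected
  have hne : Nonempty V := hc.nonempty
  obtain ⟨v, -, hv⟩ := Finset.exists_min_image (univ : Finset V) (ww T)
    ⟨Classical.arbitrary V, mem_univ _⟩
  obtain ⟨u, -, hu⟩ := Finset.exists_min_image (univ : Finset V) (wW T)
    ⟨Classical.arbitrary V, mem_univ _⟩
  refine ⟨v, u, fun x => hv x (mem_univ x), fun x => hu x (mem_univ x), ?_⟩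
  set n := Fintype.card V with hn
  by_contra hcon
  push_neg at hcon
  set k := T.dist v u with hk
  have hk1 : 1 ≤ k := by omega
  have h8 : n + 1 ≤ 8 * k := by
    have h1 : n - 1 < 8 * k := by
      have := (Nat.div_lt_iff_lt_mul (show 0 < 8 by norm_num)).mp hcon
      omega
    obtain ⟨mm, hmm⟩ := hodd
    have hn1 : 1 ≤ n := Fintype.card_pos
    omega
  -- midpoints on a geodesic from v to u
  have hmid : ∀ i, i ≤ k → ∃ y, T.dist v y = i ∧ T.dist y u + i = k :=
    fun i hi => TreeAux.exists_mid hc i v u hi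
  choose! m hm using hmid
  set w₁ := m 1 with hw₁
  set x₁ := m (k-1) with hx₁
  have hw1v : T.dist v w₁ = 1 := (hm 1 hk1).1
  have hw1u : T.dist w₁ u + 1 = k := by
    have h := (hm 1 hk1).2
    rw [← hw₁] at h
    omega
  have hadj_vw : T.Adj v w₁ := SimpleGraph.dist_eq_one_iff_adj.mp hw1v
  have hx1v : T.dist v x₁ = k - 1 := (hm (k-1) (by omega)).1
  have hx1u : T.dist x₁ u + (k-1) = k := (hm (k-1) (by omega)).2
  have hx1u1 : T.dist x₁ u = 1 := by omega
  have hadj_ux : T.Adj u x₁ := (SimpleGraph.dist_eq_one_iff_adj.mp hx1u1).symm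
  set B := univ.filter (fun z => T.dist z x₁ = T.dist z u + 1) with hB
  set B' := univ.filter (fun z => T.dist z w₁ = T.dist z v + 1) with hB'
  set A' := univ.filter (fun z => ¬ (T.dist z w₁ = T.dist z v + 1)) with hA'
  -- far-side distance formulas
  have hBfar : ∀ z ∈ B, T.dist z v = T.dist z u + k := by
    intro z hz
    rw [hB, mem_filter] at hz
    have h2 : T.dist x₁ v + 1 = T.dist u v := by
      rw [SimpleGraph.dist_comm (u := x₁), SimpleGraph.dist_comm (u := u)]
      omega
    have := TreeAux.far_side hT hadj_ux h2 hz.2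
    rw [SimpleGraph.dist_comm (u := u) (v := v)] at this
    omega
  have hB'far : ∀ z ∈ B', T.dist z u = T.dist z v + k := by
    intro z hz
    rw [hB', mem_filter] at hz
    have h2 : T.dist w₁ u + 1 = T.dist v u := by omega
    have := TreeAux.far_side hT hadj_vw h2 hz.2
    omega
  have huB : u ∈ B := by
    rw [hB, mem_filter]
    refine ⟨mem_univ _, ?_⟩
    rw [SimpleGraph.dist_comm (u := u), SimpleGraph.dist_self]
    omega
  have hvB' : v ∈ B' := by
    rw [hB', mem_filter]
    refine ⟨mem_univ _, ?_⟩
    rw [SimpleGraph.dist_self]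
    omega
  set b := B.card with hbdef
  set c := B'.card with hcdef
  have hb1 : 1 ≤ b := Finset.card_pos.mpr ⟨u, huB⟩
  have hc1 : 1 ≤ c := Finset.card_pos.mpr ⟨v, hvB'⟩
  -- centroid inequality : n + 1 ≤ 2 * b
  have hcent : n + 1 ≤ 2 * b := by
    have h1 := hu x₁ (mem_univ x₁)
    set Bc := univ.filter (fun z => ¬ (T.dist z x₁ = T.dist z u + 1)) with hBc
    have e0 : ∀ z ∈ Bc, T.dist z u = T.dist z x₁ + 1 := by
      intro z hz
      rw [hBc, mem_filter] at hz
      rcases TreeAux.adj_cases hT hadj_ux z with h | h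
      · exact absurd h.symm hz.2
      · omega
    have e0' : ∀ z ∈ B, T.dist z x₁ = T.dist z u + 1 := by
      intro z hz; rw [hB, mem_filter] at hz; exact hz.2
    have eA : ∑ z ∈ B, T.dist z x₁ = (∑ z ∈ B, T.dist z u) + b := by
      rw [Finset.sum_congr rfl e0', Finset.sum_add_distrib]
      simp [hbdef]
    have eB : ∑ z ∈ Bc, T.dist z u = (∑ z ∈ Bc, T.dist z x₁) + Bc.card := by
      rw [Finset.sum_congr rfl e0, Finset.sum_add_distrib]
      simp
    have eU : (∑ z ∈ B, T.dist z u) + (∑ z ∈ Bc, T.dist z u) = wW T u := by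
      rw [wW, hB, hBc]
      exact Finset.sum_filter_add_sum_filter_not _ _ _
    have eX : (∑ z ∈ B, T.dist z x₁) + (∑ z ∈ Bc, T.dist z x₁) = wW T x₁ := by
      rw [wW, hB, hBc]
      exact Finset.sum_filter_add_sum_filter_not _ _ _
    have ecard : b + Bc.card = n := by
      rw [hbdef, hB, hBc, Finset.card_filter_add_card_filter_not, card_univ]
    obtain ⟨mm, hmm⟩ := hodd
    omega
  -- hyper-centroid local inequality (KEY1)
  set SA := ∑ z ∈ A', T.dist z v with hSA
  set SB := ∑ z ∈ B', T.dist z v with hSB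
  have eA'v : ∀ z ∈ A', T.dist z v = T.dist z w₁ + 1 := by
    intro z hz
    rw [hA', mem_filter] at hz
    rcases TreeAux.adj_cases hT hadj_vw z with h | h
    · exact absurd h.symm hz.2
    · omega
  have eB'w : ∀ z ∈ B', T.dist z w₁ = T.dist z v + 1 := by
    intro z hz; rw [hB', mem_filter] at hz; exact hz.2
  have hKEY1 : SA ≤ SB + c := by
    have h1 := hv w₁ (mem_univ w₁)
    have ev : ww T v = (∑ z ∈ B', (T.dist z v ^ 2 + T.dist z v))
        + (∑ z ∈ A', (T.dist z v ^ 2 + T.dist z v)) := by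
      rw [ww, hB', hA']
      exact (Finset.sum_filter_add_sum_filter_not _ _ _).symm
    have ew : ww T w₁ = (∑ z ∈ B', (T.dist z w₁ ^ 2 + T.dist z w₁))
        + (∑ z ∈ A', (T.dist z w₁ ^ 2 + T.dist z w₁)) := by
      rw [ww, hB', hA']
      exact (Finset.sum_filter_add_sum_filter_not _ _ _).symm
    have e2 : ∑ z ∈ A', (T.dist z v ^ 2 + T.dist z v)
        = (∑ z ∈ A', (T.dist z w₁ ^ 2 + T.dist z w₁)) + (2 * ∑ z ∈ A', T.dist z w₁ + 2 * A'.card) := by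
      have : ∀ z ∈ A', T.dist z v ^ 2 + T.dist z v
          = (T.dist z w₁ ^ 2 + T.dist z w₁) + (2 * T.dist z w₁ + 2) := by
        intro z hz
        rw [eA'v z hz]; ring
      rw [Finset.sum_congr rfl this]
      simp only [Finset.sum_add_distrib, Finset.mul_sum, Finset.sum_const, smul_eq_mul]
      omega
    have e3 : ∑ z ∈ B', (T.dist z w₁ ^ 2 + T.dist z w₁)
        = (∑ z ∈ B', (T.dist z v ^ 2 + T.dist z v)) + (2 * SB + 2 * c) := by
      have : ∀ z ∈ B', T.dist z w₁ ^ 2 + T.dist z w₁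
          = (T.dist z v ^ 2 + T.dist z v) + (2 * T.dist z v + 2) := by
        intro z hz
        rw [eB'w z hz]; ring
      rw [Finset.sum_congr rfl this]
      simp only [Finset.sum_add_distrib, Finset.mul_sum, Finset.sum_const, smul_eq_mul, hSB, hcdef]
      omega
    have e4 : SA = (∑ z ∈ A', T.dist z w₁) + A'.card := by
      rw [hSA, Finset.sum_congr rfl eA'v, Finset.sum_add_distrib]
      simp
    omega
  -- lower bound pieces for SA (KEY2)
  set Sbu := ∑ z ∈ B, T.dist z u with hSbu
  have hF3 : b ≤ Sbu + 1 := by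
    have h1 : ∀ z ∈ B.erase u, 1 ≤ T.dist z u := by
      intro z hz
      exact hc.pos_dist_of_ne (Finset.ne_of_mem_erase hz)
    have h2 : (B.erase u).card ≤ ∑ z ∈ B.erase u, T.dist z u := by
      calc (B.erase u).card = ∑ _z ∈ B.erase u, 1 := by simp
        _ ≤ _ := Finset.sum_le_sum h1
    have h3 : ∑ z ∈ B.erase u, T.dist z u ≤ Sbu :=
      Finset.sum_le_sum_of_subset (Finset.erase_subset _ _)
    have h4 : b - 1 ≤ (B.erase u).card := Finset.pred_card_le_card_erase
    omega
  have hdisjBB' : ∀ z ∈ B, z ∉ B' := by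
    intro z hzB hzB'
    have e1 := hBfar z hzB
    have e2 := hB'far z hzB'
    omega
  set M := (Finset.Ico 1 k).image m with hM
  have hmv : ∀ i ∈ Finset.Ico 1 k, T.dist v (m i) = i := by
    intro i hi; rw [Finset.mem_Ico] at hi; exact (hm i (by omega)).1
  have hmu : ∀ i ∈ Finset.Ico 1 k, T.dist (m i) u + i = k := by
    intro i hi; rw [Finset.mem_Ico] at hi; exact (hm i (by omega)).2
  have hMcard : M.card = k - 1 := by
    rw [hM, Finset.card_image_of_injOn, Nat.card_Ico]
    intro i hi j hj hij
    have h1 := hmv i hi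
    have h2 := hmv j hj
    rw [hij] at h1; omega
  have hMB' : ∀ z ∈ M, z ∉ B' := by
    intro z hz hzB'
    obtain ⟨i, hi, rfl⟩ := Finset.mem_image.mp hz
    have e1 := hmv i hi
    have e2 := hmu i hi
    have e3 := hB'far _ hzB'
    have e4 : T.dist (m i) v = T.dist v (m i) := SimpleGraph.dist_comm
    rw [Finset.mem_Ico] at hi
    omega
  have hMB : ∀ z ∈ M, z ∉ B := by
    intro z hz hzB
    obtain ⟨i, hi, rfl⟩ := Finset.mem_image.mp hz
    have e1 := hmv i hi
    have e2 := hmu i hi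
    have e3 := hBfar _ hzB
    have e4 : T.dist (m i) v = T.dist v (m i) := SimpleGraph.dist_comm
    rw [Finset.mem_Ico] at hi
    omega
  have hBA' : B ⊆ A' := by
    intro z hz
    rw [hA', mem_filter]
    exact ⟨mem_univ _, fun hpred => hdisjBB' z hz (by rw [hB', mem_filter]; exact ⟨mem_univ _, hpred⟩)⟩
  have hMA' : M ⊆ A' := by
    intro z hz
    rw [hA', mem_filter]
    exact ⟨mem_univ _, fun hpred => hMB' z hz (by rw [hB', mem_filter]; exact ⟨mem_univ _, hpred⟩)⟩
  set SM := ∑ i ∈ Finset.Ico 1 k, i with hSMdef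
  have hSM2 : 2 * SM + k = k * k := by
    have hIR : (∑ i ∈ Finset.range k, i) = SM := by
      rw [hSMdef]
      refine Finset.sum_subset ?_ ?_ |>.symm
      · intro i hi
        rw [Finset.mem_Ico] at hi
        rw [Finset.mem_range]
        omega
      · intro i hi hni
        rw [Finset.mem_range] at hi
        rw [Finset.mem_Ico] at hni
        omega
    have hg := Finset.sum_range_id_mul_two k
    rw [hIR] at hg
    have hkk : k * (k - 1) + k = k * k := by
      have hgen : ∀ j : ℕ, 1 ≤ j → j * (j - 1) + j = j * j := by
        intro j hj
        obtain ⟨j', rfl⟩ : ∃ j', j = j' + 1 := ⟨j - 1, by omega⟩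
        simp [Nat.add_sub_cancel]
        ring
      exact hgen k hk1
    omega
  have hKEY2 : (Sbu + b * k) + SM ≤ SA := by
    have hdBM : Disjoint B M := Finset.disjoint_left.mpr (by intro z hzB hzM; exact hMB z hzM hzB)
    have hsub : B ∪ M ⊆ A' := Finset.union_subset hBA' hMA'
    have h1 : ∑ z ∈ B ∪ M, T.dist z v ≤ SA := by
      rw [hSA]
      exact Finset.sum_le_sum_of_subset hsub
    have h2 : ∑ z ∈ B ∪ M, T.dist z v = (∑ z ∈ B, T.dist z v) + (∑ z ∈ M, T.dist z v) :=
      Finset.sum_union hdBM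
    have h3 : ∑ z ∈ B, T.dist z v = Sbu + b * k := by
      rw [Finset.sum_congr rfl hBfar, Finset.sum_add_distrib]
      simp [hSbu, hbdef]
    have h4 : ∑ z ∈ M, T.dist z v = SM := by
      rw [hM, Finset.sum_image, hSMdef]
      · refine Finset.sum_congr rfl (fun i hi => ?_)
        have := hmv i hi
        rw [SimpleGraph.dist_comm]
        exact this
      · intro i hi j hj hij
        have h1 := hmv i hi
        have h2 := hmv j hj
        rw [hij] at h1; omega
    omega
  -- upper bound on SB (KEY3)
  have hreal : ∀ j : ℕ, (B'.filter (fun z => j < T.dist z v)).card = 0 ∨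
      (B'.filter (fun z => j < T.dist z v)).card + (j + 1) ≤ c := by
    intro j
    by_cases hne2 : (B'.filter (fun z => j < T.dist z v)).Nonempty
    · right
      obtain ⟨z, hz⟩ := hne2
      rw [Finset.mem_filter] at hz
      obtain ⟨hzB', hzj⟩ := hz
      have hzw : T.dist z w₁ = T.dist z v + 1 := eB'w z hzB'
      have hdvz : T.dist v z = T.dist z v := SimpleGraph.dist_comm
      have hmid2 : ∀ t, t ≤ T.dist v z → ∃ y, T.dist v y = t ∧ T.dist y z + t = T.dist v z :=
        fun t ht => TreeAux.exists_mid hc t v z ht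
      choose! y hy using hmid2
      have hyB' : ∀ t ∈ Finset.range (j + 1), y t ∈ B'.filter (fun z => ¬ j < T.dist z v) := by
        intro t ht
        rw [Finset.mem_range] at ht
        have ht' : t ≤ T.dist v z := by omega
        obtain ⟨e1, e2⟩ := hy t ht'
        have hyv : T.dist (y t) v = t := by
          rw [SimpleGraph.dist_comm]; exact e1
        have htri1 : T.dist (y t) w₁ ≤ T.dist (y t) v + T.dist v w₁ := hc.dist_triangle
        have htri2 : T.dist z w₁ ≤ T.dist z (y t) + T.dist (y t) w₁ := hc.dist_triangle
        have hzy : T.dist z (y t) = T.dist (y t) z := SimpleGraph.dist_comm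
        have hmem : T.dist (y t) w₁ = T.dist (y t) v + 1 := by omega
        rw [Finset.mem_filter, hB', Finset.mem_filter]
        exact ⟨⟨mem_univ _, hmem⟩, by omega⟩
      have hsubY : (Finset.range (j + 1)).image y ⊆ B'.filter (fun z => ¬ j < T.dist z v) := by
        intro x hx
        obtain ⟨t, ht, rfl⟩ := Finset.mem_image.mp hx
        exact hyB' t ht
      have hycard : ((Finset.range (j + 1)).image y).card = j + 1 := by
        rw [Finset.card_image_of_injOn, Finset.card_range]
        intro t1 ht1 t2 ht2 he
        rw [Finset.coe_range, Set.mem_Iio] at ht1 ht2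
        have e1 := (hy t1 (by omega)).1
        have e2 := (hy t2 (by omega)).1
        rw [he] at e1; omega
      have hle := Finset.card_le_card hsubY
      have hsplit := Finset.card_filter_add_card_filter_not
        (s := B') (p := fun z => j < T.dist z v)
      omega
    · left
      rw [Finset.not_nonempty_iff_eq_empty] at hne2
      rw [hne2, Finset.card_empty]
  have hclt : ∀ z ∈ B', T.dist z v < c := by
    intro z hz
    by_contra hge
    push_neg at hge
    have hzmem : z ∈ B'.filter (fun z => c - 1 < T.dist z v) := by
      rw [Finset.mem_filter]
      exact ⟨hz, by omega⟩
    have hpos : 1 ≤ (B'.filter (fun z => c - 1 < T.dist z v)).card :=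
      Finset.card_pos.mpr ⟨z, hzmem⟩
    rcases hreal (c - 1) with h | h
    · omega
    · omega
  have hlc : SB = ∑ j ∈ Finset.range c, (B'.filter (fun z => j < T.dist z v)).card := by
    have e1 : ∀ z ∈ B', T.dist z v = ∑ j ∈ Finset.range c, (if j < T.dist z v then 1 else 0) := by
      intro z hz
      have h2 : ((Finset.range c).filter (fun j => j < T.dist z v)).card
          = ∑ j ∈ Finset.range c, (if j < T.dist z v then 1 else 0) := Finset.card_filter _ _
      have h3 : (Finset.range c).filter (fun j => j < T.dist z v) = Finset.range (T.dist z v) := by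
        ext j
        rw [Finset.mem_filter, Finset.mem_range, Finset.mem_range]
        have := hclt z hz
        constructor
        · rintro ⟨-, h⟩; exact h
        · intro h; exact ⟨by omega, h⟩
      rw [← h2, h3, Finset.card_range]
    rw [hSB, Finset.sum_congr rfl e1, Finset.sum_comm]
    refine Finset.sum_congr rfl (fun j _ => ?_)
    exact (Finset.card_filter _ _).symm
  have hKEY3 : 2 * SB + c ≤ c * c := by
    have h1 : SB ≤ ∑ j ∈ Finset.range c, (c - (j + 1)) := by
      rw [hlc]
      refine Finset.sum_le_sum (fun j _ => ?_)
      rcases hreal j with h | h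
      · omega
      · omega
    have h2 : ∑ j ∈ Finset.range c, (c - (j + 1)) = ∑ j ∈ Finset.range c, j := by
      calc ∑ j ∈ Finset.range c, (c - (j + 1)) = ∑ j ∈ Finset.range c, (c - 1 - j) :=
            Finset.sum_congr rfl (fun j _ => by omega)
        _ = ∑ j ∈ Finset.range c, j := Finset.sum_range_reflect (fun j => j) c
    have h3 := Finset.sum_range_id_mul_two c
    have hcc : c * (c - 1) + c = c * c := by
      have hgen : ∀ j : ℕ, 1 ≤ j → j * (j - 1) + j = j * j := by
        intro j hj
        obtain ⟨j', rfl⟩ : ∃ j', j = j' + 1 := ⟨j - 1, by omega⟩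
        simp [Nat.add_sub_cancel]
        ring
      exact hgen c hc1
    omega
  -- cardinality bound
  have hF6 : b + (k - 1) + c ≤ n := by
    have hdBM : Disjoint B M := Finset.disjoint_left.mpr (by intro z hzB hzM; exact hMB z hzM hzB)
    have hdU : Disjoint (B ∪ M) B' := Finset.disjoint_left.mpr (by
      intro z hz hzB'
      rcases Finset.mem_union.mp hz with h | h
      · exact hdisjBB' z h hzB'
      · exact hMB' z h hzB')
    have hcard := Finset.card_le_card (Finset.subset_univ ((B ∪ M) ∪ B'))
    rw [Finset.card_union_of_disjoint hdU, Finset.card_union_of_disjoint hdBM,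
      Finset.card_univ] at hcard
    omega
  -- final contradiction
  have hP1 : k + c ≤ b := by omega
  have hP2 : b + c ≤ 7 * k := by omega
  have hchain : 2 * b + 2 * (b * k) + k * k ≤ c * c + c + k + 2 := by omega
  exact final_arith (b := b) (c := c) (k := k) (by exact_mod_cast hchain)
    (by exact_mod_cast hP1) (by exact_mod_cast hP2) (by exact_mod_cast hc1)
    (by exact_mod_cast hk1)
end

section
/- For any tree T of even order n ≥ 4 with v ∈ C_w(T) and u ∈ C(T), the minimum distance between a vertex of C_w(T) and a vertex of C(T) is at most ⌊(n² − 2n − 8)/(8n + 8)⌋. -/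
open Finset
open scoped Classical

namespace TreeAux

section generic
variable {α : Type*}

lemma exists_eq_of_le (S : Finset α) (g : α → ℕ)
    (hstep : ∀ x ∈ S, ∀ r, g x = r + 1 → ∃ y ∈ S, g y = r) :
    ∀ x ∈ S, ∀ j, j ≤ g x → ∃ y ∈ S, g y = j := by
  have key : ∀ c x, x ∈ S → ∀ j, g x = j + c → ∃ y ∈ S, g y = j := by
    intro c
    induction c with
    | zero => exact fun x hx j hj => ⟨x, hx, by omega⟩
    | succ c ih =>
      intro x hx j hj
      obtain ⟨y, hy, hgy⟩ := hstep x hx (j + c) (by omega)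
      exact ih y hy j hgy
  intro x hx j hj
  exact key (g x - j) x hx j (by omega)

lemma val_lt_card (S : Finset α) (g : α → ℕ)
    (hcl : ∀ x ∈ S, ∀ j, j ≤ g x → ∃ y ∈ S, g y = j) {x : α} (hx : x ∈ S) :
    g x + 1 ≤ S.card := by
  classical
  set f : ℕ → α := fun j => if h : ∃ y ∈ S, g y = j then h.choose else x with hf
  have hfs : ∀ j ∈ Finset.range (g x + 1), f j ∈ S ∧ g (f j) = j := by
    intro j hj
    rw [Finset.mem_range] at hj
    have h : ∃ y ∈ S, g y = j := hcl x hx j (by omega)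
    simp only [hf, dif_pos h]
    obtain ⟨h1, h2⟩ := h.choose_spec
    exact ⟨h1, h2⟩
  calc g x + 1 = (Finset.range (g x + 1)).card := by simp
    _ ≤ S.card := by
        apply Finset.card_le_card_of_injOn f (fun j hj => (hfs j hj).1)
        intro j1 h1 j2 h2 heq
        have e1 := (hfs j1 (by simpa using h1)).2
        have e2 := (hfs j2 (by simpa using h2)).2
        rw [← e1, ← e2, heq]

lemma counting [DecidableEq α] (S : Finset α) (g : α → ℕ)
    (hcl : ∀ x ∈ S, ∀ j, j ≤ g x → ∃ y ∈ S, g y = j) :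
    2 * ∑ x ∈ S, g x + S.card ≤ S.card * S.card := by
  classical
  have H : ∀ n (S : Finset α), (∀ x ∈ S, ∀ j, j ≤ g x → ∃ y ∈ S, g y = j) →
      S.card = n → 2 * ∑ x ∈ S, g x + S.card ≤ S.card * S.card := by
    intro n
    induction n using Nat.strong_induction_on with
    | _ n IH =>
    intro S hcl hn
    rcases Finset.eq_empty_or_nonempty S with rfl | hne
    · simp
    obtain ⟨x, hx, hmax⟩ := Finset.exists_max_image S g hne
    set S' := S.erase x with hS'
    have hcard : S'.card = n - 1 := by rw [hS', Finset.card_erase_of_mem hx, hn]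
    have hn1 : 1 ≤ n := by
      rw [← hn]; exact Finset.card_pos.mpr hne
    have hcl' : ∀ y ∈ S', ∀ j, j ≤ g y → ∃ z ∈ S', g z = j := by
      intro y hy j hj
      obtain ⟨z, hz, hgz⟩ := hcl y (Finset.mem_of_mem_erase hy) j hj
      by_cases hzx : z = x
      · subst hzx
        have : g y = g z := le_antisymm (hmax y (Finset.mem_of_mem_erase hy)) (by omega)
        exact ⟨y, hy, by omega⟩
      · exact ⟨z, Finset.mem_erase.mpr ⟨hzx, hz⟩, hgz⟩
    have hIH := IH (n-1) (by omega) S' hcl' hcard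
    have hgx : g x + 1 ≤ n := by rw [← hn]; exact val_lt_card S g hcl hx
    have hsum : ∑ y ∈ S, g y = g x + ∑ y ∈ S', g y := by
      rw [hS', ← Finset.add_sum_erase S g hx]
    obtain ⟨t, rfl⟩ : ∃ t, n = t + 1 := ⟨n - 1, by omega⟩
    rw [show t + 1 - 1 = t by omega] at hcard
    rw [hcard] at hIH
    rw [hsum, hn]
    nlinarith [hIH, hgx]
  exact H S.card S hcl rfl

lemma gauss2 : ∀ k : ℕ, ∑ j ∈ Finset.range k, 2*(j+1) = k*(k+1) := by
  intro k
  induction k with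
  | zero => simp
  | succ k ih => rw [Finset.sum_range_succ, ih]; ring

end generic

variable {V : Type*} {T : SimpleGraph V} {a b x z : V}

lemma adj_dist_le_one (h : T.Adj a b) : T.dist a b ≤ 1 := by
  simpa using SimpleGraph.dist_le (SimpleGraph.Walk.cons h .nil)

lemma dist_getVert_le (hc : T.Connected) (p : T.Walk a b) (i : ℕ) :
    T.dist a (p.getVert i) ≤ i := by
  induction p generalizing i with
  | nil => simp [SimpleGraph.Walk.getVert, SimpleGraph.dist_self]
  | @cons u v w h q ih =>
    cases i with
    | zero => simp [SimpleGraph.Walk.getVert, SimpleGraph.dist_self]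
    | succ i =>
      rw [SimpleGraph.Walk.getVert_cons_succ]
      calc T.dist u (q.getVert i) ≤ T.dist u v + T.dist v (q.getVert i) := hc.dist_triangle
        _ ≤ 1 + i := Nat.add_le_add (adj_dist_le_one h) (ih i)
        _ = i + 1 := Nat.add_comm _ _

lemma dist_getVert_le' (p : T.Walk a b) (i : ℕ) (hi : i ≤ p.length) :
    T.dist (p.getVert i) b ≤ p.length - i := by
  induction p generalizing i with
  | nil =>
    obtain rfl : i = 0 := Nat.le_zero.mp hi
    simp [SimpleGraph.Walk.getVert, SimpleGraph.dist_self]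
  | @cons u v w h q ih =>
    cases i with
    | zero =>
      simpa [SimpleGraph.Walk.getVert] using SimpleGraph.dist_le (SimpleGraph.Walk.cons h q)
    | succ i =>
      rw [SimpleGraph.Walk.getVert_cons_succ]
      simpa using ih i (by simpa using hi)

lemma mem_support_dist (p : T.Walk a b) (h : x ∈ p.support) :
    T.dist a x + T.dist x b ≤ p.length := by
  have hsplit := p.take_spec h
  calc T.dist a x + T.dist x b ≤ (p.takeUntil x h).length + (p.dropUntil x h).length :=
        Nat.add_le_add (SimpleGraph.dist_le _) (SimpleGraph.dist_le _)
    _ = p.length := by rw [← SimpleGraph.Walk.length_append, hsplit]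

lemma isPath_concat {p : T.Walk a b} (hp : p.IsPath) (h : T.Adj b x) (hx : x ∉ p.support) :
    (p.concat h).IsPath := by
  rw [← SimpleGraph.Walk.isPath_reverse_iff, SimpleGraph.Walk.reverse_concat]
  exact SimpleGraph.Walk.IsPath.cons (by simpa using hp) (by simpa using hx)

/-- In a tree, no vertex is equidistant from the two endpoints of an edge. -/
lemma no_tie (hc : T.Connected) (ha : T.IsAcyclic) (hab : T.Adj a b) (x : V) :
    T.dist x a ≠ T.dist x b := by
  intro heq
  obtain ⟨R, hRp, hRl⟩ := hc.exists_path_of_dist x a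
  have hbR : b ∉ R.support := by
    intro hb
    have := mem_support_dist R hb
    rw [hRl] at this
    have h1 : 1 ≤ T.dist b a := by
      have : T.dist b a ≠ 0 := by
        intro h0
        exact hab.ne ((hc.dist_eq_zero_iff).mp h0).symm
      omega
    have h2 : T.dist x a ≤ T.dist x b := by omega
    omega
  have hS : (R.concat hab).IsPath := isPath_concat hRp hab hbR
  obtain ⟨Q, hQp, hQl⟩ := hc.exists_path_of_dist x b
  have huniq : (⟨R.concat hab, hS⟩ : T.Path x b) = ⟨Q, hQp⟩ := ha.path_unique _ _
  have hlen : (R.concat hab).length = Q.length := by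
    rw [show (R.concat hab) = Q from congrArg Subtype.val huniq]
  rw [SimpleGraph.Walk.length_concat, hRl, hQl, heq] at hlen
  omega

lemma adj_dist_cases (hc : T.Connected) (ha : T.IsAcyclic) (hab : T.Adj a b) (x : V) :
    T.dist x b = T.dist x a + 1 ∨ T.dist x a = T.dist x b + 1 := by
  have h1 : T.dist x b ≤ T.dist x a + T.dist a b := hc.dist_triangle
  have h2 : T.dist x a ≤ T.dist x b + T.dist b a := hc.dist_triangle
  have e1 := adj_dist_le_one hab
  have e2 := adj_dist_le_one hab.symm
  have := no_tie hc ha hab x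
  omega

/-- crossing an edge of a tree: adjacent vertices strictly on opposite sides of an edge
must be the endpoints of the edge itself. -/
lemma crossing (hc : T.Connected) (ha : T.IsAcyclic) (hab : T.Adj a b) (hxz : T.Adj x z)
    (hx : T.dist x a = T.dist x b + 1) (hz : T.dist z b = T.dist z a + 1) : x = b := by
  have hxz1 : T.dist x z ≤ 1 := adj_dist_le_one hxz
  have t1 : T.dist x a ≤ T.dist x z + T.dist z a := hc.dist_triangle
  have t2 : T.dist z b ≤ T.dist z x + T.dist x b := hc.dist_triangle
  have hdc : T.dist z x = T.dist x z := SimpleGraph.dist_comm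
  have heq : T.dist x b = T.dist z a := by omega
  by_contra hne
  have ht : 1 ≤ T.dist x b := by
    have : T.dist x b ≠ 0 := fun h0 => hne ((hc.dist_eq_zero_iff).mp h0)
    omega
  set t := T.dist x b with htdef
  obtain ⟨R, hRp, hRl⟩ := hc.exists_path_of_dist x b
  obtain ⟨R', hR'p, hR'l⟩ := hc.exists_path_of_dist z a
  have hzR : z ∉ R.support := by
    intro hmem
    have := mem_support_dist (T := T) R hmem
    rw [hRl] at this
    have hzx : 1 ≤ T.dist x z := by
      have : T.dist x z ≠ 0 := fun h0 => hxz.ne ((hc.dist_eq_zero_iff).mp h0)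
      omega
    omega
  have haR : a ∉ R.support := by
    intro hmem
    have := mem_support_dist (T := T) R hmem
    rw [hRl] at this
    have h1 : 1 ≤ T.dist a b := by
      have : T.dist a b ≠ 0 := fun h0 => hab.ne ((hc.dist_eq_zero_iff).mp h0)
      omega
    omega
  have hxR' : x ∉ R'.support := by
    intro hmem
    have := mem_support_dist (T := T) R' hmem
    rw [hR'l] at this
    have hzx : 1 ≤ T.dist z x := by
      have : T.dist z x ≠ 0 := fun h0 => hxz.ne ((hc.dist_eq_zero_iff).mp h0).symm
      omega
    omega
  have hS : (R.concat hab.symm).IsPath := isPath_concat hRp hab.symm haR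
  have hQ : (SimpleGraph.Walk.cons hxz R').IsPath := hR'p.cons hxR'
  have huniq : (⟨R.concat hab.symm, hS⟩ : T.Path x a) = ⟨SimpleGraph.Walk.cons hxz R', hQ⟩ :=
    ha.path_unique _ _
  have hsupp : (R.concat hab.symm).support = (SimpleGraph.Walk.cons hxz R').support := by
    rw [show (R.concat hab.symm) = SimpleGraph.Walk.cons hxz R' from congrArg Subtype.val huniq]
  have hzmem : z ∈ (R.concat hab.symm).support := by
    rw [hsupp, SimpleGraph.Walk.support_cons]
    exact List.mem_cons_of_mem _ R'.start_mem_support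
  rw [SimpleGraph.Walk.support_concat] at hzmem
  rcases List.mem_append.mp hzmem with h | h
  · exact hzR h
  · have : z = a := by simpa using h
    subst this
    simp [SimpleGraph.dist_self] at hz
    omega

/-- Main side lemma: if `x` is strictly on `b`'s side of the edge `ab` and `z` strictly
on `a`'s side, then `d(x,z) = d(x,b) + 1 + d(a,z)`. -/
lemma side (hc : T.Connected) (ha : T.IsAcyclic) (hab : T.Adj a b) :
    ∀ k x z, T.dist x z = k → T.dist x a = T.dist x b + 1 → T.dist z b = T.dist z a + 1 →
      T.dist x z = T.dist x b + 1 + T.dist a z := by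
  intro k
  induction k using Nat.strong_induction_on with
  | _ k IH =>
    intro x z hk hx hz
    have hne : x ≠ z := by
      rintro rfl; omega
    have hkpos : 1 ≤ k := by
      have : T.dist x z ≠ 0 := fun h0 => hne ((hc.dist_eq_zero_iff).mp h0)
      omega
    obtain ⟨p, hpl⟩ := hc.exists_walk_length_eq_dist x z
    set x' := p.getVert 1 with hx'def
    have hadj : T.Adj x x' := by
      have := p.adj_getVert_succ (i := 0) (by omega)
      simpa using this
    have hd1 : T.dist x' z = k - 1 := by
      have hle : T.dist x' z ≤ k - 1 := by
        have := dist_getVert_le' (T := T) p 1 (by omega)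
        rwa [hpl, hk] at this
      have hge : k ≤ 1 + T.dist x' z := by
        calc k = T.dist x z := hk.symm
          _ ≤ T.dist x x' + T.dist x' z := hc.dist_triangle
          _ ≤ 1 + T.dist x' z := by have := adj_dist_le_one hadj; omega
      omega
    rcases adj_dist_cases hc ha hab x' with hcase | hcase
    · have hxb : x = b := crossing hc ha hab hadj hx hcase
      have e1 : T.dist x z = T.dist z b := by rw [hxb, SimpleGraph.dist_comm]
      have e2 : T.dist x b = 0 := by rw [hxb, SimpleGraph.dist_self]
      have e3 : T.dist a z = T.dist z a := SimpleGraph.dist_comm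
      omega
    · have hrec := IH (k-1) (by omega) x' z hd1 hcase hz
      have hxx'b : T.dist x b ≤ T.dist x x' + T.dist x' b := hc.dist_triangle
      have hxx'1 : T.dist x x' ≤ 1 := adj_dist_le_one hadj
      have hub : T.dist x z ≤ T.dist x a + T.dist a z := hc.dist_triangle
      omega


lemma arith1 (d m s : ℤ) (hchain : (d-1)*d + 2*d*(m+1) + 2*m ≤ s*s + s)
    (hsd : s + d ≤ m) (hs1 : 1 ≤ s) (hd1 : 1 ≤ d) (hm2 : 2 ≤ m) :
    d*(4*m+2) + m + 2 ≤ m*m := by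
  have hfirst : d * (4*m+2) + m ≤ m*m := by
    nlinarith [hchain, hsd, hs1, hd1,
      mul_le_mul hsd hsd (by linarith) (by linarith : (0:ℤ) ≤ m)]
  by_contra hcon
  push_neg at hcon
  set r : ℤ := m*m - m - d*(4*m+2) with hr
  have hr0 : 0 ≤ r := by omega
  have hr1 : r ≤ 1 := by omega
  have hkey : (2*m+1) * (2*m - 3 - 8*d) = 4*r - 3 := by rw [hr]; ring
  have h5 : (5:ℤ) ≤ 2*m+1 := by linarith
  rcases lt_trichotomy (2*m - 3 - 8*d) 0 with hK | hK | hK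
  · have : (2*m+1) * (2*m - 3 - 8*d) ≤ -(2*m+1) := by nlinarith
    omega
  · rw [hK, mul_zero] at hkey; omega
  · have : (2*m+1) ≤ (2*m+1) * (2*m - 3 - 8*d) := by nlinarith
    omega

end TreeAux


open TreeAux

theorem stmt7 {V : Type*} [Fintype V] (T : SimpleGraph V) (hT : T.IsTree)
    (heven : Even (Fintype.card V)) (hn : 4 ≤ Fintype.card V) :
    ∃ v u : V, (∀ x, ww T v ≤ ww T x) ∧ (∀ x, wW T u ≤ wW T x) ∧
      T.dist v u ≤ (Fintype.card V ^ 2 - 2 * Fintype.card V - 8) / (8 * Fintype.card V + 8) := by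
  classical
  have hc : T.Connected := hT.isConnected
  have ha : T.IsAcyclic := hT.IsAcyclic
  have huniv : (Finset.univ : Finset V).Nonempty := by
    rw [← Finset.card_pos, Finset.card_univ]; omega
  obtain ⟨v, -, hv⟩ := Finset.exists_min_image Finset.univ (ww T) huniv
  have hv' : ∀ x, ww T v ≤ ww T x := fun x => hv x (Finset.mem_univ x)
  obtain ⟨u0, -, hu0⟩ := Finset.exists_min_image Finset.univ (wW T) huniv
  set C : Finset V := Finset.univ.filter (fun z => ∀ x, wW T z ≤ wW T x) with hC
  have hCne : C.Nonempty := ⟨u0, by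
    simp only [hC, Finset.mem_filter, Finset.mem_univ, true_and]
    exact fun x => hu0 x (Finset.mem_univ x)⟩
  obtain ⟨u, huC, hu⟩ := Finset.exists_min_image C (fun z => T.dist v z) hCne
  have huMin : ∀ x, wW T u ≤ wW T x := by
    rw [hC, Finset.mem_filter] at huC; exact huC.2
  refine ⟨v, u, hv', huMin, ?_⟩
  set n := Fintype.card V with hnn
  set d := T.dist v u with hd
  rcases Nat.eq_zero_or_pos d with hd0 | hdpos
  · rw [hd0]; exact Nat.zero_le _
  obtain ⟨m, hm⟩ := heven
  have hm2 : 2 ≤ m := by omega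
  -- the geodesic
  obtain ⟨p, hpl⟩ := hc.exists_walk_length_eq_dist v u
  rw [← hd] at hpl
  have hgv : ∀ j, j ≤ d → T.dist v (p.getVert j) = j ∧ T.dist (p.getVert j) u = d - j := by
    intro j hj
    have l1 := dist_getVert_le hc p j
    have l2 := dist_getVert_le' p j (by omega)
    rw [hpl] at l2
    have tri : T.dist v u ≤ T.dist v (p.getVert j) + T.dist (p.getVert j) u := hc.dist_triangle
    rw [← hd] at tri
    constructor <;> omega
  set y := p.getVert 1 with hy
  set w := p.getVert (d-1) with hw
  have hyadj : T.Adj v y := by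
    have := p.adj_getVert_succ (i := 0) (by omega)
    simpa using this
  have hwadj : T.Adj w u := by
    have h2 := p.adj_getVert_succ (i := d-1) (by omega)
    have hgl : p.getVert (d-1+1) = u := by
      rw [show d-1+1 = d by omega, ← hpl]; exact p.getVert_length
    rw [hgl] at h2; exact h2
  have hyv : T.dist v y = 1 := (hgv 1 (by omega)).1
  have hyu0 : T.dist y u = d - 1 := (hgv 1 (by omega)).2
  have hwv : T.dist v w = d - 1 := (hgv (d-1) (by omega)).1
  have hwu : T.dist w u = 1 := by
    have h2 : T.dist w u = d - (d-1) := (hgv (d-1) (by omega)).2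
    omega
  set P0 : Finset V := Finset.univ.filter (fun x => T.dist x u = T.dist x v + d) with hP0
  set Pd : Finset V := Finset.univ.filter (fun x => T.dist x v = T.dist x u + d) with hPd
  set P0c : Finset V := Finset.univ.filter (fun x => ¬ (T.dist x u = T.dist x v + d)) with hP0c
  have hmemP0 : ∀ x, x ∈ P0 ↔ T.dist x u = T.dist x v + d := by
    intro x; rw [hP0, Finset.mem_filter]; simp
  have hmemPd : ∀ x, x ∈ Pd ↔ T.dist x v = T.dist x u + d := by
    intro x; rw [hPd, Finset.mem_filter]; simp
  have hmemP0c : ∀ x, x ∈ P0c ↔ ¬ (T.dist x u = T.dist x v + d) := by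
    intro x; rw [hP0c, Finset.mem_filter]; simp
  -- ==================== Step 7a : card Pd ≥ m + 1 ====================
  set Pdc : Finset V := Finset.univ.filter (fun x => ¬ (T.dist x v = T.dist x u + d)) with hPdc
  have hmemPdc : ∀ x, x ∈ Pdc ↔ ¬ (T.dist x v = T.dist x u + d) := by
    intro x; rw [hPdc, Finset.mem_filter]; simp
  have hPdcard : m + 1 ≤ Pd.card := by
    have hwWlt : wW T u < wW T w := by
      have hwnotC : ¬ (∀ x, wW T w ≤ wW T x) := by
        intro hall
        have hwC : w ∈ C := by
          rw [hC, Finset.mem_filter]; exact ⟨Finset.mem_univ _, hall⟩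
        have h1 := hu w hwC
        rw [hwv] at h1
        omega
      push_neg at hwnotC
      obtain ⟨x, hx⟩ := hwnotC
      exact lt_of_le_of_lt (huMin x) hx
    have hin : ∀ x ∈ Pd, T.dist x w = T.dist x u + 1 := by
      intro x hx
      rw [hmemPd] at hx
      have t1 : T.dist x w ≤ T.dist x u + T.dist u w := hc.dist_triangle
      have t2 : T.dist x v ≤ T.dist x w + T.dist w v := hc.dist_triangle
      have e1 : T.dist u w = T.dist w u := SimpleGraph.dist_comm
      have e2 : T.dist w v = T.dist v w := SimpleGraph.dist_comm
      omega
    have hout : ∀ x ∈ Pdc, T.dist x w + 1 = T.dist x u := by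
      intro x hx
      rw [hmemPdc] at hx
      rcases adj_dist_cases hc ha hwadj x with hcse | hcse
      · omega
      · exfalso
        apply hx
        have hzside : T.dist v u = T.dist v w + 1 := by rw [← hd]; omega
        have hres := side hc ha hwadj (T.dist x v) x v rfl hcse hzside
        have e2 : T.dist w v = T.dist v w := SimpleGraph.dist_comm
        omega
    have hsplitw := Finset.sum_filter_add_sum_filter_not Finset.univ
      (fun x => T.dist x v = T.dist x u + d) (fun x => T.dist x w)
    have hsplitu := Finset.sum_filter_add_sum_filter_not Finset.univ
      (fun x => T.dist x v = T.dist x u + d) (fun x => T.dist x u)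
    rw [← hPd, ← hPdc] at hsplitw hsplitu
    have hA : ∑ x ∈ Pd, T.dist x w = ∑ x ∈ Pd, T.dist x u + Pd.card := by
      rw [Finset.sum_congr rfl hin, Finset.sum_add_distrib]
      simp
    have hB : ∑ x ∈ Pdc, T.dist x w + Pdc.card = ∑ x ∈ Pdc, T.dist x u := by
      have : ∑ x ∈ Pdc, (T.dist x w + 1) = ∑ x ∈ Pdc, T.dist x u :=
        Finset.sum_congr rfl hout
      rw [Finset.sum_add_distrib] at this
      simpa using this
    have hcards : Pd.card + Pdc.card = n := by
      have := Finset.card_filter_add_card_filter_not (s := Finset.univ)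
        (p := fun x => T.dist x v = T.dist x u + d)
      rw [← hPd, ← hPdc, Finset.card_univ, ← hnn] at this
      exact this
    have hWu : (∑ x : V, T.dist x u) < ∑ x : V, T.dist x w := hwWlt
    omega
  -- ==================== Step 7b : ww comparison at y ====================
  have hin0 : ∀ x ∈ P0, T.dist x y = T.dist x v + 1 := by
    intro x hx
    rw [hmemP0] at hx
    have t1 : T.dist x y ≤ T.dist x v + T.dist v y := hc.dist_triangle
    have t2 : T.dist x u ≤ T.dist x y + T.dist y u := hc.dist_triangle
    omega
  have hout0 : ∀ x ∈ P0c, T.dist x y + 1 = T.dist x v := by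
    intro x hx
    rw [hmemP0c] at hx
    rcases adj_dist_cases hc ha hyadj.symm x with hcse | hcse
    · omega
    · exfalso
      apply hx
      have hzside : T.dist u v = T.dist u y + 1 := by
        have e1 : T.dist u v = T.dist v u := SimpleGraph.dist_comm
        have e2 : T.dist u y = T.dist y u := SimpleGraph.dist_comm
        rw [e1, e2, ← hd]
        omega
      have hres := side hc ha hyadj.symm (T.dist x u) x u rfl hcse hzside
      omega
  have key2 : ∑ x ∈ P0c, 2*T.dist x v ≤ ∑ x ∈ P0, (2*T.dist x v + 2) := by
    have hsplity := Finset.sum_filter_add_sum_filter_not Finset.univ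
      (fun x => T.dist x u = T.dist x v + d) (fun x => (T.dist x y)^2 + T.dist x y)
    have hsplitv := Finset.sum_filter_add_sum_filter_not Finset.univ
      (fun x => T.dist x u = T.dist x v + d) (fun x => (T.dist x v)^2 + T.dist x v)
    rw [← hP0, ← hP0c] at hsplity hsplitv
    have hA2 : ∑ x ∈ P0, ((T.dist x y)^2 + T.dist x y)
        = ∑ x ∈ P0, ((T.dist x v)^2 + T.dist x v) + ∑ x ∈ P0, (2*T.dist x v + 2) := by
      rw [← Finset.sum_add_distrib]
      apply Finset.sum_congr rfl
      intro x hx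
      rw [hin0 x hx]; ring
    have hB2 : ∑ x ∈ P0c, ((T.dist x y)^2 + T.dist x y) + ∑ x ∈ P0c, 2*T.dist x v
        = ∑ x ∈ P0c, ((T.dist x v)^2 + T.dist x v) := by
      rw [← Finset.sum_add_distrib]
      apply Finset.sum_congr rfl
      intro x hx
      rw [← hout0 x hx]; ring
    have hWW : (∑ x : V, ((T.dist x v)^2 + T.dist x v))
        ≤ ∑ x : V, ((T.dist x y)^2 + T.dist x y) := hv' y
    omega
  -- ==================== Step 7c : lower bound for the left side ====================
  set Q : Finset V := (Finset.range (d-1)).image (fun j => p.getVert (j+1)) with hQ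
  have hQv : ∀ j, j ∈ Finset.range (d-1) →
      T.dist (p.getVert (j+1)) v = j + 1 ∧ T.dist (p.getVert (j+1)) u = d - (j+1) := by
    intro j hj
    rw [Finset.mem_range] at hj
    have h1 := hgv (j+1) (by omega)
    have e : T.dist (p.getVert (j+1)) v = T.dist v (p.getVert (j+1)) := SimpleGraph.dist_comm
    exact ⟨by omega, h1.2⟩
  have hQinj : Set.InjOn (fun j => p.getVert (j+1)) (Finset.range (d-1)) := by
    intro j1 h1 j2 h2 heq
    have e1 := (hQv j1 (by simpa using h1)).1
    have e2 := (hQv j2 (by simpa using h2)).1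
    simp only at heq
    rw [heq] at e1
    omega
  have hQcard : Q.card = d - 1 := by
    rw [hQ, Finset.card_image_of_injOn hQinj, Finset.card_range]
  have hQmem : ∀ q ∈ Q, ∃ j ∈ Finset.range (d-1), p.getVert (j+1) = q := by
    intro q hq
    rw [hQ, Finset.mem_image] at hq
    obtain ⟨j, hj, hjq⟩ := hq
    exact ⟨j, hj, hjq⟩
  have hQP0c : Q ⊆ P0c := by
    intro q hq
    obtain ⟨j, hj, rfl⟩ := hQmem q hq
    have h1 := hQv j hj
    rw [Finset.mem_range] at hj
    rw [hmemP0c]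
    omega
  have hPdP0c : Pd ⊆ P0c := by
    intro x hx
    rw [hmemPd] at hx
    rw [hmemP0c]
    omega
  have hQPddisj : Disjoint Q Pd := by
    rw [Finset.disjoint_left]
    intro q hq hqPd
    obtain ⟨j, hj, rfl⟩ := hQmem q hq
    have h1 := hQv j hj
    rw [Finset.mem_range] at hj
    rw [hmemPd] at hqPd
    omega
  have hsumQ : ∑ x ∈ Q, 2*T.dist x v = (d-1)*d := by
    rw [hQ, Finset.sum_image hQinj]
    have : ∀ j ∈ Finset.range (d-1), 2*T.dist (p.getVert (j+1)) v = 2*(j+1) := by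
      intro j hj
      rw [(hQv j hj).1]
    rw [Finset.sum_congr rfl this, gauss2]
    congr 1
    omega
  have huPd : u ∈ Pd := by
    rw [hmemPd]
    have e1 : T.dist u v = T.dist v u := SimpleGraph.dist_comm
    have e2 : T.dist u u = 0 := SimpleGraph.dist_self
    omega
  have hsumPd : 2*d*Pd.card + (2*Pd.card - 2) ≤ ∑ x ∈ Pd, 2*T.dist x v := by
    have hcong : ∑ x ∈ Pd, 2*T.dist x v = ∑ x ∈ Pd, (2*T.dist x u + 2*d) := by
      apply Finset.sum_congr rfl
      intro x hx
      rw [hmemPd] at hx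
      omega
    have hsum2 : ∑ x ∈ Pd, (2*T.dist x u + 2*d) = ∑ x ∈ Pd, 2*T.dist x u + 2*d*Pd.card := by
      rw [Finset.sum_add_distrib]
      simp [mul_comm]
    have herase : 2*(Pd.card - 1) ≤ ∑ x ∈ Pd, 2*T.dist x u := by
      have hsub : Pd.erase u ⊆ Pd := Finset.erase_subset _ _
      have hle : ∀ x ∈ Pd.erase u, 2 ≤ 2*T.dist x u := by
        intro x hx
        have hxu : x ≠ u := Finset.ne_of_mem_erase hx
        have : T.dist x u ≠ 0 := fun h0 => hxu ((hc.dist_eq_zero_iff).mp h0)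
        omega
      calc 2*(Pd.card - 1) = (Pd.erase u).card * 2 := by
            rw [Finset.card_erase_of_mem huPd]; ring
        _ ≤ ∑ x ∈ Pd.erase u, 2*T.dist x u := by
            have := Finset.card_nsmul_le_sum (Pd.erase u) (fun x => 2*T.dist x u) 2 hle
            simpa [smul_eq_mul] using this
        _ ≤ ∑ x ∈ Pd, 2*T.dist x u := Finset.sum_le_sum_of_subset hsub
    omega
  have hlower : (d-1)*d + 2*d*Pd.card + (2*Pd.card - 2) ≤ ∑ x ∈ P0c, 2*T.dist x v := by
    have hsub : Q ∪ Pd ⊆ P0c := Finset.union_subset hQP0c hPdP0c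
    calc (d-1)*d + 2*d*Pd.card + (2*Pd.card - 2)
        ≤ ∑ x ∈ Q, 2*T.dist x v + ∑ x ∈ Pd, 2*T.dist x v := by
          rw [hsumQ]; omega
      _ = ∑ x ∈ Q ∪ Pd, 2*T.dist x v := (Finset.sum_union hQPddisj).symm
      _ ≤ ∑ x ∈ P0c, 2*T.dist x v := Finset.sum_le_sum_of_subset hsub
  -- ==================== Step 7d : upper bound via counting ====================
  have hstep : ∀ x ∈ P0, ∀ r, T.dist x v = r + 1 → ∃ z ∈ P0, T.dist z v = r := by
    intro x hx r hr
    rw [hmemP0] at hx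
    obtain ⟨q, hql⟩ := hc.exists_walk_length_eq_dist x v
    set z := q.getVert 1 with hz
    have hqlen : q.length = r + 1 := by rw [hql, hr]
    have hadjz : T.Adj x z := by
      have := q.adj_getVert_succ (i := 0) (by omega)
      simpa using this
    have hzv : T.dist z v = r := by
      have hle : T.dist z v ≤ r := by
        have := dist_getVert_le' q 1 (by omega)
        rw [hqlen] at this
        simpa using this
      have t1 : T.dist x v ≤ T.dist x z + T.dist z v := hc.dist_triangle
      have e1 : T.dist x z ≤ 1 := adj_dist_le_one hadjz
      omega
    have hzu : T.dist z u = T.dist z v + d := by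
      have t1 : T.dist z u ≤ T.dist z v + T.dist v u := hc.dist_triangle
      have t2 : T.dist x u ≤ T.dist x z + T.dist z u := hc.dist_triangle
      have e1 : T.dist x z ≤ 1 := adj_dist_le_one hadjz
      rw [← hd] at t1
      omega
    exact ⟨z, by rw [hmemP0]; exact hzu, hzv⟩
  have hcount : 2 * ∑ x ∈ P0, T.dist x v + P0.card ≤ P0.card * P0.card :=
    counting P0 (fun x => T.dist x v)
      (exists_eq_of_le P0 (fun x => T.dist x v) hstep)
  have hupper : ∑ x ∈ P0, (2*T.dist x v + 2) = 2 * ∑ x ∈ P0, T.dist x v + 2 * P0.card := by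
    rw [Finset.sum_add_distrib, Finset.mul_sum]
    simp [mul_comm]
  -- ==================== Step 7e : cardinality constraint ====================
  have hP0Qdisj : Disjoint P0 Q := by
    rw [Finset.disjoint_left]
    intro x hx hxQ
    exact (hmemP0c x).mp (hQP0c hxQ) ((hmemP0 x).mp hx)
  have hP0Pddisj : Disjoint P0 Pd := by
    rw [Finset.disjoint_left]
    intro x hx hxPd
    exact (hmemP0c x).mp (hPdP0c hxPd) ((hmemP0 x).mp hx)
  have hcards2 : P0.card + (d-1) + Pd.card ≤ n := by
    have hdisj2 : Disjoint (P0 ∪ Q) Pd := by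
      rw [Finset.disjoint_union_left]
      exact ⟨hP0Pddisj, hQPddisj⟩
    calc P0.card + (d-1) + Pd.card
        = (P0 ∪ Q ∪ Pd).card := by
          rw [Finset.card_union_of_disjoint hdisj2, Finset.card_union_of_disjoint hP0Qdisj,
            hQcard]
      _ ≤ (Finset.univ : Finset V).card := Finset.card_le_univ _
      _ = n := by rw [Finset.card_univ]
  -- ==================== final arithmetic ====================
  have hsd : P0.card + d ≤ m := by omega
  have hv0 : v ∈ P0 := by
    rw [hmemP0]
    have e1 : T.dist v v = 0 := SimpleGraph.dist_self
    rw [← hd]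
    omega
  have hs1 : 1 ≤ P0.card := Finset.card_pos.mpr ⟨v, hv0⟩
  have hchain : (d-1)*d + 2*d*(m+1) + 2*m ≤ P0.card * P0.card + P0.card := by
    have h1 : (d-1)*d + 2*d*Pd.card + (2*Pd.card - 2) ≤ P0.card * P0.card + P0.card := by
      calc (d-1)*d + 2*d*Pd.card + (2*Pd.card - 2) ≤ ∑ x ∈ P0c, 2*T.dist x v := hlower
        _ ≤ ∑ x ∈ P0, (2*T.dist x v + 2) := key2
        _ = 2 * ∑ x ∈ P0, T.dist x v + 2 * P0.card := hupper
        _ ≤ P0.card * P0.card + P0.card := by omega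
    have h2 : 2*d*(m+1) ≤ 2*d*Pd.card := by
      apply Nat.mul_le_mul_left
      exact hPdcard
    omega
  -- now in ℤ
  have hZ : (d : ℤ) * (4*m+2) + m + 2 ≤ (m:ℤ)*m := by
    have hchainZ : ((d:ℤ)-1)*d + 2*d*(m+1) + 2*m ≤ (P0.card : ℤ) * P0.card + P0.card := by
      have e2 : ((d:ℤ)-1)*(d:ℤ) = ((d-1 : ℕ) : ℤ)*(d : ℤ) := by
        push_cast [Nat.cast_sub (by omega : 1 ≤ d)]
        ring
      rw [e2]
      exact_mod_cast hchain
    exact arith1 d m P0.card hchainZ (by exact_mod_cast hsd) (by exact_mod_cast hs1)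
      (by exact_mod_cast hdpos) (by exact_mod_cast hm2)
  -- back to ℕ and the division goal
  have hfin : d * (4*m+2) + m + 2 ≤ m*m := by exact_mod_cast hZ
  have hL : 0 < 8*n+8 := by omega
  rw [Nat.le_div_iff_mul_le hL]
  have e1 : n^2 = 4*(m*m) := by rw [hm]; ring
  have e2 : d*(8*n+8) = 4*(d*(4*m+2)) := by rw [hm]; ring
  rw [Nat.sub_sub, e1, e2]
  apply Nat.le_sub_of_add_le
  have h2n : 2*n + 8 = 4*m + 8 := by omega
  rw [h2n]
  linarith [hfin]
end

section
/- Let T be a tree on n vertices with leaves u and w maximizing the ratio ww_T(w)/ww_T(u) over all trees on n vertices and pairs of leaves. Then every internal vertex on the path from u to w, except possibly the neighbor of u, has degree 2 in T. -/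
open Finset
open scoped Classical

namespace StmtAux

open SimpleGraph Walk

variable {V : Type*} {G : SimpleGraph V}

lemma getVert_mem_support' {a b : V} (q : G.Walk a b) {n : ℕ} (h : n ≤ q.length) :
    q.getVert n ∈ q.support :=
  Walk.mem_support_iff_exists_getVert.2 ⟨n, rfl, h⟩

lemma getVert_ne {a b : V} (q : G.Walk a b) :
    q.IsPath → ∀ {j k : ℕ}, k ≤ q.length → j < k → q.getVert j ≠ q.getVert k := by
  induction q with
  | nil => intro _ j k hk hjk; simp [Walk.length_nil] at hk; omega
  | cons h q ih =>
    intro hq j k hk hjk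
    rw [Walk.cons_isPath_iff] at hq
    match j, k with
    | 0, k + 1 =>
      intro heq
      rw [Walk.getVert_cons_succ] at heq
      simp only [Walk.getVert_zero] at heq
      exact hq.2 (heq ▸ getVert_mem_support' q (by simpa [Walk.length_cons] using Nat.le_of_succ_le_succ hk))
    | j + 1, k + 1 =>
      rw [Walk.getVert_cons_succ, Walk.getVert_cons_succ]
      exact ih hq.1 (by simpa [Walk.length_cons] using Nat.le_of_succ_le_succ hk) (by omega)

lemma getVert_inj {a b : V} (q : G.Walk a b) (hq : q.IsPath) {j k : ℕ}
    (hj : j ≤ q.length) (hk : k ≤ q.length) (heq : q.getVert j = q.getVert k) : j = k := by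
  rcases lt_trichotomy j k with h | h | h
  · exact absurd heq (getVert_ne q hq hk h)
  · exact h
  · exact absurd heq.symm (getVert_ne q hq hj h)

lemma exists_getVert_of_mem_edges {a b : V} (q : G.Walk a b) {e : Sym2 V} (he : e ∈ q.edges) :
    ∃ j, j < q.length ∧ e = s(q.getVert j, q.getVert (j + 1)) := by
  induction q with
  | nil => simp at he
  | cons h q ih =>
    rw [Walk.edges_cons, List.mem_cons] at he
    rcases he with rfl | he
    · refine ⟨0, by simp [Walk.length_cons], ?_⟩
      simp [Walk.getVert_cons_succ, Walk.getVert_zero]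
    · obtain ⟨j, hj, hej⟩ := ih he
      refine ⟨j + 1, by simp [Walk.length_cons]; omega, ?_⟩
      simpa [Walk.getVert_cons_succ] using hej

lemma length_eq_dist (hG : G.IsTree) {a b : V} (q : G.Walk a b) (hq : q.IsPath) :
    q.length = G.dist a b := by
  obtain ⟨r, hr, hrl⟩ := hG.isConnected.exists_path_of_dist a b
  rw [(hG.existsUnique_path a b).unique hq hr, hrl]

lemma IsPath.append' {a b c : V} {p : G.Walk a b} {q : G.Walk b c} (hp : p.IsPath)
    (hq : q.IsPath) (hd : ∀ y ∈ p.support, y ∈ q.support → y = b) : (p.append q).IsPath := by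
  rw [Walk.isPath_def, Walk.support_append]
  have hqn := hq.support_nodup
  rw [q.support_eq_cons] at hqn
  rw [List.nodup_cons] at hqn
  refine List.Nodup.append hp.support_nodup hqn.2 ?_
  intro y hy1 hy2
  have hy2' : y ∈ q.support := List.mem_of_mem_tail hy2
  have := hd y hy1 hy2'
  subst this
  exact hqn.1 hy2

lemma sq_add_mono {a b : ℕ} (h : a ≤ b) : a ^ 2 + a ≤ b ^ 2 + b :=
  Nat.add_le_add (Nat.pow_le_pow_left h 2) h

lemma sq_add_strict_mono {a b : ℕ} (h : a < b) : a ^ 2 + a < b ^ 2 + b :=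
  Nat.add_lt_add_of_le_of_lt (Nat.pow_le_pow_left h.le 2) h

end StmtAux

open StmtAux SimpleGraph

theorem stmt8 {V : Type*} [Fintype V] (T : SimpleGraph V) (hT : T.IsTree)
    (u w : V) (hu : T.degree u = 1) (hw : T.degree w = 1)
    (hmax : ∀ (T' : SimpleGraph V), T'.IsTree → ∀ u' w' : V,
      T'.degree u' = 1 → T'.degree w' = 1 →
      (ww T' w' : ℚ) / (ww T' u') ≤ (ww T w : ℚ) / (ww T u))
    (p : T.Walk u w) (hp : p.IsPath) :
    ∀ i, 2 ≤ i → i ≤ p.length - 1 → T.degree (p.getVert i) = 2 := by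
  intro i hi2 hiL
  by_contra hdeg
  have hL3 : 3 ≤ p.length := by omega
  have hiL' : i + 1 ≤ p.length := by omega
  set v := p.getVert i with hvdef
  set p1 := p.getVert 1 with hp1def
  have hu0 : p.getVert 0 = u := p.getVert_zero
  have hwL : p.getVert p.length = w := p.getVert_length
  -- basic adjacencies along p
  have hadj_u_p1 : T.Adj u p1 := by
    have := p.adj_getVert_succ (show 0 < p.length by omega)
    rwa [hu0] at this
  have ha : T.Adj (p.getVert (i - 1)) v := by
    have := p.adj_getVert_succ (show i - 1 < p.length by omega)
    rwa [show i - 1 + 1 = i by omega] at this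
  have hc : T.Adj v (p.getVert (i + 1)) := p.adj_getVert_succ (by omega)
  -- injectivity consequences
  have hinj := fun {j k : ℕ} (hj : j ≤ p.length) (hk : k ≤ p.length) =>
    getVert_inj p hp hj hk
  have hvu : v ≠ u := fun h => by
    have := hinj (by omega) (by omega) (h.trans hu0.symm); omega
  have hvp1 : v ≠ p1 := fun h => by
    have := hinj (by omega) (by omega) h; omega
  have hvw : v ≠ w := fun h => by
    have := hinj (by omega) (le_refl _) (h.trans hwL.symm); omega
  have hwp1 : w ≠ p1 := fun h => by
    have := hinj (le_refl _) (by omega) (hwL.trans h); omega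
  have hup1 : u ≠ p1 := hadj_u_p1.ne
  have hac : p.getVert (i - 1) ≠ p.getVert (i + 1) := fun h => by
    have := hinj (by omega) (by omega) h; omega
  -- unique neighbor of u
  have huniq : ∀ z, T.Adj u z → z = p1 := by
    intro z hz
    have h1 : z ∈ T.neighborFinset u := (T.mem_neighborFinset u z).2 hz
    have h2 : p1 ∈ T.neighborFinset u := (T.mem_neighborFinset u p1).2 hadj_u_p1
    exact Finset.card_le_one.1 (le_of_eq hu) z h1 p1 h2
  -- find the extra neighbor x of v
  obtain ⟨x, hxadj, hxa, hxc⟩ :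
      ∃ x, T.Adj v x ∧ x ≠ p.getVert (i - 1) ∧ x ≠ p.getVert (i + 1) := by
    by_contra hcon
    push_neg at hcon
    have hsub : T.neighborFinset v ⊆ {p.getVert (i - 1), p.getVert (i + 1)} := by
      intro z hz
      have hz' := hcon z ((T.mem_neighborFinset v z).1 hz)
      by_cases h : z = p.getVert (i - 1)
      · simp [h]
      · simp [hz' h]
    have hcard : T.degree v ≤ 2 := by
      calc T.degree v ≤ ({p.getVert (i - 1), p.getVert (i + 1)} : Finset V).card :=
            Finset.card_le_card hsub
        _ = 2 := Finset.card_pair hac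
    have hcard2 : 2 ≤ T.degree v := by
      have h1 : p.getVert (i - 1) ∈ T.neighborFinset v := (T.mem_neighborFinset _ _).2 ha.symm
      have h2 : p.getVert (i + 1) ∈ T.neighborFinset v := (T.mem_neighborFinset _ _).2 hc
      have : ({p.getVert (i - 1), p.getVert (i + 1)} : Finset V) ⊆ T.neighborFinset v := by
        intro z hz
        rcases Finset.mem_insert.1 hz with rfl | hz
        · exact h1
        · rw [Finset.mem_singleton] at hz; exact hz ▸ h2
      calc (2 : ℕ) = ({p.getVert (i - 1), p.getVert (i + 1)} : Finset V).card :=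
            (Finset.card_pair hac).symm
        _ ≤ T.degree v := Finset.card_le_card this
    omega
  have hvx_ne : v ≠ x := hxadj.ne
  -- the graph with the edge v-x deleted
  set D := T \ SimpleGraph.fromEdgeSet {s(v, x)} with hDdef
  have hDadj : ∀ {y z : V}, D.Adj y z ↔ T.Adj y z ∧ s(y, z) ≠ s(v, x) := by
    intro y z
    show (T.deleteEdges {s(v, x)}).Adj y z ↔ _
    rw [SimpleGraph.deleteEdges_adj]
    simp
  have hDle : D ≤ T := sdiff_le
  have hDedge : D.edgeSet = T.edgeSet \ {s(v, x)} := by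
    show (T.deleteEdges {s(v, x)}).edgeSet = _
    rw [SimpleGraph.edgeSet_deleteEdges]
  -- v-x is a bridge
  have hbridge : ¬ D.Reachable v x := by
    have hb := (SimpleGraph.isAcyclic_iff_forall_adj_isBridge.mp hT.IsAcyclic) hxadj
    rw [SimpleGraph.isBridge_iff] at hb
    exact hb
  -- every vertex is reachable in D from v or from x
  have hstep : ∀ {y z : V}, T.Adj y z → (D.Reachable v y ∨ D.Reachable x y) →
      (D.Reachable v z ∨ D.Reachable x z) := by
    intro y z hyz hy
    by_cases he : s(y, z) = s(v, x)
    · rw [Sym2.eq_iff] at he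
      rcases he with ⟨h1, h2⟩ | ⟨h1, h2⟩
      · rw [h2]; exact Or.inr (Reachable.refl x)
      · rw [h2]; exact Or.inl (Reachable.refl v)
    · have hD' : D.Adj y z := hDadj.2 ⟨hyz, he⟩
      rcases hy with h | h
      · exact Or.inl (h.trans ⟨hD'.toWalk⟩)
      · exact Or.inr (h.trans ⟨hD'.toWalk⟩)
  have hwalkcover : ∀ {a z : V} (q : T.Walk a z),
      (D.Reachable v a ∨ D.Reachable x a) → (D.Reachable v z ∨ D.Reachable x z) := by
    intro a z q
    induction q with
    | nil => exact id
    | cons hyz q ih => exact fun ha' => ih (hstep hyz ha')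
  have hcover : ∀ z, D.Reachable v z ∨ D.Reachable x z := by
    intro z
    obtain ⟨q⟩ := hT.isConnected.preconnected v z
    exact hwalkcover q (Or.inl (Reachable.refl v))
  -- the path p avoids the edge v-x
  have hvx_not_in_p : s(v, x) ∉ p.edges := by
    intro hmem
    obtain ⟨j, hj, hej⟩ := exists_getVert_of_mem_edges p hmem
    rw [Sym2.eq_iff] at hej
    rcases hej with ⟨hv1, hx1⟩ | ⟨hv1, hx1⟩
    · have hij : i = j := hinj (by omega) (by omega) hv1
      refine hxc ?_
      rw [hx1]; congr 1; omega
    · have hij : i = j + 1 := hinj (by omega) (by omega) hv1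
      refine hxa ?_
      rw [hx1]; congr 1; omega
  have hpD : ∀ e ∈ p.edges, e ∈ D.edgeSet := by
    intro e he
    rw [hDedge]
    refine ⟨p.edges_subset_edgeSet he, ?_⟩
    intro h
    rw [Set.mem_singleton_iff] at h
    exact hvx_not_in_p (h ▸ he)
  -- all vertices of p are on the v-side
  have hA_of_support : ∀ y ∈ p.support, D.Reachable v y := by
    intro y hy
    set pD := p.transfer D hpD with hpDdef
    have hyD : y ∈ pD.support := by rw [hpDdef, Walk.support_transfer]; exact hy
    have hvD : v ∈ pD.support := by
      rw [hpDdef, Walk.support_transfer]; exact getVert_mem_support' p (by omega)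
    have h1 : D.Reachable u v := ⟨pD.takeUntil v hvD⟩
    have h2 : D.Reachable u y := ⟨pD.takeUntil y hyD⟩
    exact h1.symm.trans h2
  have hAu : D.Reachable v u := hA_of_support u p.start_mem_support
  have hAw : D.Reachable v w := hA_of_support w p.end_mem_support
  have hAp1 : D.Reachable v p1 := hA_of_support p1 (getVert_mem_support' p (by omega))
  have hAv : D.Reachable v v := Reachable.refl v
  have hdisj : ∀ {z : V}, D.Reachable v z → D.Reachable x z → False :=
    fun h1 h2 => hbridge (h1.trans h2.symm)
  have hne_p1x : p1 ≠ x := fun h => hbridge (h ▸ hAp1)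
  have hne_ux : u ≠ x := fun h => hbridge (h ▸ hAu)
  have hne_wx : w ≠ x := fun h => hbridge (h ▸ hAw)
  -- the new graph: delete edge v-x, add edge p1-x
  set T2 := D ⊔ SimpleGraph.fromEdgeSet {s(p1, x)} with hT2def
  have hT2adj : ∀ {y z : V}, T2.Adj y z ↔ D.Adj y z ∨ (s(y, z) = s(p1, x) ∧ y ≠ z) := by
    intro y z
    rw [hT2def, SimpleGraph.sup_adj, SimpleGraph.fromEdgeSet_adj, Set.mem_singleton_iff]
  have hDleT2 : D ≤ T2 := le_sup_left
  have hp1x : T2.Adj p1 x := hT2adj.2 (Or.inr ⟨rfl, hne_p1x⟩)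
  -- T2 is acyclic
  have hT2acyc : T2.IsAcyclic := by
    intro z c hc
    by_cases he : s(p1, x) ∈ c.edges
    · have hkey := SimpleGraph.adj_and_reachable_delete_edges_iff_exists_cycle.mpr ⟨z, c, hc, he⟩
      have hle2 : T2 \ SimpleGraph.fromEdgeSet {s(p1, x)} ≤ D := by
        intro y z' hyz
        rw [SimpleGraph.sdiff_adj] at hyz
        rcases hT2adj.1 hyz.1 with h | h
        · exact h
        · exact absurd ((SimpleGraph.fromEdgeSet_adj _).2 ⟨Set.mem_singleton_iff.2 h.1, h.2⟩) hyz.2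
      have hreach : D.Reachable p1 x := hkey.2.mono hle2
      exact hbridge (hAp1.trans hreach)
    · have hce : ∀ e ∈ c.edges, e ∈ T.edgeSet := by
        intro e hece
        have h1 := c.edges_subset_edgeSet hece
        rw [hT2def, SimpleGraph.edgeSet_sup] at h1
        rcases h1 with h1 | h1
        · exact SimpleGraph.edgeSet_mono hDle h1
        · rw [SimpleGraph.edgeSet_fromEdgeSet] at h1
          exact absurd (h1.1 ▸ hece) he
      exact hT.IsAcyclic (c.transfer T hce) (hc.transfer hce)
  -- T2 is connected
  have hT2reach : ∀ z, T2.Reachable v z := by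
    intro z
    rcases hcover z with h | h
    · exact h.mono hDleT2
    · exact ((hAp1.mono hDleT2).trans ⟨hp1x.toWalk⟩).trans (h.mono hDleT2)
  have hT2tree : T2.IsTree := by
    refine ⟨?_, hT2acyc⟩
    rw [SimpleGraph.connected_iff]
    exact ⟨fun y z => (hT2reach y).symm.trans (hT2reach z), ⟨u⟩⟩
  -- degrees of u and w in T2
  have hadj_iff : ∀ (t : V), t ≠ v → t ≠ x → t ≠ p1 → ∀ z, (T2.Adj t z ↔ T.Adj t z) := by
    intro t htv htx htp1 z
    rw [hT2adj]
    constructor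
    · rintro (h | ⟨he, -⟩)
      · exact (hDadj.1 h).1
      · exfalso
        rw [Sym2.eq_iff] at he
        rcases he with ⟨h1, -⟩ | ⟨h1, -⟩
        · exact htp1 h1
        · exact htx h1
    · intro h
      left
      refine hDadj.2 ⟨h, ?_⟩
      intro he
      rw [Sym2.eq_iff] at he
      rcases he with ⟨h1, -⟩ | ⟨h1, -⟩
      · exact htv h1
      · exact htx h1
  haveI : DecidableRel T2.Adj := Classical.decRel _
  have hdeg_eq : ∀ (t : V), t ≠ v → t ≠ x → t ≠ p1 → T2.degree t = T.degree t := by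
    intro t htv htx htp1
    unfold SimpleGraph.degree
    congr 1
    ext z
    rw [SimpleGraph.mem_neighborFinset, SimpleGraph.mem_neighborFinset]
    exact hadj_iff t htv htx htp1 z
  have hdegu2 : T2.degree u = 1 := by rw [hdeg_eq u (Ne.symm hvu) hne_ux hup1]; exact hu
  have hdegw2 : T2.degree w = 1 := by rw [hdeg_eq w (Ne.symm hvw) hne_wx hwp1]; exact hw
  -- distances between vertices on the v-side are unchanged
  have hAdist : ∀ {y z : V}, D.Reachable v y → D.Reachable v z → T2.dist y z = T.dist y z := by
    intro y z h1 h2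
    obtain ⟨q0⟩ := h1.symm.trans h2
    set P := q0.toPath with hPdef
    have e1 : ∀ e ∈ P.1.edges, e ∈ T.edgeSet :=
      fun e he' => SimpleGraph.edgeSet_mono hDle (Walk.edges_subset_edgeSet _ he')
    have e2 : ∀ e ∈ P.1.edges, e ∈ T2.edgeSet :=
      fun e he' => SimpleGraph.edgeSet_mono hDleT2 (Walk.edges_subset_edgeSet _ he')
    have l1 := length_eq_dist hT (P.1.transfer T e1) (P.2.transfer e1)
    have l2 := length_eq_dist hT2tree (P.1.transfer T2 e2) (P.2.transfer e2)
    rw [Walk.length_transfer] at l1 l2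
    rw [← l1, ← l2]
  -- paths on the v-side realizing T-distances
  have hpathA : ∀ {s t : V}, D.Reachable v s → D.Reachable v t →
      ∃ q : D.Walk s t, q.IsPath ∧ (∀ y ∈ q.support, D.Reachable v y) ∧ q.length = T.dist s t := by
    intro s t hs ht
    obtain ⟨q0⟩ := hs.symm.trans ht
    refine ⟨q0.toPath.1, q0.toPath.2, ?_, ?_⟩
    · intro y hy
      exact hs.trans ⟨q0.toPath.1.takeUntil y hy⟩
    · have e1 : ∀ e ∈ q0.toPath.1.edges, e ∈ T.edgeSet :=
        fun e he' => SimpleGraph.edgeSet_mono hDle (Walk.edges_subset_edgeSet _ he')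
      have := length_eq_dist hT (q0.toPath.1.transfer T e1) (q0.toPath.2.transfer e1)
      rwa [Walk.length_transfer] at this
  -- paths on the x-side
  have hpathS : ∀ {z : V}, D.Reachable x z →
      ∃ q : D.Walk x z, q.IsPath ∧ (∀ y ∈ q.support, D.Reachable x y) := by
    intro z hz
    obtain ⟨q0⟩ := hz
    exact ⟨q0.toPath.1, q0.toPath.2, fun y hy => ⟨q0.toPath.1.takeUntil y hy⟩⟩
  -- composing a v-side path, a glue edge to x, and an x-side path gives a geodesic
  have hcompose : ∀ (G2 : SimpleGraph V), G2.IsTree → ∀ (m : V), D ≤ G2 → G2.Adj m x →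
      ∀ {s z : V} (q1 : D.Walk s m) (rz : D.Walk x z), q1.IsPath → rz.IsPath →
      (∀ y ∈ q1.support, D.Reachable v y) → (∀ y ∈ rz.support, D.Reachable x y) →
      G2.dist s z = q1.length + 1 + rz.length := by
    intro G2 hG2 m hle hmx s z q1 rz hq1 hrz hq1A hrzS
    have e1 : ∀ e ∈ q1.edges, e ∈ G2.edgeSet :=
      fun e he' => SimpleGraph.edgeSet_mono hle (Walk.edges_subset_edgeSet _ he')
    have e2 : ∀ e ∈ rz.edges, e ∈ G2.edgeSet :=
      fun e he' => SimpleGraph.edgeSet_mono hle (Walk.edges_subset_edgeSet _ he')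
    have hm : D.Reachable v m := hq1A m q1.end_mem_support
    have hcons : (Walk.cons hmx (rz.transfer G2 e2)).IsPath := by
      rw [Walk.cons_isPath_iff]
      refine ⟨hrz.transfer e2, ?_⟩
      rw [Walk.support_transfer]
      intro hmem
      exact hdisj hm (hrzS m hmem)
    have hap : ((q1.transfer G2 e1).append (Walk.cons hmx (rz.transfer G2 e2))).IsPath := by
      refine IsPath.append' (hq1.transfer e1) hcons ?_
      intro y hy1 hy2
      rw [Walk.support_transfer] at hy1
      rw [Walk.support_cons] at hy2
      rcases List.mem_cons.1 hy2 with h | h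
      · exact h
      · rw [Walk.support_transfer] at h
        exact absurd (hrzS y h) (fun hc' => hdisj (hq1A y hy1) hc')
    have hlen := length_eq_dist hG2 _ hap
    rw [Walk.length_append, Walk.length_cons, Walk.length_transfer, Walk.length_transfer] at hlen
    omega
  -- splitting the path p at a support vertex
  have hsplit : ∀ y (hy : y ∈ p.support), T.dist u y + T.dist y w = p.length := by
    intro y hy
    have h3 : (p.takeUntil y hy).length + (p.dropUntil y hy).length = p.length := by
      rw [← Walk.length_append, Walk.take_spec]
    rw [← length_eq_dist hT _ (hp.takeUntil hy), ← length_eq_dist hT _ (hp.dropUntil hy)]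
    exact h3
  have hd1 : T.dist u v + T.dist v w = p.length := hsplit v (getVert_mem_support' p (by omega))
  have hd2 : T.dist u p1 + T.dist p1 w = p.length := hsplit p1 (getVert_mem_support' p (by omega))
  have hd3 : T.dist u p1 = 1 := SimpleGraph.dist_eq_one_iff_adj.mpr hadj_u_p1
  have hd4 : 2 ≤ T.dist u v := by
    have h0 : T.dist u v ≠ 0 := by
      intro h
      obtain ⟨q, hq, hql⟩ := (hT.isConnected.preconnected u v).exists_path_of_dist
      rw [h] at hql
      exact hvu.symm (Walk.eq_of_length_eq_zero hql)
    have h1 : T.dist u v ≠ 1 := by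
      intro h
      exact hvp1 (huniq v (SimpleGraph.dist_eq_one_iff_adj.mp h))
    omega
  have hd5 : T.dist v w + 1 ≤ T.dist p1 w := by omega
  -- the chosen v-side geodesics
  obtain ⟨ruv, ruvP, ruvA, ruvL⟩ := hpathA hAu hAv
  obtain ⟨rwv, rwvP, rwvA, rwvL⟩ := hpathA hAw hAv
  obtain ⟨rup1, rup1P, rup1A, rup1L⟩ := hpathA hAu hAp1
  obtain ⟨rwp1, rwp1P, rwp1A, rwp1L⟩ := hpathA hAw hAp1
  -- pointwise comparison at u
  have key_u : ∀ z : V, (T2.dist z u) ^ 2 + T2.dist z u ≤ (T.dist z u) ^ 2 + T.dist z u := by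
    intro z
    rcases hcover z with hz | hz
    · rw [hAdist hz hAu]
    · obtain ⟨rz, rzP, rzS⟩ := hpathS hz
      have h1 : T2.dist u z = rup1.length + 1 + rz.length :=
        hcompose T2 hT2tree p1 hDleT2 hp1x rup1 rz rup1P rzP rup1A rzS
      have h2 : T.dist u z = ruv.length + 1 + rz.length :=
        hcompose T hT v hDle hxadj ruv rz ruvP rzP ruvA rzS
      have e1 : T2.dist z u = T2.dist u z := SimpleGraph.dist_comm
      have e2 : T.dist z u = T.dist u z := SimpleGraph.dist_comm
      rw [e1, e2, h1, h2, rup1L, ruvL, hd3]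
      exact sq_add_mono (by omega)
  -- pointwise comparison at w, strict on the x-side
  have key_w_S : ∀ {z : V}, D.Reachable x z → T.dist z w + 1 ≤ T2.dist z w := by
    intro z hz
    obtain ⟨rz, rzP, rzS⟩ := hpathS hz
    have h1 : T2.dist w z = rwp1.length + 1 + rz.length :=
      hcompose T2 hT2tree p1 hDleT2 hp1x rwp1 rz rwp1P rzP rwp1A rzS
    have h2 : T.dist w z = rwv.length + 1 + rz.length :=
      hcompose T hT v hDle hxadj rwv rz rwvP rzP rwvA rzS
    have e1 : T2.dist z w = T2.dist w z := SimpleGraph.dist_comm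
    have e2 : T.dist z w = T.dist w z := SimpleGraph.dist_comm
    have e3 : T.dist w v = T.dist v w := SimpleGraph.dist_comm
    have e4 : T.dist w p1 = T.dist p1 w := SimpleGraph.dist_comm
    rw [e1, e2, h1, h2, rwp1L, rwvL, e3, e4]
    omega
  have key_w : ∀ z : V, (T.dist z w) ^ 2 + T.dist z w ≤ (T2.dist z w) ^ 2 + T2.dist z w := by
    intro z
    rcases hcover z with hz | hz
    · rw [hAdist hz hAw]
    · exact sq_add_mono (by have := key_w_S hz; omega)
  have key_w_x : (T.dist x w) ^ 2 + T.dist x w < (T2.dist x w) ^ 2 + T2.dist x w :=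
    sq_add_strict_mono (by have := key_w_S (Reachable.refl x); omega)
  -- sum comparisons
  have hww_u : ww T2 u ≤ ww T u := by
    simp only [ww]
    exact Finset.sum_le_sum fun z _ => key_u z
  have hww_w : ww T w < ww T2 w := by
    simp only [ww]
    exact Finset.sum_lt_sum (fun z _ => key_w z) ⟨x, Finset.mem_univ x, key_w_x⟩
  -- positivity
  have hdp1u : T.dist p1 u = 1 := by rw [SimpleGraph.dist_comm]; exact hd3
  have hwwu_pos : 0 < ww T u := by
    have hle' : (T.dist p1 u) ^ 2 + T.dist p1 u ≤ ww T u := by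
      simp only [ww]
      exact Finset.single_le_sum (f := fun z => (T.dist z u) ^ 2 + T.dist z u)
        (fun z _ => Nat.zero_le _) (Finset.mem_univ p1)
    rw [hdp1u] at hle'
    omega
  have hwwu2_pos : 0 < ww T2 u := by
    have hle' : (T2.dist p1 u) ^ 2 + T2.dist p1 u ≤ ww T2 u := by
      simp only [ww]
      exact Finset.single_le_sum (f := fun z => (T2.dist z u) ^ 2 + T2.dist z u)
        (fun z _ => Nat.zero_le _) (Finset.mem_univ p1)
    rw [hAdist hAp1 hAu, hdp1u] at hle'
    omega
  -- final contradiction with maximality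
  have hdegu2' : ∀ (inst : Fintype (T2.neighborSet u)), @SimpleGraph.degree V T2 u inst = 1 :=
    fun inst => by rw [Subsingleton.elim inst (SimpleGraph.neighborSetFintype T2 u)] at *; exact hdegu2
  have hdegw2' : ∀ (inst : Fintype (T2.neighborSet w)), @SimpleGraph.degree V T2 w inst = 1 :=
    fun inst => by rw [Subsingleton.elim inst (SimpleGraph.neighborSetFintype T2 w)] at *; exact hdegw2
  have hfinal := hmax T2 hT2tree u w (hdegu2' _) (hdegw2' _)
  have hb1 : (0 : ℚ) < (ww T u : ℚ) := by exact_mod_cast hwwu_pos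
  have hb2 : (0 : ℚ) < (ww T2 u : ℚ) := by exact_mod_cast hwwu2_pos
  rw [div_le_div_iff₀ hb2 hb1] at hfinal
  have hcast : ww T2 w * ww T u ≤ ww T w * ww T2 u := by exact_mod_cast hfinal
  have hlt : ww T w * ww T2 u < ww T2 w * ww T u :=
    lt_of_le_of_lt (Nat.mul_le_mul le_rfl hww_u) (mul_lt_mul_of_pos_right hww_w hwwu_pos)
  omega
end

section
/- Let T be a tree on n vertices, u a leaf with neighbor u₁, and suppose the path u = u₀, u₁, …, u_r = w to a leaf w has all internal vertices u₂, …, u_{r−1} of degree 2. Let T_B be the component of T minus the path edges containing u₁. Then ww_T(u) = ww_T(u₁) + 2[w_{T_B}(u₁) + r(r−1)/2 + n − 2]. -/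
set_option linter.unusedSectionVars false
open Finset
open scoped Classical

namespace SimpleGraph
variable {V : Type*} {G : SimpleGraph V}

lemma tree_dist_eq (hT : G.IsTree) {a b : V} (q : G.Walk a b) (hq : q.IsPath) :
    G.dist a b = q.length := by
  refine le_antisymm (SimpleGraph.dist_le q) ?_
  obtain ⟨q', hq'⟩ := (hT.isConnected a b).exists_walk_length_eq_dist
  have h2 : q = q'.bypass := congrArg Subtype.val (hT.IsAcyclic.path_unique ⟨q, hq⟩ q'.toPath)
  calc q.length = q'.bypass.length := by rw [h2]
    _ ≤ q'.length := q'.length_bypass_le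
    _ = G.dist a b := hq'

lemma getVert_edge_mem : ∀ {a b : V} (p : G.Walk a b) (i : ℕ), i < p.length →
    s(p.getVert i, p.getVert (i+1)) ∈ p.edges
  | _, _, .cons h q, 0, _ => by simp [Walk.getVert_cons_succ]
  | _, _, .cons h q, (i+1), hi => by
      simp only [Walk.getVert_cons_succ, Walk.edges_cons, List.mem_cons]
      exact Or.inr (getVert_edge_mem q i (by simpa [Walk.length_cons] using hi))

lemma exists_take : ∀ {a b : V} (p : G.Walk a b) (i : ℕ), i ≤ p.length →
    ∃ q : G.Walk a (p.getVert i), q.length = i ∧ q.support.Sublist p.support ∧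
      ∀ e ∈ q.edges, e ∈ p.edges
  | a, b, p, 0, _ => ⟨(Walk.nil : G.Walk a a).copy rfl (p.getVert_zero).symm, by simp, by
      cases p <;> simp, by simp⟩
  | _, _, .cons h q, (i+1), hi => by
      obtain ⟨q', hl, hs, he⟩ := exists_take q i (by simpa [Walk.length_cons] using hi)
      exact ⟨(Walk.cons h q').copy rfl (Walk.getVert_cons_succ q h).symm,
        by simpa using hl,
        by simp only [Walk.support_copy, Walk.support_cons]; exact hs.cons₂ _, by
          intro e he'
          simp only [Walk.edges_copy, Walk.edges_cons, List.mem_cons] at he' ⊢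
          exact he'.imp id (he e)⟩

lemma deg_one_unique [Fintype V] {u x y : V} (h : G.degree u = 1) (hx : G.Adj u x)
    (hy : G.Adj u y) : x = y := by
  have hc : (G.neighborFinset u).card ≤ 1 := le_of_eq h
  exact Finset.card_le_one.mp hc x (by simpa using hx) y (by simpa using hy)

lemma deg_two_mem [Fintype V] {u x y z : V} (h : G.degree u = 2) (hx : G.Adj u x)
    (hy : G.Adj u y) (hxy : x ≠ y) (hz : G.Adj u z) : z = x ∨ z = y := by
  have hsub : ({x, y} : Finset V) ⊆ G.neighborFinset u := by
    intro t ht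
    simp only [Finset.mem_insert, Finset.mem_singleton] at ht
    rcases ht with rfl | rfl <;> simpa
  have hcard : ({x, y} : Finset V).card = 2 := Finset.card_pair hxy
  have heq : G.neighborFinset u = {x, y} :=
    (Finset.eq_of_subset_of_card_le hsub (by rw [hcard, ← h]; rfl)).symm
  have : z ∈ G.neighborFinset u := by simpa
  rw [heq] at this
  simpa using this



section Main
variable [Fintype V] {T : SimpleGraph V}
variable (hT : T.IsTree) {u w : V} (hu : T.degree u = 1) (hw : T.degree w = 1)
  (p : T.Walk u w) (hp : p.IsPath) (hr : 2 ≤ p.length)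
  (hdeg : ∀ i, 2 ≤ i → i ≤ p.length - 1 → T.degree (p.getVert i) = 2)

include hT hp in
lemma dist_getVert : ∀ i ≤ p.length, T.dist u (p.getVert i) = i := by
  intro i hi
  obtain ⟨q, hl, hs, _⟩ := exists_take p i hi
  have hq : q.IsPath := (Walk.isPath_def _).mpr (hs.nodup ((Walk.isPath_def _).mp hp))
  rw [tree_dist_eq hT q hq, hl]

include hT hp in
lemma getVert_ne : ∀ i j, i ≤ p.length → j ≤ p.length → i ≠ j →
    p.getVert i ≠ p.getVert j := by
  intro i j hi hj hij he
  apply hij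
  have h1 := dist_getVert hT p hp i hi
  have h2 := dist_getVert hT p hp j hj
  rw [he, h2] at h1
  exact h1.symm

include hr in
lemma adj01 : T.Adj u (p.getVert 1) := by
  have := p.adj_getVert_succ (i := 0) (by omega)
  simpa using this

include hT hu hp hr in
lemma dist_step : ∀ q, q ≠ u → T.dist u q = T.dist (p.getVert 1) q + 1 := by
  intro q hq
  have hreach : T.Reachable u q := hT.isConnected u q
  have hpos : 0 < T.dist u q := hreach.pos_dist_of_ne (Ne.symm hq)
  obtain ⟨W, hW⟩ := hreach.exists_walk_length_eq_dist
  have hWnil : ¬ W.Nil := Walk.not_nil_iff_lt_length.mpr (by omega)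
  have h1 : T.Adj u (W.getVert 1) := W.adj_snd hWnil
  have he1 : W.getVert 1 = p.getVert 1 := deg_one_unique hu h1 (adj01 p hr)
  have htail : T.dist (W.getVert 1) q ≤ W.tail.length := SimpleGraph.dist_le _
  have hlen : W.tail.length + 1 = W.length := Walk.length_tail_add_one hWnil
  have hle : T.dist (p.getVert 1) q + 1 ≤ T.dist u q := by
    rw [← he1]; omega
  have htri : T.dist u q ≤ T.dist u (p.getVert 1) + T.dist (p.getVert 1) q :=
    hT.isConnected.dist_triangle
  have hd1 : T.dist u (p.getVert 1) = 1 := dist_eq_one_iff_adj.mpr (adj01 p hr)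
  omega

include hT hu hw hp hr hdeg in
lemma path_neighbors : ∀ i, 2 ≤ i → i ≤ p.length → ∀ z, T.Adj (p.getVert i) z →
    ∃ j, j ≤ p.length ∧ z = p.getVert j ∧ s(p.getVert i, z) ∈ p.edges := by
  intro i h2 hir z hz
  have hprev : T.Adj (p.getVert i) (p.getVert (i-1)) := by
    have := p.adj_getVert_succ (i := i-1) (by omega)
    rw [show i - 1 + 1 = i by omega] at this
    exact this.symm
  have hedgeprev : s(p.getVert i, p.getVert (i-1)) ∈ p.edges := by
    have := getVert_edge_mem p (i-1) (by omega)
    rw [show i - 1 + 1 = i by omega] at this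
    rwa [Sym2.eq_swap]
  rcases eq_or_lt_of_le hir with heq | hlt
  · -- i = p.length : endpoint w, degree 1
    have hgw : p.getVert i = w := by rw [heq]; exact p.getVert_length
    have hzeq : z = p.getVert (i-1) := by
      have hw' : T.degree (p.getVert i) = 1 := by rw [hgw]; exact hw
      exact deg_one_unique hw' hz hprev
    exact ⟨i - 1, by omega, hzeq, hzeq ▸ hedgeprev⟩
  · -- internal, degree 2
    have hdeg2 : T.degree (p.getVert i) = 2 := hdeg i h2 (by omega)
    have hnext : T.Adj (p.getVert i) (p.getVert (i+1)) := p.adj_getVert_succ hlt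
    have hne : p.getVert (i-1) ≠ p.getVert (i+1) :=
      getVert_ne hT p hp (i-1) (i+1) (by omega) (by omega) (by omega)
    rcases deg_two_mem hdeg2 hprev hnext hne hz with rfl | rfl
    · exact ⟨i - 1, by omega, rfl, hedgeprev⟩
    · exact ⟨i + 1, by omega, rfl, getVert_edge_mem p i hlt⟩


include hT hu hw hp hr hdeg in
lemma path_isolated : ∀ i, 2 ≤ i → i ≤ p.length → ∀ z,
    ¬ (T.deleteEdges {e | e ∈ p.edges}).Adj (p.getVert i) z := by
  intro i h2 hir z hz
  rw [deleteEdges_adj] at hz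
  obtain ⟨j, _, rfl, hmem⟩ := path_neighbors hT hu hw p hp hr hdeg i h2 hir z hz.1
  exact hz.2 hmem

include hu hr in
lemma u_isolated : ∀ z, ¬ (T.deleteEdges {e | e ∈ p.edges}).Adj u z := by
  intro z hz
  rw [deleteEdges_adj] at hz
  have hzeq : z = p.getVert 1 := deg_one_unique hu hz.1 (adj01 p hr)
  apply hz.2
  have := getVert_edge_mem p 0 (by omega)
  rw [p.getVert_zero] at this
  rw [hzeq]
  exact this

lemma no_reach_of_isolated {G : SimpleGraph V} {a b : V} (hab : a ≠ b)
    (hiso : ∀ z, ¬ G.Adj a z) : ¬ G.Reachable b a := by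
  intro hre
  obtain ⟨W⟩ := hre.symm
  have hWnil : ¬ W.Nil := Walk.not_nil_of_ne hab
  exact hiso _ (W.adj_snd hWnil)

include hT hu hw hp hr hdeg in
lemma path_not_reach : ∀ i, 2 ≤ i → i ≤ p.length →
    ¬ (T.deleteEdges {e | e ∈ p.edges}).Reachable (p.getVert 1) (p.getVert i) := by
  intro i h2 hir
  exact no_reach_of_isolated
    (getVert_ne hT p hp i 1 hir (by omega) (by omega))
    (path_isolated hT hu hw p hp hr hdeg i h2 hir)

include hT hu hp hr in
lemma u_not_reach : ¬ (T.deleteEdges {e | e ∈ p.edges}).Reachable (p.getVert 1) u := by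
  have hne : u ≠ p.getVert 1 := by
    have := getVert_ne hT p hp 0 1 (by omega) (by omega) (by omega)
    rwa [p.getVert_zero] at this
  exact no_reach_of_isolated hne (u_isolated hu p hr)

include hT hu hw hp hr hdeg in
lemma cover : ∀ q : V, (T.deleteEdges {e | e ∈ p.edges}).Reachable (p.getVert 1) q ∨
    q = u ∨ ∃ i, 2 ≤ i ∧ i ≤ p.length ∧ q = p.getVert i := by
  set T' := T.deleteEdges {e | e ∈ p.edges} with hT'
  set S : Set V := {q | T'.Reachable (p.getVert 1) q ∨
    q = u ∨ ∃ i, 2 ≤ i ∧ i ≤ p.length ∧ q = p.getVert i} with hS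
  have hsupp : ∀ j, j ≤ p.length → p.getVert j ∈ S := by
    intro j hj
    rcases Nat.lt_or_ge j 2 with hj2 | hj2
    · interval_cases j
      · exact Or.inr (Or.inl p.getVert_zero)
      · exact Or.inl (Reachable.refl _)
    · exact Or.inr (Or.inr ⟨j, hj2, hj, rfl⟩)
  have hclos : ∀ x y, x ∈ S → T.Adj x y → y ∈ S := by
    intro x y hx hxy
    rcases hx with hre | rfl | ⟨i, h2, hir, rfl⟩
    · by_cases hmem : s(x, y) ∈ p.edges
      · have hys : y ∈ p.support := p.snd_mem_support_of_mem_edges hmem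
        obtain ⟨j, rfl, hj⟩ := (Walk.mem_support_iff_exists_getVert).mp hys
        exact hsupp j hj
      · exact Or.inl (hre.trans (Adj.reachable (by rw [hT', deleteEdges_adj]; exact ⟨hxy, hmem⟩)))
    · have : y = p.getVert 1 := deg_one_unique hu hxy (adj01 p hr)
      rw [this]; exact Or.inl (Reachable.refl _)
    · obtain ⟨j, hj, rfl, _⟩ := path_neighbors hT hu hw p hp hr hdeg i h2 hir y hxy
      exact hsupp j hj
  intro q
  obtain ⟨W⟩ := hT.isConnected (p.getVert 1) q
  have haux : ∀ {a b : V} (W' : T.Walk a b), a ∈ S → b ∈ S := by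
    intro a b W'
    induction W' with
    | nil => exact id
    | cons h q' ih => exact fun ha => ih (hclos _ _ ha h)
  exact haux W (Or.inl (Reachable.refl _))

include hT in
lemma dist_del_eq : ∀ q, (T.deleteEdges {e | e ∈ p.edges}).Reachable (p.getVert 1) q →
    T.dist (p.getVert 1) q = (T.deleteEdges {e | e ∈ p.edges}).dist (p.getVert 1) q := by
  intro q hre
  obtain ⟨P, hP, hPl⟩ := hre.exists_path_of_dist
  have hle : T ≥ T.deleteEdges {e | e ∈ p.edges} := deleteEdges_le _
  have hmap : (P.mapLe hle).IsPath := hP.mapLe hle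
  have hlen : (P.mapLe hle).length = P.length := by
    simp [Walk.mapLe, Walk.length_map]
  rw [tree_dist_eq hT _ hmap, hlen, hPl]

end Main
end SimpleGraph

lemma gauss_icc : ∀ r : ℕ, 1 ≤ r → 2 * (∑ i ∈ Finset.Icc 2 r, ((i : ℤ) - 1)) = r * (r - 1) := by
  intro r hr
  induction r with
  | zero => omega
  | succ n ih =>
    rcases Nat.lt_or_ge n 1 with h1 | h1
    · interval_cases n
      · simp
    · rw [Finset.sum_Icc_succ_top (by omega)]
      push_cast
      rw [mul_add, ih h1]
      ring


theorem stmt10 {V : Type*} [Fintype V] (T : SimpleGraph V) (hT : T.IsTree)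
    (u w : V) (hu : T.degree u = 1) (hw : T.degree w = 1)
    (p : T.Walk u w) (hp : p.IsPath) (hr : 2 ≤ p.length)
    (hdeg : ∀ i, 2 ≤ i → i ≤ p.length - 1 → T.degree (p.getVert i) = 2) :
    (ww T u : ℤ) = ww T (p.getVert 1)
      + 2 * (((∑ q ∈ Finset.univ.filter
                (fun q => (T.deleteEdges {e | e ∈ p.edges}).Reachable (p.getVert 1) q),
                (T.deleteEdges {e | e ∈ p.edges}).dist (p.getVert 1) q : ℕ) : ℤ)
             + (p.length : ℤ) * ((p.length : ℤ) - 1) / 2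
             + (Fintype.card V : ℤ) - 2) := by
  classical
  set r := p.length with hrdef
  set u1 := p.getVert 1 with hu1def
  set T' := T.deleteEdges {e | e ∈ p.edges} with hT'def
  set R : Finset V := Finset.univ.filter (fun q => T'.Reachable u1 q) with hRdef
  set I : Finset V := (Finset.Icc 2 r).image p.getVert with hIdef
  set K : ℕ := ∑ i ∈ Finset.Icc 2 r, (i - 1) with hKdef
  have hstep := SimpleGraph.dist_step hT hu p hp hr
  rw [← hu1def] at hstep
  have hgv := SimpleGraph.dist_getVert hT p hp
  have hgvne := SimpleGraph.getVert_ne hT p hp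
  have hne_u_u1 : u ≠ u1 := by
    have := hgvne 0 1 (by omega) (by omega) (by omega)
    rwa [p.getVert_zero] at this
  have hn2 : 2 ≤ Fintype.card V := Fintype.one_lt_card_iff_nontrivial.mpr ⟨⟨u, u1, hne_u_u1⟩⟩
  -- partition
  have hpart : Finset.univ.erase u = R ∪ I := by
    ext q
    simp only [Finset.mem_erase, Finset.mem_univ, and_true, Finset.mem_union, hRdef, hIdef,
      Finset.mem_filter, true_and, Finset.mem_image, Finset.mem_Icc]
    constructor
    · intro hq
      rcases SimpleGraph.cover hT hu hw p hp hr hdeg q with h | h | ⟨i, h2, hir, rfl⟩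
      · exact Or.inl h
      · exact absurd h hq
      · exact Or.inr ⟨i, ⟨h2, hir⟩, rfl⟩
    · rintro (h | ⟨i, ⟨h2, hir⟩, rfl⟩)
      · intro hqe
        subst hqe
        exact SimpleGraph.u_not_reach hT hu p hp hr h
      · intro hqe
        exact hgvne i 0 hir (by omega) (by omega) (by rw [hqe, p.getVert_zero])
  have hdisj : Disjoint R I := by
    rw [Finset.disjoint_left]
    intro q hq hqI
    simp only [hIdef, Finset.mem_image, Finset.mem_Icc] at hqI
    obtain ⟨i, ⟨h2, hir⟩, rfl⟩ := hqI
    simp only [hRdef, Finset.mem_filter] at hq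
    exact SimpleGraph.path_not_reach hT hu hw p hp hr hdeg i h2 hir hq.2
  -- sums over the pieces
  have hsumI : ∑ q ∈ I, T.dist u1 q = K := by
    rw [hIdef, Finset.sum_image (fun a ha b hb hab =>
      by_contra fun hne => hgvne a b (Finset.mem_Icc.mp ha).2 (Finset.mem_Icc.mp hb).2 hne hab)]
    refine Finset.sum_congr rfl fun i hi => ?_
    obtain ⟨h2, hir⟩ := Finset.mem_Icc.mp hi
    have h1 : T.dist u (p.getVert i) = i := hgv i hir
    have h3 : p.getVert i ≠ u := by
      intro hqe
      exact hgvne i 0 hir (by omega) (by omega) (by rw [hqe, p.getVert_zero])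
    have h4 := hstep (p.getVert i) h3
    omega
  have hsumR : ∑ q ∈ R, T.dist u1 q = ∑ q ∈ R, T'.dist u1 q := by
    refine Finset.sum_congr rfl fun q hq => ?_
    simp only [hRdef, Finset.mem_filter] at hq
    exact SimpleGraph.dist_del_eq hT p q hq.2
  have h5 : ∑ q ∈ Finset.univ.erase u, T.dist u1 q = (∑ q ∈ R, T'.dist u1 q) + K := by
    rw [hpart, Finset.sum_union hdisj, hsumR, hsumI]
  -- ww computations
  have h1 : ww T u = ∑ q ∈ Finset.univ.erase u, (T.dist u q ^ 2 + T.dist u q) := by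
    rw [ww, ← Finset.add_sum_erase Finset.univ _ (Finset.mem_univ u)]
    have hsum : ∑ x ∈ Finset.univ.erase u, (T.dist x u ^ 2 + T.dist x u)
        = ∑ q ∈ Finset.univ.erase u, (T.dist u q ^ 2 + T.dist u q) :=
      Finset.sum_congr rfl fun q _ => by
        rw [show T.dist q u = T.dist u q from SimpleGraph.dist_comm]
    rw [hsum, SimpleGraph.dist_self]
    norm_num
  have h2 : ww T u1 = 2 + ∑ q ∈ Finset.univ.erase u, (T.dist u1 q ^ 2 + T.dist u1 q) := by
    rw [ww, ← Finset.add_sum_erase Finset.univ _ (Finset.mem_univ u)]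
    have hsum : ∑ x ∈ Finset.univ.erase u, (T.dist x u1 ^ 2 + T.dist x u1)
        = ∑ q ∈ Finset.univ.erase u, (T.dist u1 q ^ 2 + T.dist u1 q) :=
      Finset.sum_congr rfl fun q _ => by
        rw [show T.dist q u1 = T.dist u1 q from SimpleGraph.dist_comm]
    have hd : T.dist u u1 = 1 := SimpleGraph.dist_eq_one_iff_adj.mpr (SimpleGraph.adj01 p hr)
    rw [hsum, hd]
    norm_num
  have h3 : ∑ q ∈ Finset.univ.erase u, (T.dist u q ^ 2 + T.dist u q)
      = (∑ q ∈ Finset.univ.erase u, (T.dist u1 q ^ 2 + T.dist u1 q))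
        + 2 * (∑ q ∈ Finset.univ.erase u, T.dist u1 q)
        + 2 * (Fintype.card V - 1) := by
    have hcard : (Finset.univ.erase u).card = Fintype.card V - 1 := by
      rw [Finset.card_erase_of_mem (Finset.mem_univ u), Finset.card_univ]
    calc ∑ q ∈ Finset.univ.erase u, (T.dist u q ^ 2 + T.dist u q)
        = ∑ q ∈ Finset.univ.erase u,
            (((T.dist u1 q ^ 2 + T.dist u1 q) + 2 * T.dist u1 q) + 2) := by
          refine Finset.sum_congr rfl fun q hq => ?_
          rw [hstep q (Finset.mem_erase.mp hq).1]
          ring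
      _ = (∑ q ∈ Finset.univ.erase u,
            ((T.dist u1 q ^ 2 + T.dist u1 q) + 2 * T.dist u1 q))
          + (Finset.univ.erase u).card * 2 := by
          rw [Finset.sum_add_distrib, Finset.sum_const, smul_eq_mul]
      _ = (∑ q ∈ Finset.univ.erase u, (T.dist u1 q ^ 2 + T.dist u1 q))
          + 2 * (∑ q ∈ Finset.univ.erase u, T.dist u1 q)
          + 2 * (Fintype.card V - 1) := by
          rw [Finset.sum_add_distrib, ← Finset.mul_sum, hcard]
          ring
  -- main natural-number identity
  have hmain : ww T u + 4 = ww T u1 + 2 * ((∑ q ∈ R, T'.dist u1 q) + K)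
      + 2 * Fintype.card V := by
    rw [h1, h3, h2, h5]
    omega
  -- Gauss
  have hKZ : (K : ℤ) = ∑ i ∈ Finset.Icc 2 r, ((i : ℤ) - 1) := by
    rw [hKdef, Nat.cast_sum]
    refine Finset.sum_congr rfl fun i hi => ?_
    have := (Finset.mem_Icc.mp hi).1
    omega
  have hg : 2 * (K : ℤ) = (r : ℤ) * ((r : ℤ) - 1) := by
    rw [hKZ]
    exact gauss_icc r (by omega)
  have hmainZ := congrArg (Nat.cast : ℕ → ℤ) hmain
  push_cast at hmainZ
  simp only [hT'def] at hmainZ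
  push_cast at hmainZ ⊢
  omega
end

section
/- Let v be a vertex of a tree T of order n ≥ 3 minimizing ww_T, with neighbors v₁, …, v_l and corresponding components T₁, …, T_l of T − v of orders n₁, …, n_l. Then for each i, Σ_{y∈V(T)∖V(T_i)} d_T(v,y) + n − n_i ≥ Σ_{x∈V(T_i)} d_T(v,x). -/
open Finset
open scoped Classical

section aux

variable {V : Type*} {G : SimpleGraph V}

/-- In a graph where `v` is isolated, no walk starting away from `v` visits `v`. -/
lemma not_mem_support_of_isolated {v a b : V} (hiso : ∀ c, ¬ G.Adj c v)
    (p : G.Walk a b) (ha : a ≠ v) : v ∉ p.support := by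
  induction p with
  | nil => simpa using ha.symm
  | @cons x y z hadj p ih =>
    simp only [SimpleGraph.Walk.support_cons, List.mem_cons]
    rintro (h | hv)
    · exact ha h.symm
    · by_cases hy : y = v
      · subst hy; exact hiso x hadj
      · exact ih hy hv

/-- Edges of a walk avoiding `v` are not incident to `v`. -/
lemma edges_not_incident {v a b : V} (p : G.Walk a b) (hv : v ∉ p.support) :
    ∀ e ∈ p.edges, e ∉ G.incidenceSet v := by
  intro e he hev
  induction e using Sym2.ind with
  | _ x y =>
    rcases Sym2.mem_iff.1 hev.2 with h | h
    · exact hv (h ▸ p.fst_mem_support_of_mem_edges he)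
    · exact hv (h ▸ p.snd_mem_support_of_mem_edges he)

/-- In a tree, the length of any path equals the distance. -/
lemma path_length_eq_dist (hT : G.IsTree) {a b : V} (p : G.Walk a b) (hp : p.IsPath) :
    p.length = G.dist a b := by
  obtain ⟨q, hq⟩ := (hT.isConnected a b).exists_walk_length_eq_dist
  have hb : q.bypass.IsPath := q.bypass_isPath
  have := (hT.existsUnique_path a b).unique hp hb
  have hle : q.bypass.length ≤ q.length := q.length_bypass_le
  have hge := SimpleGraph.dist_le p
  rw [this] at hge ⊢
  omega

end aux

section main

variable {V : Type*} [Fintype V] {T : SimpleGraph V}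

lemma v_isolated (v : V) : ∀ c, ¬ (T.deleteEdges (T.incidenceSet v)).Adj c v := by
  intro c h
  rw [SimpleGraph.deleteEdges_adj] at h
  exact h.2 ((SimpleGraph.mk'_mem_incidenceSet_right_iff T).2 h.1)

lemma dist_in (hT : T.IsTree) {v vi : V} (hadj : T.Adj v vi) {x : V}
    (hx : (T.deleteEdges (T.incidenceSet v)).Reachable vi x) :
    T.dist v x = T.dist vi x + 1 := by
  obtain ⟨q⟩ := hx
  have hvq : v ∉ q.support :=
    not_mem_support_of_isolated (v_isolated v) q hadj.ne'
  let q' : T.Walk vi x := q.transfer T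
    (fun e he => SimpleGraph.edgeSet_mono (SimpleGraph.deleteEdges_le _) (q.edges_subset_edgeSet he))
  have hsupp : q'.support = q.support := SimpleGraph.Walk.support_transfer _ _
  have hvq' : v ∉ q'.bypass.support := fun h => hvq (hsupp ▸ q'.support_bypass_subset h)
  have hp : (SimpleGraph.Walk.cons hadj q'.bypass).IsPath :=
    q'.bypass_isPath.cons hvq'
  have h1 := path_length_eq_dist hT _ hp
  have h2 := path_length_eq_dist hT q'.bypass q'.bypass_isPath
  simp only [SimpleGraph.Walk.length_cons] at h1
  omega

lemma dist_out (hT : T.IsTree) {v vi : V} (hadj : T.Adj v vi) {x : V}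
    (hx : ¬ (T.deleteEdges (T.incidenceSet v)).Reachable vi x) :
    T.dist vi x = T.dist v x + 1 := by
  by_cases hxv : x = v
  · subst hxv
    rw [SimpleGraph.dist_self, SimpleGraph.dist_eq_one_iff_adj.2 hadj.symm]
  -- take the unique path from v to x
  obtain ⟨r0, hr0⟩ := (hT.isConnected v x).exists_walk_length_eq_dist
  set r := r0.bypass with hrdef
  have hrp : r.IsPath := r0.bypass_isPath
  have hvi : vi ∉ r.support := by
    intro hmem
    -- the part of r from vi to x avoids v, contradiction with hx
    have hspec := r.take_spec hmem
    have hnodup := hrp.support_nodup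
    have hvtake : v ∈ (r.takeUntil vi hmem).support := SimpleGraph.Walk.start_mem_support _
    have hvdrop : v ∉ (r.dropUntil vi hmem).support := by
      intro hv
      have := hspec ▸ hnodup
      rw [← hspec] at hnodup
      rw [SimpleGraph.Walk.support_append, List.nodup_append] at hnodup
      rcases (SimpleGraph.Walk.mem_support_iff _).1 hv with h | h
      · -- v = vi
        exact hadj.ne h
      · exact hnodup.2.2 v hvtake v h rfl
    have hed := edges_not_incident (r.dropUntil vi hmem) hvdrop
    exact hx ⟨(r.dropUntil vi hmem).toDeleteEdges _ hed⟩
  have hp : (SimpleGraph.Walk.cons hadj.symm r).IsPath := hrp.cons hvi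
  have h1 := path_length_eq_dist hT _ hp
  have h2 := path_length_eq_dist hT r hrp
  simp only [SimpleGraph.Walk.length_cons] at h1
  omega

end main

theorem stmt11 {V : Type*} [Fintype V] (T : SimpleGraph V) (hT : T.IsTree)
    (hn : 3 ≤ Fintype.card V) (v : V) (hv : ∀ x, ww T v ≤ ww T x) :
    ∀ vi : V, T.Adj v vi →
      (∑ y ∈ (Finset.univ.filter
          (fun y => (T.deleteEdges (T.incidenceSet v)).Reachable vi y))ᶜ, T.dist v y)
        + (Fintype.card V
            - (Finset.univ.filter
                (fun y => (T.deleteEdges (T.incidenceSet v)).Reachable vi y)).card)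
      ≥ ∑ x ∈ Finset.univ.filter
          (fun x => (T.deleteEdges (T.incidenceSet v)).Reachable vi x), T.dist v x := by
  intro vi hadj
  set S : Finset V := Finset.univ.filter
    (fun y => (T.deleteEdges (T.incidenceSet v)).Reachable vi y) with hS
  have key := hv vi
  unfold ww at key
  rw [← Finset.sum_add_sum_compl S (fun u => T.dist u v ^ 2 + T.dist u v),
      ← Finset.sum_add_sum_compl S (fun u => T.dist u vi ^ 2 + T.dist u vi)] at key
  have hmemS : ∀ u ∈ S, T.dist v u = T.dist vi u + 1 := by
    intro u hu
    exact dist_in hT hadj (by simpa [hS] using hu)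
  have hmemC : ∀ u ∈ Sᶜ, T.dist vi u = T.dist v u + 1 := by
    intro u hu
    refine dist_out hT hadj ?_
    simpa [hS] using hu
  have h1 : ∑ u ∈ S, (T.dist u v ^ 2 + T.dist u v)
      = (∑ u ∈ S, (T.dist u vi ^ 2 + T.dist u vi)) + ∑ u ∈ S, 2 * T.dist u v := by
    rw [← Finset.sum_add_distrib]
    refine Finset.sum_congr rfl fun u hu => ?_
    have hd : T.dist u v = T.dist u vi + 1 := by
      rw [SimpleGraph.dist_comm, hmemS u hu, SimpleGraph.dist_comm]
    rw [hd]; ring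
  have h2 : ∑ u ∈ Sᶜ, (T.dist u vi ^ 2 + T.dist u vi)
      = (∑ u ∈ Sᶜ, (T.dist u v ^ 2 + T.dist u v)) + ∑ u ∈ Sᶜ, 2 * (T.dist u v + 1) := by
    rw [← Finset.sum_add_distrib]
    refine Finset.sum_congr rfl fun u hu => ?_
    have hd : T.dist u vi = T.dist u v + 1 := by
      rw [SimpleGraph.dist_comm, hmemC u hu, SimpleGraph.dist_comm]
    rw [hd]; ring
  rw [h1, h2] at key
  have key2 : ∑ u ∈ S, 2 * T.dist u v ≤ ∑ u ∈ Sᶜ, 2 * (T.dist u v + 1) := by omega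
  rw [← Finset.mul_sum, ← Finset.mul_sum] at key2
  have key3 : ∑ u ∈ S, T.dist u v ≤ ∑ u ∈ Sᶜ, (T.dist u v + 1) := by omega
  rw [Finset.sum_add_distrib, Finset.sum_const, smul_eq_mul, mul_one] at key3
  have hcard : Sᶜ.card = Fintype.card V - S.card := Finset.card_compl S
  have hcomm : ∀ (s : Finset V), ∑ u ∈ s, T.dist u v = ∑ u ∈ s, T.dist v u :=
    fun s => Finset.sum_congr rfl fun u _ => SimpleGraph.dist_comm
  rw [hcomm S, hcomm Sᶜ] at key3
  omega
end

section
/- Let T be a tree of order n ≥ 3 with vertex v of degree k, neighbors v₁, …, v_k, and components T₁, …, T_k of T − v containing v₁, …, v_k respectively. Then ww_T(v) = 2(n−1) + 2·Σ_{i=1}^{k} w_{T_i}(v_i) + Σ_{i=1}^{k} ww_{T_i}(v_i). -/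
open Finset
open scoped Classical

namespace StmtAux

open SimpleGraph Walk

variable {V : Type*} {T : SimpleGraph V} {v u w w' : V}

lemma not_adj_v : ¬ (T.deleteEdges (T.incidenceSet v)).Adj v w := by
  simp [SimpleGraph.deleteEdges_adj, SimpleGraph.mem_incidenceSet]

lemma reach_from_v (h : (T.deleteEdges (T.incidenceSet v)).Reachable v u) : u = v := by
  obtain ⟨p⟩ := h
  cases p with
  | nil => rfl
  | cons h q => exact absurd h not_adj_v

lemma not_mem_support {a : V} (p : (T.deleteEdges (T.incidenceSet v)).Walk a u)
    (ha : a ≠ v) : v ∉ p.support := by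
  induction p with
  | nil => simpa using fun h => ha h.symm
  | @cons x y z h q ih =>
    simp only [Walk.support_cons, List.mem_cons]
    rintro (rfl | hv)
    · exact ha rfl
    · have hy : y ≠ v := by
        rintro rfl
        exact not_adj_v h.symm
      exact ih hy (by simpa using hv)

lemma edges_mem {a : V} (q : T.Walk a u) (hv : v ∉ q.support) :
    ∀ e ∈ q.edges, e ∈ (T.deleteEdges (T.incidenceSet v)).edgeSet := by
  intro e he
  rw [SimpleGraph.edgeSet_deleteEdges]
  refine ⟨q.edges_subset_edgeSet he, fun hmem => ?_⟩
  have hve : v ∈ e := hmem.2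
  induction e using Sym2.ind with
  | _ x y =>
    rcases Sym2.mem_iff.mp hve with rfl | rfl
    · exact hv (q.fst_mem_support_of_mem_edges he)
    · exact hv (q.snd_mem_support_of_mem_edges he)

lemma edges_mem' {a b : V} (q : (T.deleteEdges (T.incidenceSet v)).Walk a b) :
    ∀ e ∈ q.edges, e ∈ T.edgeSet := by
  intro e he
  have := q.edges_subset_edgeSet he
  rw [SimpleGraph.edgeSet_deleteEdges] at this
  exact this.1

lemma exists_nbr (hT : T.IsTree) (hu : u ≠ v) :
    ∃ w, T.Adj v w ∧ (T.deleteEdges (T.incidenceSet v)).Reachable w u := by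
  obtain ⟨p, hp, -⟩ := (hT.isConnected.preconnected v u).exists_path_of_dist
  cases p with
  | nil => exact absurd rfl hu
  | @cons _ b _ h q =>
    obtain ⟨hq, hvns⟩ := (SimpleGraph.Walk.cons_isPath_iff h q).mp hp
    exact ⟨b, h, ⟨q.transfer _ (edges_mem q hvns)⟩⟩

lemma unique_nbr (hT : T.IsTree) (hw : T.Adj v w) (hw' : T.Adj v w')
    (h1 : (T.deleteEdges (T.incidenceSet v)).Reachable w u)
    (h2 : (T.deleteEdges (T.incidenceSet v)).Reachable w' u) : w = w' := by
  by_contra hne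
  obtain ⟨r⟩ := h1.trans h2.symm
  have hp : r.bypass.IsPath := Walk.bypass_isPath r
  have hv : v ∉ r.bypass.support := not_mem_support _ hw.ne'
  have hpT : (r.bypass.transfer T (edges_mem' _)).IsPath := hp.transfer _
  have hp2 : (Walk.cons hw.symm (Walk.cons hw' Walk.nil) : T.Walk w w').IsPath := by
    simp [Walk.isPath_def, hw.ne', hw'.ne, hne]
  have heq := (hT.existsUnique_path w w').unique hpT hp2
  have hv1 : v ∉ (r.bypass.transfer T (edges_mem' _)).support := by
    rwa [Walk.support_transfer]
  rw [heq] at hv1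
  simp at hv1

lemma dist_eq (hT : T.IsTree) (hw : T.Adj v w)
    (hr : (T.deleteEdges (T.incidenceSet v)).Reachable w u) :
    T.dist v u = (T.deleteEdges (T.incidenceSet v)).dist w u + 1 := by
  have hu : u ≠ v := by
    rintro rfl
    exact hw.ne' (reach_from_v hr.symm)
  apply le_antisymm
  · obtain ⟨r, hrlen⟩ := hr.exists_walk_length_eq_dist
    have hle := SimpleGraph.dist_le (Walk.cons hw (r.transfer T (edges_mem' _)))
    simpa [Walk.length_transfer, hrlen, Nat.add_comm] using hle
  · obtain ⟨p, hp, hlen⟩ := (hT.isConnected.preconnected v u).exists_path_of_dist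
    cases p with
    | nil => exact absurd rfl hu
    | @cons _ b _ h q =>
      obtain ⟨hq, hvns⟩ := (SimpleGraph.Walk.cons_isPath_iff h q).mp hp
      have hreach : (T.deleteEdges (T.incidenceSet v)).Reachable b u :=
        ⟨q.transfer _ (edges_mem q hvns)⟩
      have hbw : b = w := unique_nbr hT h hw hreach hr
      subst hbw
      have hle : (T.deleteEdges (T.incidenceSet v)).dist b u ≤ q.length := by
        have := SimpleGraph.dist_le (q.transfer _ (edges_mem q hvns))
        rwa [Walk.length_transfer] at this
      rw [Walk.length_cons] at hlen
      omega

end StmtAux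

theorem stmt12 {V : Type*} [Fintype V] (T : SimpleGraph V) (hT : T.IsTree)
    (hn : 3 ≤ Fintype.card V) (v : V) :
    ww T v = 2 * (Fintype.card V - 1)
      + 2 * ∑ vi ∈ T.neighborFinset v,
          ∑ q ∈ Finset.univ.filter
              (fun q => (T.deleteEdges (T.incidenceSet v)).Reachable vi q),
            (T.deleteEdges (T.incidenceSet v)).dist vi q
      + ∑ vi ∈ T.neighborFinset v,
          ∑ q ∈ Finset.univ.filter
              (fun q => (T.deleteEdges (T.incidenceSet v)).Reachable vi q),
            ((T.deleteEdges (T.incidenceSet v)).dist vi q ^ 2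
              + (T.deleteEdges (T.incidenceSet v)).dist vi q) := by
  open StmtAux in
  classical
  set C : V → Finset V :=
    fun vi => Finset.univ.filter (fun q => (T.deleteEdges (T.incidenceSet v)).Reachable vi q)
    with hC
  have hmemC : ∀ vi q, q ∈ C vi ↔ (T.deleteEdges (T.incidenceSet v)).Reachable vi q := by
    intro vi q; simp [hC]
  have hdisj : (↑(T.neighborFinset v) : Set V).PairwiseDisjoint C := by
    intro a ha b hb hne
    rw [Function.onFun, Finset.disjoint_left]
    simp only [Finset.coe_mem, Finset.mem_coe, SimpleGraph.mem_neighborFinset] at ha hb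
    intro q hqa hqb
    exact hne (unique_nbr hT ha hb ((hmemC a q).mp hqa) ((hmemC b q).mp hqb))
  have hdisj' : ∀ a ∈ T.neighborFinset v, ∀ b ∈ T.neighborFinset v, a ≠ b →
      Disjoint (C a) (C b) := fun a ha b hb hne => hdisj ha hb hne
  have hbi : (T.neighborFinset v).biUnion C = Finset.univ.erase v := by
    ext u
    simp only [Finset.mem_biUnion, Finset.mem_erase, Finset.mem_univ, and_true,
      SimpleGraph.mem_neighborFinset]
    constructor
    · rintro ⟨w, hw, hr⟩
      rw [hmemC] at hr
      rintro rfl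
      exact hw.ne' (reach_from_v hr.symm)
    · intro hu
      obtain ⟨w, hw, hr⟩ := exists_nbr hT hu
      exact ⟨w, hw, (hmemC w u).mpr hr⟩
  have hlhs : ww T v = ∑ u ∈ Finset.univ.erase v, ((T.dist u v) ^ 2 + T.dist u v) := by
    rw [ww]
    exact (Finset.sum_erase _ (by simp)).symm
  have hcard : Fintype.card V - 1 = ∑ vi ∈ T.neighborFinset v, (C vi).card := by
    rw [← Finset.card_biUnion hdisj', hbi, Finset.card_erase_of_mem (Finset.mem_univ v),
      Finset.card_univ]
  rw [hlhs, ← hbi, Finset.sum_biUnion hdisj, hcard, Finset.mul_sum, Finset.mul_sum,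
    ← Finset.sum_add_distrib, ← Finset.sum_add_distrib]
  refine Finset.sum_congr rfl fun vi hvi => ?_
  rw [Finset.mul_sum, Finset.card_eq_sum_ones (C vi), Finset.mul_sum,
    ← Finset.sum_add_distrib, ← Finset.sum_add_distrib]
  refine Finset.sum_congr rfl fun q hq => ?_
  have hadj : T.Adj v vi := (SimpleGraph.mem_neighborFinset _ _ _).mp hvi
  have hr : (T.deleteEdges (T.incidenceSet v)).Reachable vi q := (hmemC vi q).mp hq
  have hd : T.dist v q = (T.deleteEdges (T.incidenceSet v)).dist vi q + 1 :=
    dist_eq hT hadj hr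
  rw [SimpleGraph.dist_comm, hd]
  ring
end

section
/- Let T be a tree with adjacent vertices u, v and components T_u, T_v of T − uv containing u, v. Then ww_T(x) + ww_T(y) − 2·ww_T(z) = 2(|V(T_x)| + |V(T_y)| + 2·Σ_{p∈V(T_z)}(d(z,p)+1)) when x, z, y are consecutive vertices on a path (xz, yz ∈ E(T)) and T_x, T_y, T_z are the components of T − {xz, yz} containing x, y, z respectively. -/
open Finset
open scoped Classical

open SimpleGraph in
/-- Key: in a tree, if `p` is on `u`'s side of the bridge `uv`, then
`d(p,v) = d(p,u) + 1`. -/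
lemma tree_dist_across_edge {V : Type*} {T : SimpleGraph V} (hT : T.IsTree)
    {u v p : V} (huv : T.Adj u v)
    (hp : (T.deleteEdges {s(u,v)}).Reachable u p) :
    T.dist p v = T.dist p u + 1 := by
  classical
  have hbr : T.IsBridge s(u, v) :=
    (isAcyclic_iff_forall_adj_isBridge.mp hT.IsAcyclic) huv
  have hnr : ¬ (T.deleteEdges {s(u,v)}).Reachable u v := (isBridge_iff.mp hbr)
  have hpnv : ¬ (T.deleteEdges {s(u,v)}).Reachable p v := fun h => hnr (hp.trans h)
  have hduv : T.dist u v = 1 := dist_eq_one_iff_adj.mpr huv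
  have htri : T.dist p v ≤ T.dist p u + 1 := by
    have := hT.isConnected.dist_triangle (u := p) (v := u) (w := v)
    omega
  obtain ⟨W, hW⟩ := (hT.isConnected p v).exists_walk_length_eq_dist
  by_cases he : s(u,v) ∈ W.edges
  · have hu : u ∈ W.support := W.fst_mem_support_of_mem_edges he
    have h1 : T.dist p u ≤ (W.takeUntil u hu).length := dist_le _
    have h2 : T.dist u v ≤ (W.dropUntil u hu).length := dist_le _
    have h3 : (W.takeUntil u hu).length + (W.dropUntil u hu).length = W.length := by
      have := congrArg Walk.length (W.take_spec hu)
      rwa [Walk.length_append] at this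
    omega
  · exfalso
    apply hpnv
    exact ⟨W.toDeleteEdges {s(u,v)} (by
      intro e heW
      simp only [Set.mem_singleton_iff]
      rintro rfl
      exact he heW)⟩

open SimpleGraph in
lemma tree_cover {V : Type*} {T : SimpleGraph V} (hT : T.IsTree)
    (x y z p : V) :
    (T.deleteEdges {s(x,z), s(y,z)}).Reachable x p ∨
    (T.deleteEdges {s(x,z), s(y,z)}).Reachable y p ∨
    (T.deleteEdges {s(x,z), s(y,z)}).Reachable z p := by
  classical
  set D := T.deleteEdges {s(x,z), s(y,z)} with hD
  have aux : ∀ {a c : V} (_ : T.Walk a c),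
      (D.Reachable x c ∨ D.Reachable y c ∨ D.Reachable z c) →
      (D.Reachable x a ∨ D.Reachable y a ∨ D.Reachable z a) := by
    intro a c W
    induction W with
    | nil => exact id
    | @cons a b c h q ih =>
      intro hc
      by_cases hmem : s(a,b) ∈ ({s(x,z), s(y,z)} : Set (Sym2 V))
      · simp only [Set.mem_insert_iff, Set.mem_singleton_iff, Sym2.eq_iff] at hmem
        rcases hmem with (⟨rfl, rfl⟩ | ⟨rfl, rfl⟩) | (⟨rfl, rfl⟩ | ⟨rfl, rfl⟩)
        · exact Or.inl (Reachable.refl _)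
        · exact Or.inr (Or.inr (Reachable.refl _))
        · exact Or.inr (Or.inl (Reachable.refl _))
        · exact Or.inr (Or.inr (Reachable.refl _))
      · have hadj : D.Adj a b := by
          rw [hD]
          simp only [deleteEdges_adj]
          exact ⟨h, hmem⟩
        rcases ih hc with hx | hy | hz
        · exact Or.inl (hx.trans hadj.symm.reachable)
        · exact Or.inr (Or.inl (hy.trans hadj.symm.reachable))
        · exact Or.inr (Or.inr (hz.trans hadj.symm.reachable))
  obtain ⟨W⟩ := hT.isConnected p z
  exact aux W (Or.inr (Or.inr (Reachable.refl _)))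

open SimpleGraph in
/-- Variant of `tree_dist_across_edge` with the edge written the other way. -/
lemma tree_dist_across_edge' {V : Type*} {T : SimpleGraph V} (hT : T.IsTree)
    {u v p : V} (huv : T.Adj u v)
    (hp : (T.deleteEdges {s(v,u)}).Reachable u p) :
    T.dist p v = T.dist p u + 1 := by
  rw [Sym2.eq_swap (a := v) (b := u)] at hp
  exact tree_dist_across_edge hT huv hp

open SimpleGraph in
theorem stmt14 {V : Type*} [Fintype V] (T : SimpleGraph V) (hT : T.IsTree)
    (x y z : V) (hxy : x ≠ y) (hxz : T.Adj x z) (hyz : T.Adj y z) :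
    (ww T x : ℤ) + ww T y - 2 * ww T z =
      2 * (((Finset.univ.filter
              (fun p => (T.deleteEdges {s(x,z), s(y,z)}).Reachable x p)).card : ℤ)
         + ((Finset.univ.filter
              (fun p => (T.deleteEdges {s(x,z), s(y,z)}).Reachable y p)).card : ℤ)
         + 2 * ((∑ p ∈ Finset.univ.filter
              (fun p => (T.deleteEdges {s(x,z), s(y,z)}).Reachable z p),
              (T.dist z p + 1) : ℕ) : ℤ)) := by
  classical
  set D := T.deleteEdges {s(x,z), s(y,z)} with hD
  set Dx := T.deleteEdges {s(x,z)} with hDx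
  set Dy := T.deleteEdges {s(y,z)} with hDy
  have hnexy : s(x,z) ≠ s(y,z) := by
    intro h
    rcases Sym2.eq_iff.mp h with ⟨h1, _⟩ | ⟨h1, _⟩
    · exact hxy h1
    · exact hxz.ne h1
  have hsubx : D ≤ Dx := SimpleGraph.deleteEdges_anti (by simp)
  have hsuby : D ≤ Dy := SimpleGraph.deleteEdges_anti (by simp)
  have hbrx : ¬ Dx.Reachable x z :=
    (isBridge_iff.mp ((isAcyclic_iff_forall_adj_isBridge.mp hT.IsAcyclic) hxz))
  have hbry : ¬ Dy.Reachable y z :=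
    (isBridge_iff.mp ((isAcyclic_iff_forall_adj_isBridge.mp hT.IsAcyclic) hyz))
  have haxzDy : Dy.Adj z x := by
    rw [hDy]; simp only [deleteEdges_adj, Set.mem_singleton_iff]
    exact ⟨hxz.symm, fun h => hnexy (by rwa [Sym2.eq_swap] at h)⟩
  have hayzDx : Dx.Adj z y := by
    rw [hDx]; simp only [deleteEdges_adj, Set.mem_singleton_iff]
    refine ⟨hyz.symm, fun h => hnexy ?_⟩
    rw [Sym2.eq_swap] at h; exact h.symm
  have factA : ∀ p, D.Reachable x p →
      T.dist p z = T.dist p x + 1 ∧ T.dist p y = T.dist p z + 1 := by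
    intro p hp
    refine ⟨tree_dist_across_edge hT hxz (hp.mono hsubx), ?_⟩
    exact tree_dist_across_edge' hT hyz.symm ((haxzDy.reachable).trans (hp.mono hsuby))
  have factB : ∀ p, D.Reachable y p →
      T.dist p z = T.dist p y + 1 ∧ T.dist p x = T.dist p z + 1 := by
    intro p hp
    refine ⟨tree_dist_across_edge hT hyz (hp.mono hsuby), ?_⟩
    exact tree_dist_across_edge' hT hxz.symm ((hayzDx.reachable).trans (hp.mono hsubx))
  have factC : ∀ p, D.Reachable z p →
      T.dist p x = T.dist p z + 1 ∧ T.dist p y = T.dist p z + 1 := by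
    intro p hp
    exact ⟨tree_dist_across_edge' hT hxz.symm (hp.mono hsubx),
           tree_dist_across_edge' hT hyz.symm (hp.mono hsuby)⟩
  have hAB : ∀ p, D.Reachable x p → D.Reachable y p → False := by
    intro p h1 h2
    exact hbrx ((((h1.trans h2.symm).mono hsubx)).trans hayzDx.symm.reachable)
  have hAC : ∀ p, D.Reachable x p → D.Reachable z p → False := by
    intro p h1 h2
    exact hbrx ((h1.trans h2.symm).mono hsubx)
  have hBC : ∀ p, D.Reachable y p → D.Reachable z p → False := by
    intro p h1 h2
    exact hbry ((h1.trans h2.symm).mono hsuby)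
  set A := Finset.univ.filter (fun p => D.Reachable x p) with hA
  set B := Finset.univ.filter (fun p => D.Reachable y p) with hB
  set C := Finset.univ.filter (fun p => D.Reachable z p) with hC
  have hdAB : Disjoint A B := by
    rw [Finset.disjoint_left]
    intro p hp hq
    simp only [hA, hB, Finset.mem_filter] at hp hq
    exact hAB p hp.2 hq.2
  have hdABC : Disjoint (A ∪ B) C := by
    rw [Finset.disjoint_left]
    intro p hp hq
    simp only [hA, hB, hC, Finset.mem_union, Finset.mem_filter] at hp hq
    rcases hp with hp | hp
    · exact hAC p hp.2 hq.2
    · exact hBC p hp.2 hq.2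
  have huniv : (Finset.univ : Finset V) = (A ∪ B) ∪ C := by
    ext p
    simp only [hA, hB, hC, Finset.mem_union, Finset.mem_filter, Finset.mem_univ, true_and,
      true_iff]
    rcases tree_cover hT x y z p with h | h | h
    · exact Or.inl (Or.inl h)
    · exact Or.inl (Or.inr h)
    · exact Or.inr h
  have hsplit : ∀ f : V → ℤ, ∑ p : V, f p = ∑ p ∈ A, f p + ∑ p ∈ B, f p + ∑ p ∈ C, f p := by
    intro f
    rw [huniv, Finset.sum_union hdABC, Finset.sum_union hdAB]
  have lhs_eq : (ww T x : ℤ) + ww T y - 2 * ww T z =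
      ∑ p : V, (((T.dist p x : ℤ)^2 + (T.dist p x : ℤ)) + ((T.dist p y : ℤ)^2 + (T.dist p y : ℤ))
        - 2 * ((T.dist p z : ℤ)^2 + (T.dist p z : ℤ))) := by
    simp only [ww, Nat.cast_sum]
    rw [Finset.mul_sum, ← Finset.sum_add_distrib, ← Finset.sum_sub_distrib]
    apply Finset.sum_congr rfl
    intro p _
    push_cast
    ring
  have sA : ∑ p ∈ A, (((T.dist p x : ℤ)^2 + (T.dist p x : ℤ)) + ((T.dist p y : ℤ)^2 + (T.dist p y : ℤ))
        - 2 * ((T.dist p z : ℤ)^2 + (T.dist p z : ℤ))) = 2 * (A.card : ℤ) := by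
    have h2 : ∀ p ∈ A, (((T.dist p x : ℤ)^2 + (T.dist p x : ℤ)) + ((T.dist p y : ℤ)^2 + (T.dist p y : ℤ))
        - 2 * ((T.dist p z : ℤ)^2 + (T.dist p z : ℤ))) = (2 : ℤ) := by
      intro p hp
      simp only [hA, Finset.mem_filter] at hp
      obtain ⟨e1, e2⟩ := factA p hp.2
      rw [e2, e1]
      push_cast
      ring
    rw [Finset.sum_congr rfl h2, Finset.sum_const, nsmul_eq_mul, mul_comm]
  have sB : ∑ p ∈ B, (((T.dist p x : ℤ)^2 + (T.dist p x : ℤ)) + ((T.dist p y : ℤ)^2 + (T.dist p y : ℤ))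
        - 2 * ((T.dist p z : ℤ)^2 + (T.dist p z : ℤ))) = 2 * (B.card : ℤ) := by
    have h2 : ∀ p ∈ B, (((T.dist p x : ℤ)^2 + (T.dist p x : ℤ)) + ((T.dist p y : ℤ)^2 + (T.dist p y : ℤ))
        - 2 * ((T.dist p z : ℤ)^2 + (T.dist p z : ℤ))) = (2 : ℤ) := by
      intro p hp
      simp only [hB, Finset.mem_filter] at hp
      obtain ⟨e1, e2⟩ := factB p hp.2
      rw [e2, e1]
      push_cast
      ring
    rw [Finset.sum_congr rfl h2, Finset.sum_const, nsmul_eq_mul, mul_comm]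
  have sC : ∑ p ∈ C, (((T.dist p x : ℤ)^2 + (T.dist p x : ℤ)) + ((T.dist p y : ℤ)^2 + (T.dist p y : ℤ))
        - 2 * ((T.dist p z : ℤ)^2 + (T.dist p z : ℤ)))
      = 4 * ∑ p ∈ C, ((T.dist z p : ℤ) + 1) := by
    rw [Finset.mul_sum]
    apply Finset.sum_congr rfl
    intro p hp
    simp only [hC, Finset.mem_filter] at hp
    obtain ⟨e1, e2⟩ := factC p hp.2
    rw [e1, e2, SimpleGraph.dist_comm (u := z)]
    push_cast
    ring
  rw [lhs_eq, hsplit, sA, sB, sC]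
  push_cast
  ring
end
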